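/- arXiv:math/0406370 — 5 statements merged into one kernel-verified Lean document; each statement's English description precedes it below -/
import Mathlib

section
/- Let 𝒮 be a fine, measurable, λ-Morse cover of an open set Ω ⊆ X. If 𝒮 consists of closed sets, or if for each S ∈ 𝒮 one has μ(Ω ∩ (cl(S) \ S)) = 0 (where cl(S) is the closure of S), then 𝒮 is a μ-a.e. λ-Morse cover of Ω. -/
open MeasureTheory Set Metric Filter

/-- `S` is a `λ`-Morse set with tag `a`: for some `r > 0`, `B(a,r) ⊆ S ⊆ B(a,λr)`
(closed balls) and `S` is starlike with respect to `B(a,r)`. -/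
def IsMorseSet {X : Type*} [NormedAddCommGroup X] [NormedSpace ℝ X]
    (lam : ℝ) (a : X) (S : Set X) : Prop :=
  ∃ r > (0:ℝ), Metric.closedBall a r ⊆ S ∧ S ⊆ Metric.closedBall a (lam * r) ∧
    ∀ y ∈ Metric.closedBall a r, ∀ x ∈ S, segment ℝ y x ⊆ S

/-- `𝒮` (a collection of tagged sets) is a fine, measurable, `λ`-Morse cover of `Ω`:
every member is a measurable λ-Morse subset of `Ω` with the indicated tag, and every point
of `Ω` is the tag of sets of `𝒮` of arbitrarily small diameter. -/
def IsFineMorseCover {X : Type*} [NormedAddCommGroup X] [NormedSpace ℝ X] [MeasurableSpace X]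
    (lam : ℝ) (Ω : Set X) (𝒮 : Set (X × Set X)) : Prop :=
  (∀ p ∈ 𝒮, IsMorseSet lam p.1 p.2 ∧ MeasurableSet p.2 ∧ p.2 ⊆ Ω) ∧
  ∀ a ∈ Ω, ∀ ε > (0:ℝ), ∃ S : Set X, (a, S) ∈ 𝒮 ∧ Metric.diam S < ε

/-- The (finite or countably infinite) sequence of tagged sets `T` indexed by `I ⊆ ℕ`
is `μ`-exhausting of `Ω` within the collection `𝒮`: its members belong to `𝒮`,
are pairwise disjoint, and cover all but a `μ`-null subset of `Ω`. -/
def IsExhausting {X : Type*} [MeasurableSpace X] (μ : Measure X) (Ω : Set X)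
    (𝒮 : Set (X × Set X)) (I : Set ℕ) (T : ℕ → X × Set X) : Prop :=
  (∀ i ∈ I, T i ∈ 𝒮) ∧
  (∀ i ∈ I, ∀ j ∈ I, i ≠ j → Disjoint (T i).2 (T j).2) ∧
  μ (Ω \ ⋃ i ∈ I, (T i).2) = 0

/-- `𝒮` is a `μ`-a.e. `λ`-Morse cover of `Ω`: it is a fine measurable λ-Morse cover and,
for every nonempty open `U ⊆ Ω` and every gauge `δ : U → (0,1]`, there is a sequence of
`δ`-fine sets from `𝒮`, each contained in `U`, that is `μ`-exhausting of `U`. -/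
def IsAEMorseCover {X : Type*} [NormedAddCommGroup X] [NormedSpace ℝ X] [MeasurableSpace X]
    (μ : Measure X) (lam : ℝ) (Ω : Set X) (𝒮 : Set (X × Set X)) : Prop :=
  IsFineMorseCover lam Ω 𝒮 ∧
  ∀ U : Set X, IsOpen U → U.Nonempty → U ⊆ Ω →
    ∀ δ : X → ℝ, (∀ x ∈ U, δ x ∈ Set.Ioc (0:ℝ) 1) →
      ∃ I T, IsExhausting μ U 𝒮 I T ∧
        ∀ i ∈ I, (T i).2 ⊆ U ∧ (T i).2 ⊆ Metric.closedBall (T i).1 (δ (T i).1)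

/-- `f` is `μ`-measurable: there is a sequence of simple functions converging to `f`
`μ`-almost everywhere. -/
def MuMeasurable {X Y : Type*} [MeasurableSpace X] [NormedAddCommGroup Y]
    (μ : Measure X) (f : X → Y) : Prop :=
  ∃ F : ℕ → MeasureTheory.SimpleFunc X Y,
    ∀ᵐ x ∂μ, Filter.Tendsto (fun n => F n x) Filter.atTop (nhds (f x))

/-- `a` is a point of approximate continuity of `f` (relative to the tagged collection
`𝒮`): for all `ε, η > 0` there is `R > 0` such that every `S ∈ 𝒮` with tag `a` contained
in `B(a,R)` satisfies `μ {x ∈ S | ‖f a - f x‖ > η} ≤ ε · μ S`. -/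
def IsApproxContPt {X Y : Type*} [NormedAddCommGroup X] [MeasurableSpace X]
    [NormedAddCommGroup Y] (μ : Measure X) (𝒮 : Set (X × Set X)) (f : X → Y) (a : X) : Prop :=
  ∀ ε > (0:ℝ), ∀ η > (0:ℝ), ∃ R > (0:ℝ), ∀ S : Set X, (a, S) ∈ 𝒮 →
    S ⊆ Metric.closedBall a R →
    μ {x ∈ S | η < ‖f a - f x‖} ≤ ENNReal.ofReal ε * μ S

/-- `a` is a Lebesgue point of `g` with respect to the value `c` (relative to the tagged
collection `𝒮`): for every `ε > 0` there is `R > 0` such that every `S ∈ 𝒮` with tag `a`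
contained in `B(a,R)` satisfies `∫_S ‖g x - c‖ dμ ≤ ε · μ S`. -/
def IsLebesguePt {X Y : Type*} [NormedAddCommGroup X] [MeasurableSpace X]
    [NormedAddCommGroup Y] (μ : Measure X) (𝒮 : Set (X × Set X)) (g : X → Y) (a : X)
    (c : Y) : Prop :=
  ∀ ε > (0:ℝ), ∃ R > (0:ℝ), ∀ S : Set X, (a, S) ∈ 𝒮 → S ⊆ Metric.closedBall a R →
    ∫⁻ x in S, ‖g x - c‖₊ ∂μ ≤ ENNReal.ofReal ε * μ S



set_option maxHeartbeats 1000000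

section MorseAux

/-- Mirsky-type decomposition bound: if every increasing chain (w.r.t. index and value)
has size ≤ A and every "antichain" has size ≤ B, then the whole set has size ≤ A * B. -/
lemma morse_mirsky (P : Finset ℕ) (D : ℕ → ℝ) (A B : ℕ)
    (hchain : ∀ C : Finset ℕ, C ⊆ P → (∀ i ∈ C, ∀ j ∈ C, i < j → D i < D j) → C.card ≤ A)
    (hanti : ∀ C : Finset ℕ, C ⊆ P → (∀ i ∈ C, ∀ j ∈ C, i < j → D j ≤ D i) → C.card ≤ B) :
    P.card ≤ A * B := by
  classical
  set Chains : ℕ → Finset (Finset ℕ) := fun i =>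
    P.powerset.filter (fun C => i ∈ C ∧ (∀ j ∈ C, j ≤ i) ∧
      ∀ p ∈ C, ∀ q ∈ C, p < q → D p < D q) with hChains
  set h : ℕ → ℕ := fun i => (Chains i).sup Finset.card with hh
  have hmemsingle : ∀ i ∈ P, {i} ∈ Chains i := by
    intro i hi
    simp only [hChains, Finset.mem_filter, Finset.mem_powerset]
    refine ⟨Finset.singleton_subset_iff.mpr hi, Finset.mem_singleton_self i, ?_, ?_⟩
    · intro j hj; rw [Finset.mem_singleton] at hj; omega
    · intro p hp q hq hpq
      rw [Finset.mem_singleton] at hp hq; omega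
  have h1 : ∀ i ∈ P, 1 ≤ h i := by
    intro i hi
    have := Finset.le_sup (f := Finset.card) (hmemsingle i hi)
    exact le_trans (le_of_eq (by simp)) this
  have hA : ∀ i, h i ≤ A := by
    intro i
    apply Finset.sup_le
    intro C hC
    simp only [hChains, Finset.mem_filter, Finset.mem_powerset] at hC
    exact hchain C hC.1 hC.2.2.2
  have hstep : ∀ i ∈ P, ∀ j ∈ P, i < j → D i < D j → h i + 1 ≤ h j := by
    intro i hi j hj hij hDij
    have hne : (Chains i).Nonempty := ⟨{i}, hmemsingle i hi⟩
    obtain ⟨C, hC, hCcard⟩ := Finset.exists_mem_eq_sup (Chains i) hne Finset.card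
    simp only [hChains, Finset.mem_filter, Finset.mem_powerset] at hC
    obtain ⟨hCP, hiC, hCle, hCchain⟩ := hC
    have hjC : j ∉ C := fun hjc => absurd (hCle j hjc) (by omega)
    have hC' : insert j C ∈ Chains j := by
      simp only [hChains, Finset.mem_filter, Finset.mem_powerset]
      refine ⟨Finset.insert_subset hj hCP, Finset.mem_insert_self j C, ?_, ?_⟩
      · intro k hk
        rcases Finset.mem_insert.mp hk with rfl | hk
        · exact le_refl _
        · exact le_trans (hCle k hk) (le_of_lt hij)
      · intro p hp q hq hpq
        rcases Finset.mem_insert.mp hp with hp' | hp'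
        · exfalso
          rcases Finset.mem_insert.mp hq with hq' | hq'
          · omega
          · have := hCle q hq'; omega
        · rcases Finset.mem_insert.mp hq with hq' | hq'
          · rw [hq']
            rcases lt_or_eq_of_le (hCle p hp') with hpi | hpi
            · exact lt_trans (hCchain p hp' i hiC hpi) hDij
            · rw [hpi]; exact hDij
          · exact hCchain p hp' q hq' hpq
    have : (insert j C).card ≤ h j := Finset.le_sup (f := Finset.card) hC'
    rw [Finset.card_insert_of_notMem hjC] at this
    have h2 : h i = C.card := hCcard
    omega
  -- pigeonhole over fibers of h
  have hmap : ∀ i ∈ P, h i ∈ Finset.Icc 1 A := by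
    intro i hi
    rw [Finset.mem_Icc]
    exact ⟨h1 i hi, hA i⟩
  rw [Finset.card_eq_sum_card_fiberwise hmap]
  have hfib : ∀ v ∈ Finset.Icc 1 A, (P.filter (fun i => h i = v)).card ≤ B := by
    intro v _
    apply hanti
    · exact Finset.filter_subset _ _
    · intro i hi j hj hij
      rw [Finset.mem_filter] at hi hj
      by_contra hcon
      push_neg at hcon
      have := hstep i hi.1 j hj.1 hij hcon
      omega
  calc ∑ v ∈ Finset.Icc 1 A, (P.filter (fun i => h i = v)).card
      ≤ ∑ v ∈ Finset.Icc 1 A, B := Finset.sum_le_sum hfib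
    _ = A * B := by simp [Nat.card_Icc]



/-- Auxiliary greedy coloring lists for a relation on `ℕ`. -/
noncomputable def morseColors (rel : ℕ → ℕ → Prop) : ℕ → List ℕ
  | 0 => []
  | n + 1 => morseColors rel n ++
      [sInf {c | ∀ j, j < n → rel j n → (morseColors rel n).getD j 0 ≠ c}]

/-- The greedy color of index `i`. -/
noncomputable def morseCol (rel : ℕ → ℕ → Prop) (i : ℕ) : ℕ :=
  (morseColors rel (i + 1)).getD i 0

lemma morseColors_length (rel : ℕ → ℕ → Prop) (n : ℕ) : (morseColors rel n).length = n := by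
  induction n with
  | zero => rfl
  | succ n ih => rw [morseColors]; simp [ih]

lemma morseColors_getD (rel : ℕ → ℕ → Prop) {i n : ℕ} (h : i < n) :
    (morseColors rel n).getD i 0 = morseCol rel i := by
  induction n with
  | zero => omega
  | succ n ih =>
    rcases Nat.lt_or_ge i n with h' | h'
    · rw [morseColors, List.getD_append _ _ _ _ (by rw [morseColors_length]; exact h')]
      exact ih h'
    · have : i = n := by omega
      subst this
      rfl

lemma morseCol_eq (rel : ℕ → ℕ → Prop) (i : ℕ) :
    morseCol rel i = sInf {c | ∀ j, j < i → rel j i → morseCol rel j ≠ c} := by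
  have h1 : morseCol rel i = (morseColors rel i ++
      [sInf {c | ∀ j, j < i → rel j i → (morseColors rel i).getD j 0 ≠ c}]).getD i 0 := rfl
  rw [h1, List.getD_append_right _ _ _ _ (by rw [morseColors_length])]
  rw [morseColors_length]
  simp only [Nat.sub_self, List.getD_cons_zero]
  congr 1
  ext c
  constructor
  · intro hc j hj hrel
    rw [← morseColors_getD rel hj]
    exact hc j hj hrel
  · intro hc j hj hrel
    rw [morseColors_getD rel hj]
    exact hc j hj hrel

lemma morseCol_ne (rel : ℕ → ℕ → Prop) (i j : ℕ) (hj : j < i) (hrel : rel j i) :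
    morseCol rel j ≠ morseCol rel i := by
  intro hcon
  have hne : {c | ∀ j, j < i → rel j i → morseCol rel j ≠ c}.Nonempty := by
    refine ⟨(Finset.range i).sup (morseCol rel) + 1, fun k hk _ => ?_⟩
    have : morseCol rel k ≤ (Finset.range i).sup (morseCol rel) :=
      Finset.le_sup (Finset.mem_range.mpr hk)
    omega
  have := Nat.sInf_mem hne
  rw [← morseCol_eq] at this
  exact this j hj hrel hcon

open Classical in
lemma morseCol_le (rel : ℕ → ℕ → Prop) (i β : ℕ)
    (hcard : ((Finset.range i).filter (fun j => rel j i)).card ≤ β) :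
    morseCol rel i ≤ β := by
  classical
  set U := ((Finset.range i).filter (fun j => rel j i)).image (morseCol rel) with hU
  have hUcard : U.card ≤ β := le_trans (Finset.card_image_le) hcard
  have : ∃ c ∈ Finset.range (β + 1), c ∉ U := by
    by_contra hcon
    push_neg at hcon
    have hsub : Finset.range (β + 1) ⊆ U := fun c hc => hcon c hc
    have := Finset.card_le_card hsub
    rw [Finset.card_range] at this
    omega
  obtain ⟨c, hc, hcU⟩ := this
  have hcset : c ∈ {c | ∀ j, j < i → rel j i → morseCol rel j ≠ c} := by
    intro j hj hrel hcol
    exact hcU (Finset.mem_image.mpr ⟨j, Finset.mem_filter.mpr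
      ⟨Finset.mem_range.mpr hj, hrel⟩, hcol⟩)
  have hcβ : c ≤ β := by have := Finset.mem_range.mp hc; omega
  rw [morseCol_eq]
  exact le_trans (Nat.sInf_le hcset) hcβ


section
variable {X : Type*} [NormedAddCommGroup X] [NormedSpace ℝ X]

/-- Cone lemma: if `S` is starlike w.r.t. `closedBall a r` and `x ∈ S`, then
any point `b + t • (a - b) + w` with `‖w‖ ≤ t * r - ‖b - x‖` lies in `S`. -/
lemma morse_cone {r : ℝ} {a : X} {S : Set X}
    (hball : closedBall a r ⊆ S)
    (hstar : ∀ y ∈ closedBall a r, ∀ x ∈ S, segment ℝ y x ⊆ S)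
    {x b : X} (hx : x ∈ S) {t : ℝ} (ht0 : 0 < t) (ht1 : t ≤ 1)
    {w : X} (hw : ‖w‖ ≤ t * r - ‖b - x‖) : b + t • (a - b) + w ∈ S := by
  set u : X := x + t⁻¹ • (b + t • (a - b) + w - x) with hu
  have hua : u - a = t⁻¹ • ((1 - t) • (b - x) + w) := by
    have ht : t ≠ 0 := ne_of_gt ht0
    rw [hu]; match_scalars <;> (field_simp; try ring)
  have hnorm : ‖u - a‖ ≤ r := by
    rw [hua, norm_smul, norm_inv, Real.norm_eq_abs, abs_of_pos ht0]
    have h1 : ‖(1 - t) • (b - x) + w‖ ≤ (1 - t) * ‖b - x‖ + ‖w‖ := by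
      calc ‖(1 - t) • (b - x) + w‖ ≤ ‖(1 - t) • (b - x)‖ + ‖w‖ := norm_add_le _ _
        _ = |1 - t| * ‖b - x‖ + ‖w‖ := by rw [norm_smul, Real.norm_eq_abs]
        _ = (1 - t) * ‖b - x‖ + ‖w‖ := by rw [abs_of_nonneg (by linarith)]
    have h2 : (1 - t) * ‖b - x‖ + ‖w‖ ≤ t * r := by nlinarith [norm_nonneg (b - x)]
    calc t⁻¹ * ‖(1 - t) • (b - x) + w‖ ≤ t⁻¹ * (t * r) := by
          apply mul_le_mul_of_nonneg_left (le_trans h1 h2) (by positivity)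
      _ = r := by field_simp
  have huS : u ∈ closedBall a r := by
    rw [mem_closedBall, dist_eq_norm]; exact hnorm
  have : b + t • (a - b) + w = t • u + (1 - t) • x := by
    have ht : t ≠ 0 := ne_of_gt ht0
    rw [hu]; match_scalars <;> (field_simp; try ring)
  rw [this]
  exact hstar u huS x hx ⟨t, 1 - t, le_of_lt ht0, by linarith, by ring, rfl⟩

end

section
variable {X : Type*} [NormedAddCommGroup X] [NormedSpace ℝ X] [FiniteDimensional ℝ X]

/-- Packing lemma: there is a uniform bound on the cardinality of `c`-separated
finite subsets of a ball of radius `R * c`. -/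
lemma morse_packing (R : ℝ) : ∃ N : ℕ, ∀ (s : Finset X) (z : X) (c : ℝ), 0 < c →
    (∀ x ∈ s, x ∈ closedBall z (R * c)) →
    (∀ x ∈ s, ∀ y ∈ s, x ≠ y → c < dist x y) → s.card ≤ N := by
  have hcp : IsCompact (closedBall (0:X) R) := isCompact_closedBall 0 R
  have htb := hcp.totallyBounded
  rw [Metric.totallyBounded_iff] at htb
  obtain ⟨t, htfin, htcov⟩ := htb (1/2) (by norm_num)
  refine ⟨htfin.toFinset.card, fun s z c hc hball hsep => ?_⟩
  classical
  set φ : X → X := fun x => c⁻¹ • (x - z) with hφ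
  have hφdist : ∀ x y : X, dist (φ x) (φ y) = c⁻¹ * dist x y := by
    intro x y
    simp only [hφ, dist_smul₀, Real.norm_eq_abs, abs_of_pos (inv_pos.mpr hc)]
    rw [dist_sub_right]
  -- map each point of `s.image φ` to a covering center
  have hmem : ∀ x ∈ s, φ x ∈ closedBall (0:X) R := by
    intro x hx
    have := hball x hx
    rw [mem_closedBall] at this ⊢
    rw [dist_eq_norm, sub_zero, hφ]
    simp only [norm_smul, norm_inv, Real.norm_eq_abs, abs_of_pos hc]
    rw [← dist_eq_norm]
    calc c⁻¹ * dist x z ≤ c⁻¹ * (R * c) := by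
          apply mul_le_mul_of_nonneg_left this (by positivity)
      _ = R := by field_simp
  have hpick : ∀ x ∈ s, ∃ y ∈ t, φ x ∈ ball y (1/2) := by
    intro x hx
    have := htcov (hmem x hx)
    simpa using this
  choose f hf1 hf2 using hpick
  have hcard : s.card ≤ htfin.toFinset.card := by
    apply Finset.card_le_card_of_injOn (fun x => if h : x ∈ s then f x h else z)
    · intro x hx
      simp only [Finset.mem_coe] at hx ⊢
      simp only [dif_pos hx, Set.Finite.mem_toFinset]
      exact hf1 x hx
    · intro x hx y hy hxy
      simp only [Finset.mem_coe] at hx hy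
      simp only [dif_pos hx, dif_pos hy] at hxy
      by_contra hne
      have h1 : dist (φ x) (φ y) < 1 := by
        have ha := hf2 x hx
        have hb := hf2 y hy
        rw [hxy] at ha
        calc dist (φ x) (φ y) ≤ dist (φ x) (f y hy) + dist (φ y) (f y hy) :=
              dist_triangle_right _ _ _
          _ < 1/2 + 1/2 := add_lt_add (mem_ball.mp ha) (mem_ball.mp hb)
          _ = 1 := by norm_num
      have h2 : (1:ℝ) < dist (φ x) (φ y) := by
        rw [hφdist]
        have := hsep x hx y hy hne
        rw [← one_lt_div hc] at this
        calc (1:ℝ) < dist x y / c := this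
          _ = c⁻¹ * dist x y := by ring
      linarith
  exact hcard


/-- The backward-degree bound: a quasi-decreasing sequence of λ-Morse sets, all of
size comparable to `ρ`, all meeting a ball of radius `λ ρ` around `b`, with `b` and
all later tags outside all earlier sets, has uniformly bounded cardinality. -/
lemma morse_backward (lam : ℝ) (hlam : 1 ≤ lam) :
    ∃ β : ℕ, ∀ (b : X) (ρ : ℝ), 0 < ρ →
    ∀ (P : Finset ℕ) (a : ℕ → X) (r : ℕ → ℝ) (S : ℕ → Set X),
    (∀ i ∈ P, 0 < r i ∧ closedBall (a i) (r i) ⊆ S i ∧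
        S i ⊆ closedBall (a i) (lam * r i) ∧
        (∀ y ∈ closedBall (a i) (r i), ∀ x ∈ S i, segment ℝ y x ⊆ S i)) →
    (∀ i ∈ P, ρ ≤ 2 * r i) →
    (∀ i ∈ P, b ∉ S i) →
    (∀ i ∈ P, ∀ j ∈ P, i < j → a j ∉ S i ∧ r j ≤ 2 * r i) →
    (∀ i ∈ P, ∃ x ∈ S i, ‖x - b‖ ≤ lam * ρ) →
    P.card ≤ β := by
  classical
  obtain ⟨N₁, hN₁⟩ := morse_packing (X := X) (24 * lam ^ 2)
  obtain ⟨N₂, hN₂⟩ := morse_packing (X := X) (18 * lam ^ 2)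
  obtain ⟨N₃, hN₃⟩ := morse_packing (X := X) (4 * lam)
  refine ⟨N₁ + N₂ * N₃, fun b ρ hρ P a r S hM hρr hb hpair hx => ?_⟩
  have hlam0 : (0:ℝ) < lam := by linarith
  set D : ℕ → ℝ := fun i => ‖a i - b‖ with hD
  -- basic facts
  have haS : ∀ i ∈ P, a i ∈ S i := fun i hi =>
    (hM i hi).2.1 (mem_closedBall_self (le_of_lt (hM i hi).1))
  have hf1 : ∀ i ∈ P, r i < D i := by
    intro i hi
    by_contra hcon
    push_neg at hcon
    exact hb i hi ((hM i hi).2.1 (by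
      rw [mem_closedBall, dist_comm, dist_eq_norm]; exact hcon))
  have hf2 : ∀ i ∈ P, D i ≤ 3 * lam * r i := by
    intro i hi
    obtain ⟨x, hxS, hxb⟩ := hx i hi
    have h1 : ‖a i - x‖ ≤ lam * r i := by
      have := (hM i hi).2.2.1 hxS
      rw [mem_closedBall, dist_comm, dist_eq_norm] at this
      exact this
    have h2 : ρ ≤ 2 * r i := hρr i hi
    calc D i = ‖(a i - x) + (x - b)‖ := by
          show ‖a i - b‖ = _
          congr 1
          abel
      _ ≤ ‖a i - x‖ + ‖x - b‖ := norm_add_le _ _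
      _ ≤ lam * r i + lam * ρ := add_le_add h1 hxb
      _ ≤ lam * r i + lam * (2 * r i) := by nlinarith
      _ = 3 * lam * r i := by ring
  -- tag separation
  have hsep : ∀ i ∈ P, ∀ j ∈ P, i ≠ j → min (r i) (r j) < dist (a i) (a j) := by
    intro i hi j hj hij
    rcases lt_or_gt_of_ne hij with h | h
    · have := (hpair i hi j hj h).1
      have hd : r i < dist (a j) (a i) := by
        by_contra hcon
        push_neg at hcon
        exact this ((hM i hi).2.1 (mem_closedBall.mpr hcon))
      rw [dist_comm] at hd
      exact lt_of_le_of_lt (min_le_left _ _) hd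
    · have := (hpair j hj i hi h).1
      have hd : r j < dist (a i) (a j) := by
        by_contra hcon
        push_neg at hcon
        exact this ((hM j hj).2.1 (mem_closedBall.mpr hcon))
      exact lt_of_le_of_lt (min_le_right _ _) hd
  have hainj : ∀ Q : Finset ℕ, Q ⊆ P → Set.InjOn a Q := by
    intro Q hQ x hxQ y hyQ hxy
    by_contra hne
    have := hsep x (hQ hxQ) y (hQ hyQ) hne
    rw [hxy, dist_self] at this
    have h1 := (hM x (hQ hxQ)).1
    have h2 := (hM y (hQ hyQ)).1
    rcases min_cases (r x) (r y) with ⟨h, _⟩ | ⟨h, _⟩ <;> rw [h] at this <;> linarith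
  set PA := P.filter (fun i => D i ≤ 12 * lam ^ 2 * ρ) with hPA
  set PB := P.filter (fun i => ¬ (D i ≤ 12 * lam ^ 2 * ρ)) with hPB
  have hsplit : PA.card + PB.card = P.card := Finset.card_filter_add_card_filter_not _
  -- bound on PA
  have hA : PA.card ≤ N₁ := by
    have himg : (PA.image a).card = PA.card :=
      Finset.card_image_of_injOn (hainj PA (Finset.filter_subset _ _))
    rw [← himg]
    apply hN₁ (PA.image a) b (ρ/2) (by linarith)
    · intro x hx'
      obtain ⟨i, hi, rfl⟩ := Finset.mem_image.mp hx'
      rw [hPA, Finset.mem_filter] at hi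
      rw [mem_closedBall, dist_eq_norm]
      calc ‖a i - b‖ = D i := rfl
        _ ≤ 12 * lam ^ 2 * ρ := hi.2
        _ = 24 * lam ^ 2 * (ρ / 2) := by ring
    · intro x hx' y hy' hxy
      obtain ⟨i, hi, rfl⟩ := Finset.mem_image.mp hx'
      obtain ⟨j, hj, rfl⟩ := Finset.mem_image.mp hy'
      have hij : i ≠ j := fun h => hxy (by rw [h])
      have hiP := Finset.filter_subset _ P hi
      have hjP := Finset.filter_subset _ P hj
      have := hsep i hiP j hjP hij
      have h2i := hρr i hiP
      have h2j := hρr j hjP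
      rcases min_cases (r i) (r j) with ⟨h, _⟩ | ⟨h, _⟩ <;> rw [h] at this <;> linarith
  -- bound on PB via Mirsky
  have hB : PB.card ≤ N₂ * N₃ := by
    apply morse_mirsky PB D N₂ N₃
    · -- chains
      intro C hC hchain
      rcases C.eq_empty_or_nonempty with rfl | hCne
      · simp
      set i₀ := C.min' hCne with hi₀
      have hi₀C : i₀ ∈ C := C.min'_mem hCne
      have hi₀P : i₀ ∈ P := Finset.filter_subset _ P (hC hi₀C)
      have hri₀ : 0 < r i₀ := (hM i₀ hi₀P).1
      have hDmono : ∀ j ∈ C, D i₀ ≤ D j := by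
        intro j hjC
        have hle : i₀ ≤ j := C.min'_le j hjC
        rcases eq_or_lt_of_le hle with h | h
        · rw [h]
        · exact le_of_lt (hchain i₀ hi₀C j hjC h)
      have himg : (C.image a).card = C.card := Finset.card_image_of_injOn
        (hainj C (fun x hx' => Finset.filter_subset _ P (hC hx')))
      rw [← himg]
      apply hN₂ (C.image a) b (r i₀ / (3 * lam)) (by positivity)
      · intro x hx'
        obtain ⟨j, hjC, rfl⟩ := Finset.mem_image.mp hx'
        have hjP : j ∈ P := Finset.filter_subset _ P (hC hjC)
        have hrj : r j ≤ 2 * r i₀ := by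
          have hle : i₀ ≤ j := C.min'_le j hjC
          rcases eq_or_lt_of_le hle with h | h
          · rw [← h]; linarith
          · exact (hpair i₀ hi₀P j hjP h).2
        rw [mem_closedBall, dist_eq_norm]
        calc ‖a j - b‖ = D j := rfl
          _ ≤ 3 * lam * r j := hf2 j hjP
          _ ≤ 6 * lam * r i₀ := by nlinarith
          _ = 18 * lam ^ 2 * (r i₀ / (3 * lam)) := by field_simp; ring
      · intro x hx' y hy' hxy
        obtain ⟨i, hiC, rfl⟩ := Finset.mem_image.mp hx'
        obtain ⟨j, hjC, rfl⟩ := Finset.mem_image.mp hy'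
        have hij : i ≠ j := fun h => hxy (by rw [h])
        have hiP := Finset.filter_subset _ P (hC hiC)
        have hjP := Finset.filter_subset _ P (hC hjC)
        have hsep' := hsep i hiP j hjP hij
        -- r i and r j are both > r i₀ / (3 lam)
        have hlow : ∀ k ∈ C, r i₀ / (3 * lam) < r k := by
          intro k hkC
          have hkP : k ∈ P := Finset.filter_subset _ P (hC hkC)
          have h1 : D i₀ ≤ D k := hDmono k hkC
          have h2 : D k ≤ 3 * lam * r k := hf2 k hkP
          have h3 : r i₀ < D i₀ := hf1 i₀ hi₀P
          rw [div_lt_iff₀ (by positivity)]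
          nlinarith
        have hli := hlow i hiC
        have hlj := hlow j hjC
        rcases min_cases (r i) (r j) with ⟨h, _⟩ | ⟨h, _⟩ <;> rw [h] at hsep' <;> linarith
    · -- antichains
      intro C hC hanti
      set v : ℕ → X := fun i => (D i)⁻¹ • (a i - b) with hv
      have hDpos : ∀ i ∈ C, 12 * lam ^ 2 * ρ < D i := by
        intro i hiC
        have := hC hiC
        rw [hPB, Finset.mem_filter] at this
        exact lt_of_not_ge this.2
      have hvnorm : ∀ i ∈ C, ‖v i‖ = 1 := by
        intro i hiC
        have h0 : 0 < D i := lt_trans (by positivity) (hDpos i hiC)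
        rw [hv]
        simp only [norm_smul, norm_inv, Real.norm_eq_abs, abs_of_pos h0]
        rw [show ‖a i - b‖ = D i from rfl]
        field_simp
      -- key separation of directions
      have hkey : ∀ i ∈ C, ∀ j ∈ C, i < j → 1 / (4 * lam) < dist (v i) (v j) := by
        intro i hiC j hjC hij
        have hiP : i ∈ P := Finset.filter_subset _ P (hC hiC)
        have hjP : j ∈ P := Finset.filter_subset _ P (hC hjC)
        have hDji : D j ≤ D i := hanti i hiC j hjC hij
        have hDj : 12 * lam ^ 2 * ρ < D j := hDpos j hjC
        have hDi : 0 < D i := by nlinarith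
        have hDj0 : 0 < D j := by nlinarith
        by_contra hcon
        push_neg at hcon
        -- then a j lies in S i, contradiction
        obtain ⟨x, hxS, hxb⟩ := hx i hiP
        set t : ℝ := D j / D i with ht
        have ht0 : 0 < t := by positivity
        have ht1 : t ≤ 1 := by rw [ht, div_le_one hDi]; exact hDji
        set w : X := (a j - b) - t • (a i - b) with hw
        have hwnorm : ‖w‖ = D j * dist (v j) (v i) := by
          have hvi : D i • v i = a i - b := by
            rw [hv]; rw [smul_smul]; rw [mul_inv_cancel₀ (ne_of_gt hDi), one_smul]
          have hvj : D j • v j = a j - b := by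
            rw [hv]; rw [smul_smul]; rw [mul_inv_cancel₀ (ne_of_gt hDj0), one_smul]
          have hDi' : D i ≠ 0 := ne_of_gt hDi
          have hDj' : D j ≠ 0 := ne_of_gt hDj0
          have : w = D j • (v j - v i) := by
            rw [hw]
            simp only [hv]
            rw [ht]
            match_scalars <;> field_simp <;> ring
          rw [this, norm_smul, Real.norm_eq_abs, abs_of_pos hDj0, dist_eq_norm]
        have hwle : ‖w‖ ≤ t * r i - ‖b - x‖ := by
          have h1 : ‖b - x‖ ≤ lam * ρ := by rw [norm_sub_rev]; exact hxb
          have h2 : D i ≤ 3 * lam * r i := hf2 i hiP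
          have h3 : dist (v j) (v i) ≤ 1 / (4 * lam) := by rw [dist_comm]; exact hcon
          have h4 : ‖w‖ ≤ D j / (4 * lam) := by
            rw [hwnorm]
            calc D j * dist (v j) (v i) ≤ D j * (1 / (4 * lam)) := by
                  apply mul_le_mul_of_nonneg_left h3 (le_of_lt hDj0)
              _ = D j / (4 * lam) := by ring
          have h5 : D j / (3 * lam) ≤ t * r i := by
            rw [ht]
            rw [div_le_iff₀ (by positivity)]
            have hri : 0 < r i := (hM i hiP).1
            have : D i * (D j / D i * r i) = D j * r i := by field_simp
            nlinarith [mul_pos hDj0 hri]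
          have h6 : lam * ρ ≤ D j / (12 * lam) := by
            rw [le_div_iff₀ (by positivity)]
            nlinarith
          have h7 : D j / (4 * lam) ≤ D j / (3 * lam) - D j / (12 * lam) := by
            have he : D j / (3 * lam) - D j / (12 * lam) = D j / (4 * lam) := by
              field_simp
              ring
            rw [he]
          linarith
        have hmem : a j ∈ S i := by
          have := morse_cone (hM i hiP).2.1 (hM i hiP).2.2.2 hxS ht0 ht1 hwle
          have heq : b + t • (a i - b) + w = a j := by rw [hw]; abel
          rwa [heq] at this
        exact (hpair i hiP j hjP hij).1 hmem
      have himg : (C.image v).card = C.card := by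
        apply Finset.card_image_of_injOn
        intro x hxC y hyC hxy
        by_contra hne
        rcases lt_or_gt_of_ne hne with h | h
        · have := hkey x hxC y hyC h
          rw [hxy, dist_self] at this
          have : (0:ℝ) < 1 / (4*lam) := by positivity
          linarith
        · have := hkey y hyC x hxC h
          rw [hxy, dist_self] at this
          have : (0:ℝ) < 1 / (4*lam) := by positivity
          linarith
      rw [← himg]
      apply hN₃ (C.image v) 0 (1 / (4 * lam)) (by positivity)
      · intro x hx'
        obtain ⟨i, hiC, rfl⟩ := Finset.mem_image.mp hx'
        rw [mem_closedBall, dist_zero_right, hvnorm i hiC]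
        rw [show (4:ℝ) * lam * (1 / (4 * lam)) = 1 by field_simp]
      · intro x hx' y hy' hxy
        obtain ⟨i, hiC, rfl⟩ := Finset.mem_image.mp hx'
        obtain ⟨j, hjC, rfl⟩ := Finset.mem_image.mp hy'
        have hij : i ≠ j := fun h => hxy (by rw [h])
        rcases lt_or_gt_of_ne hij with h | h
        · exact hkey i hiC j hjC h
        · rw [dist_comm]; exact hkey j hjC i hiC h
  omega

end

section
variable {X : Type*} [NormedAddCommGroup X] [NormedSpace ℝ X] [MeasurableSpace X]
  [Nontrivial X]

/-- Choice of a δ-fine Morse set inside an open set `V`, at each point of `V`. -/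
lemma morse_choice {lam : ℝ} (hlam : 1 ≤ lam) {Ω : Set X} {𝒮 : Set (X × Set X)}
    (h𝒮 : IsFineMorseCover lam Ω 𝒮) {V : Set X} (hV : IsOpen V) (hVΩ : V ⊆ Ω)
    (δ : X → ℝ) (hδ : ∀ x ∈ V, 0 < δ x ∧ δ x ≤ 1) :
    ∀ a ∈ V, ∃ (S : Set X) (r : ℝ), (a, S) ∈ 𝒮 ∧ 0 < r ∧ r ≤ 1 ∧
      closedBall a r ⊆ S ∧ S ⊆ closedBall a (lam * r) ∧
      (∀ y ∈ closedBall a r, ∀ x ∈ S, segment ℝ y x ⊆ S) ∧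
      S ⊆ V ∧ S ⊆ closedBall a (δ a) ∧ MeasurableSet S := by
  intro a ha
  obtain ⟨ε, hε, hball⟩ := Metric.isOpen_iff.mp hV a ha
  obtain ⟨hδ0, hδ1⟩ := hδ a ha
  set ε₂ : ℝ := min (δ a) (ε / 2) with hε₂
  have hε₂0 : 0 < ε₂ := lt_min hδ0 (by linarith)
  obtain ⟨S, hS𝒮, hSdiam⟩ := h𝒮.2 a (hVΩ ha) ε₂ hε₂0
  obtain ⟨hMorse, hmeas, _⟩ := h𝒮.1 (a, S) hS𝒮
  obtain ⟨r, hr0, hrin, hrout, hstar⟩ := hMorse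
  have haS : a ∈ S := hrin (mem_closedBall_self (le_of_lt hr0))
  have hSbd : Bornology.IsBounded S :=
    (Metric.isBounded_closedBall (x := a) (r := lam * r)).subset hrout
  have hSsub : ∀ x ∈ S, dist x a < ε₂ :=
    fun x hx => lt_of_le_of_lt (Metric.dist_le_diam_of_mem hSbd hx haS) hSdiam
  have hSV : S ⊆ V := fun x hx => hball (mem_ball.mpr
    (lt_of_lt_of_le (hSsub x hx) (le_trans (min_le_right _ _) (by linarith))))
  have hSδ : S ⊆ closedBall a (δ a) := fun x hx =>
    mem_closedBall.mpr (le_trans (le_of_lt (hSsub x hx)) (min_le_left _ _))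
  -- bound on r using a point at distance exactly r from a
  have hrδ : r < ε₂ := by
    obtain ⟨u, hu⟩ := exists_ne (0 : X)
    have hunorm : (0:ℝ) < ‖u‖ := norm_pos_iff.mpr hu
    set v : X := (r / ‖u‖) • u with hv
    have hvnorm : ‖v‖ = r := by
      rw [hv, norm_smul, Real.norm_eq_abs, abs_of_pos (by positivity)]
      field_simp
    have hmem : a + v ∈ S := hrin (by
      rw [mem_closedBall, dist_eq_norm, add_sub_cancel_left, hvnorm])
    have := hSsub (a + v) hmem
    rw [dist_eq_norm, add_sub_cancel_left, hvnorm] at this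
    exact this
  exact ⟨S, r, hS𝒮, hr0, le_trans (le_of_lt hrδ) (le_trans (min_le_left _ _) hδ1),
    hrin, hrout, hstar, hSV, hSδ, hmeas⟩

end

section
variable {X : Type*} [NormedAddCommGroup X] [NormedSpace ℝ X] [MeasurableSpace X]
  [OpensMeasurableSpace X] [FiniteDimensional ℝ X]

/-- Greedy covering: given a compact `K` and a Morse set `Sc a` of radius `rc a` at each
point `a` of `V ⊇ K`, there is a (chronologically ordered) finite list of points of `K`
whose Morse sets cover at least half the measure of `K`, each later tag avoiding all
earlier sets and having radius at most twice each earlier radius. -/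
lemma morse_greedy (μ : Measure X) {V K : Set X} (hK : IsCompact K) (hKV : K ⊆ V)
    (hμK : μ K ≠ ⊤) (Sc : X → Set X) (rc : X → ℝ)
    (hrc : ∀ a ∈ V, 0 < rc a ∧ rc a ≤ 1 ∧ closedBall a (rc a) ⊆ Sc a ∧ MeasurableSet (Sc a)) :
    ∃ m : List X, (∀ b ∈ m, b ∈ K) ∧
      List.Pairwise (fun x y => y ∉ Sc x ∧ rc y ≤ 2 * rc x) m ∧
      μ (K \ ⋃ b ∈ {x | x ∈ m}, Sc b) ≤ μ K / 2 := by
  classical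
  set A : List X → Set X := fun l => K \ ⋃ b ∈ {x | x ∈ l}, Sc b with hA
  have hAK : ∀ l, A l ⊆ K := fun l => diff_subset
  have hAmem : ∀ l x, x ∈ A l ↔ x ∈ K ∧ ∀ b ∈ l, x ∉ Sc b := by
    intro l x
    simp only [hA, mem_diff, mem_iUnion, exists_prop, not_exists, not_and, mem_setOf_eq]
  have hAsub : ∀ (l l' : List X), (∀ b ∈ l, b ∈ l') → A l' ⊆ A l := by
    intro l l' hsub x hx
    rw [hAmem] at hx ⊢
    exact ⟨hx.1, fun b hb => hx.2 b (hsub b hb)⟩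
  -- next choice
  have hnext : ∀ l : List X, (A l).Nonempty → ∃ a ∈ A l, ∀ x ∈ A l, rc x ≤ 2 * rc a := by
    intro l hne
    set M := rc '' A l with hM
    have hMne : M.Nonempty := hne.image rc
    have hbdd : BddAbove M := by
      refine ⟨1, fun y hy => ?_⟩
      obtain ⟨x, hx, rfl⟩ := hy
      exact (hrc x (hKV (hAK l hx))).2.1
    obtain ⟨x₀, hx₀⟩ := hne
    have h0 : 0 < sSup M := lt_of_lt_of_le (hrc x₀ (hKV (hAK l hx₀))).1
      (le_csSup hbdd ⟨x₀, hx₀, rfl⟩)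
    obtain ⟨y, hyM, hy⟩ := exists_lt_of_lt_csSup hMne (half_lt_self h0)
    obtain ⟨a, haA, rfl⟩ := hyM
    refine ⟨a, haA, fun x hx => ?_⟩
    have := le_csSup hbdd (⟨x, hx, rfl⟩ : rc x ∈ M)
    linarith
  choose nxt hnxt1 hnxt2 using hnext
  set step : List X → List X :=
    fun l => if h : (A l).Nonempty then nxt l h :: l else l with hstep
  set L : ℕ → List X := fun n => step^[n] [] with hL
  have hLsucc : ∀ n, L (n + 1) = step (L n) := by
    intro n
    rw [hL]
    simp only [Function.iterate_succ_apply']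
  -- the invariant
  set Good : List X → Prop := fun l => ∀ l₁ a l₂, l = l₁ ++ a :: l₂ →
    a ∈ A l₂ ∧ ∀ x ∈ A l₂, rc x ≤ 2 * rc a with hGoodDef
  have hGoodStep : ∀ l, Good l → Good (step l) := by
    intro l hg
    simp only [hstep]
    by_cases h : (A l).Nonempty
    · rw [dif_pos h]
      intro l₁ a l₂ heq
      rcases l₁ with _ | ⟨b, l₁'⟩
      · simp only [List.nil_append, List.cons.injEq] at heq
        obtain ⟨rfl, rfl⟩ := heq
        exact ⟨hnxt1 l h, hnxt2 l h⟩
      · simp only [List.cons_append, List.cons.injEq] at heq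
        exact hg l₁' a l₂ heq.2
    · rw [dif_neg h]
      exact hg
  have hGoodL : ∀ n, Good (L n) := by
    intro n
    induction n with
    | zero =>
      intro l₁ a l₂ heq
      have h0 : ([] : List X) = l₁ ++ a :: l₂ := heq
      simp at h0
    | succ n ih => rw [hLsucc]; exact hGoodStep _ ih
  -- members of a good list are in K
  have hmemK : ∀ l, Good l → ∀ b ∈ l, b ∈ K := by
    intro l hg b hb
    obtain ⟨l₁, l₂, rfl⟩ := List.append_of_mem hb
    exact hAK l₂ (hg l₁ b l₂ rfl).1
  -- pairwise property of a good list
  have hpairwise : ∀ l, Good l →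
      List.Pairwise (fun x y => x ∉ Sc y ∧ rc x ≤ 2 * rc y) l := by
    intro l
    induction l with
    | nil => intro _; exact List.Pairwise.nil
    | cons a l ih =>
      intro hg
      have hgl : Good l := by
        intro l₁ b l₂ heq
        exact hg (a :: l₁) b l₂ (by rw [heq]; rfl)
      have hhead : ∀ y ∈ l, a ∉ Sc y ∧ rc a ≤ 2 * rc y := by
        intro y hy
        have haA : a ∈ A l := (hg [] a l rfl).1
        constructor
        · exact ((hAmem l a).mp haA).2 y hy
        · obtain ⟨l₁, l₂, rfl⟩ := List.append_of_mem hy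
          have := hg (a :: l₁) y l₂ rfl
          exact this.2 a (hAsub l₂ (l₁ ++ y :: l₂)
            (fun b hb => List.mem_append_right l₁ (List.mem_cons_of_mem y hb)) haA)
      exact List.Pairwise.cons hhead (ih hgl)
  -- main dichotomy
  have hmain : ∃ n, μ (A (L n)) ≤ μ K / 2 := by
    by_cases hstall : ∃ n, ¬ (A (L n)).Nonempty
    · obtain ⟨n, hn⟩ := hstall
      rw [Set.not_nonempty_iff_eq_empty] at hn
      exact ⟨n, by rw [hn]; simp⟩
    · push_neg at hstall
      -- the infinite case
      set c : ℕ → X := fun n => nxt (L n) (hstall n) with hc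
      have hLsucc' : ∀ n, L (n + 1) = c n :: L n := by
        intro n
        rw [hLsucc]
        simp only [hstep]
        rw [dif_pos (hstall n)]
      have hcA : ∀ n, c n ∈ A (L n) := fun n => hnxt1 _ _
      have hcK : ∀ n, c n ∈ K := fun n => hAK _ (hcA n)
      have hAantitone : ∀ p q, p ≤ q → A (L q) ⊆ A (L p) := by
        intro p q hpq
        apply hAsub
        intro b hb
        induction q, hpq using Nat.le_induction with
        | base => exact hb
        | succ q hq ih => rw [hLsucc' q]; exact List.mem_cons_of_mem _ ih
      have hiInter : ⋂ n, A (L n) = ∅ := by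
        by_contra hne
        rw [← Ne, ← Set.nonempty_iff_ne_empty] at hne
        obtain ⟨x, hx⟩ := hne
        rw [Set.mem_iInter] at hx
        have hxK : x ∈ K := hAK _ (hx 0)
        have hrx : 0 < rc x := (hrc x (hKV hxK)).1
        have hdist : ∀ p q, p < q → rc x / 2 < dist (c q) (c p) := by
          intro p q hpq
          have h1 : c q ∈ A (L (p + 1)) := hAantitone (p+1) q hpq (hcA q)
          have h2 : c q ∉ Sc (c p) := by
            rw [hAmem] at h1
            exact h1.2 (c p) (by rw [hLsucc' p]; exact List.mem_cons_self)
          have h3 : rc (c p) < dist (c q) (c p) := by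
            by_contra hcon
            push_neg at hcon
            exact h2 ((hrc (c p) (hKV (hcK p))).2.2.1 (mem_closedBall.mpr hcon))
          have h4 : rc x ≤ 2 * rc (c p) := hnxt2 (L p) (hstall p) x (hx p)
          linarith
        -- contradiction with total boundedness of K
        have htb := hK.totallyBounded
        rw [Metric.totallyBounded_iff] at htb
        obtain ⟨t, htfin, htcov⟩ := htb (rc x / 5) (by positivity)
        have hpick : ∀ n, ∃ y ∈ t, c n ∈ ball y (rc x / 5) := by
          intro n
          have := htcov (hcK n)
          simpa using this
        choose f hf1 hf2 using hpick
        have hex : ∃ p q, p ≠ q ∧ f p = f q := by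
          haveI : Finite t := htfin
          obtain ⟨p, q, hne, hpq⟩ :=
            Finite.exists_ne_map_eq_of_infinite (fun n => (⟨f n, hf1 n⟩ : t))
          exact ⟨p, q, hne, by simpa using hpq⟩
        obtain ⟨p, q, hpq, hfpq⟩ := hex
        have hd : dist (c p) (c q) < rc x / 2 := by
          calc dist (c p) (c q) ≤ dist (c p) (f p) + dist (c q) (f q) := by
                rw [hfpq]; exact dist_triangle_right _ _ _
            _ < rc x / 5 + rc x / 5 := add_lt_add (mem_ball.mp (hf2 p)) (mem_ball.mp (hf2 q))
            _ < rc x / 2 := by linarith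
        rcases lt_or_gt_of_ne hpq with h | h
        · have := hdist p q h; rw [dist_comm] at hd; linarith
        · have := hdist q p h; linarith
      -- measurability and convergence
      have hmeas : ∀ n, MeasurableSet (A (L n)) := by
        intro n
        apply MeasurableSet.diff (hK.isClosed.measurableSet)
        have : ∀ b ∈ L n, MeasurableSet (Sc b) := by
          intro b hb
          exact (hrc b (hKV (hmemK _ (hGoodL n) b hb))).2.2.2
        have heq : (⋃ b ∈ {x | x ∈ L n}, Sc b) = ⋃ b ∈ (L n).toFinset, Sc b := by
          ext y; simp [List.mem_toFinset]
        rw [heq]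
        exact (L n).toFinset.measurableSet_biUnion
          (fun b hb => (hrc b (hKV (hmemK _ (hGoodL n) b (List.mem_toFinset.mp hb)))).2.2.2)
      have htend : Tendsto (fun n => μ (A (L n))) atTop (nhds (μ (⋂ n, A (L n)))) := by
        apply tendsto_measure_iInter_atTop (fun n => (hmeas n).nullMeasurableSet)
          (fun p q hpq => hAantitone p q hpq)
        exact ⟨0, ne_top_of_le_ne_top hμK (measure_mono (hAK _))⟩
      rw [hiInter, measure_empty] at htend
      rcases eq_or_ne (μ K) 0 with hK0 | hK0
      · exact ⟨0, le_trans (measure_mono (hAK _)) (by rw [hK0]; simp)⟩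
      · have hhalf : 0 < μ K / 2 := ENNReal.div_pos hK0 (by norm_num)
        have := htend.eventually_lt_const hhalf
        obtain ⟨n, hn⟩ := this.exists
        exact ⟨n, le_of_lt hn⟩
  obtain ⟨n, hn⟩ := hmain
  refine ⟨(L n).reverse, ?_, ?_, ?_⟩
  · intro b hb
    exact hmemK _ (hGoodL n) b (List.mem_reverse.mp hb)
  · rw [List.pairwise_reverse]
    exact hpairwise _ (hGoodL n)
  · have : {x | x ∈ (L n).reverse} = {x | x ∈ L n} := by
      ext x; simp [List.mem_reverse]
    rw [this]
    exact hn


/-- The main selection lemma: inside any open `V` of finite measure one can select a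
finite disjoint δ-fine family from `𝒮` capturing a fixed fraction of the measure. -/
lemma morse_selection [Nontrivial X] (μ : Measure X) [μ.Regular] {lam : ℝ} (hlam : 1 ≤ lam)
    {Ω : Set X} {𝒮 : Set (X × Set X)} (h𝒮 : IsFineMorseCover lam Ω 𝒮)
    (β : ℕ)
    (hβ : ∀ (b : X) (ρ : ℝ), 0 < ρ →
      ∀ (P : Finset ℕ) (a : ℕ → X) (r : ℕ → ℝ) (S : ℕ → Set X),
      (∀ i ∈ P, 0 < r i ∧ closedBall (a i) (r i) ⊆ S i ∧
          S i ⊆ closedBall (a i) (lam * r i) ∧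
          (∀ y ∈ closedBall (a i) (r i), ∀ x ∈ S i, segment ℝ y x ⊆ S i)) →
      (∀ i ∈ P, ρ ≤ 2 * r i) →
      (∀ i ∈ P, b ∉ S i) →
      (∀ i ∈ P, ∀ j ∈ P, i < j → a j ∉ S i ∧ r j ≤ 2 * r i) →
      (∀ i ∈ P, ∃ x ∈ S i, ‖x - b‖ ≤ lam * ρ) →
      P.card ≤ β)
    {V : Set X} (hV : IsOpen V) (hVΩ : V ⊆ Ω) (hμV : μ V ≠ ⊤)
    (δ : X → ℝ) (hδ : ∀ x ∈ V, 0 < δ x ∧ δ x ≤ 1) :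
    ∃ G : Finset (X × Set X),
      (∀ p ∈ G, p ∈ 𝒮 ∧ p.2 ⊆ V ∧ p.2 ⊆ closedBall p.1 (δ p.1) ∧ MeasurableSet p.2) ∧
      (∀ p ∈ G, ∀ q ∈ G, p ≠ q → Disjoint p.2 q.2) ∧
      μ V ≤ (4 * (β + 1) : ENNReal) * μ (⋃ p ∈ G, p.2) := by
  classical
  rcases eq_or_ne (μ V) 0 with hV0 | hV0
  · exact ⟨∅, by simp, by simp, by rw [hV0]; exact zero_le⟩
  -- a compact subset with more than half the measure
  obtain ⟨K, hKV, hKcomp, hKμ⟩ := Measure.Regular.innerRegular hV (μ V / 2)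
    (ENNReal.half_lt_self hV0 hμV)
  have hμK : μ K ≠ ⊤ := ne_top_of_le_ne_top hμV (measure_mono hKV)
  -- choice functions
  have hch0 := morse_choice hlam h𝒮 hV hVΩ δ hδ
  have hch : ∀ a : X, ∃ (S : Set X) (r : ℝ), a ∈ V → ((a, S) ∈ 𝒮 ∧ 0 < r ∧ r ≤ 1 ∧
      closedBall a r ⊆ S ∧ S ⊆ closedBall a (lam * r) ∧
      (∀ y ∈ closedBall a r, ∀ x ∈ S, segment ℝ y x ⊆ S) ∧
      S ⊆ V ∧ S ⊆ closedBall a (δ a) ∧ MeasurableSet S) := by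
    intro a
    by_cases h : a ∈ V
    · obtain ⟨S, r, hp⟩ := hch0 a h
      exact ⟨S, r, fun _ => hp⟩
    · exact ⟨∅, 1, fun h' => absurd h' h⟩
  choose Sc rc hSc using hch
  -- greedy covering of K
  obtain ⟨m, hmK, hmpair, hmcov⟩ := morse_greedy μ hKcomp hKV hμK Sc rc
    (fun a ha => ⟨(hSc a ha).2.1, (hSc a ha).2.2.1, (hSc a ha).2.2.2.1, (hSc a ha).2.2.2.2.2.2.2.2⟩)
  set n := m.length with hn
  set g : ℕ → X := fun k => if h : k < m.length then m[k] else 0 with hg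
  have hgmem : ∀ k, k < n → g k ∈ K := by
    intro k hk
    simp only [hg]
    rw [dif_pos hk]
    exact hmK _ (List.getElem_mem hk)
  have hgV : ∀ k, k < n → g k ∈ V := fun k hk => hKV (hgmem k hk)
  have hpair : ∀ i j, i < j → j < n → g j ∉ Sc (g i) ∧ rc (g j) ≤ 2 * rc (g i) := by
    intro i j hij hj
    have hi : i < n := lt_trans hij hj
    have := List.pairwise_iff_getElem.mp hmpair i j hi hj hij
    simp only [hg]
    rw [dif_pos hi, dif_pos hj]
    exact this
  -- the coloring
  set rel : ℕ → ℕ → Prop := fun j i => (Sc (g j) ∩ Sc (g i)).Nonempty with hrel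
  set col : ℕ → ℕ := morseCol rel with hcol
  -- backward degree bound
  have hdeg : ∀ i, i < n → ((Finset.range i).filter (fun j => rel j i)).card ≤ β := by
    intro i hi
    set P := (Finset.range i).filter (fun j => rel j i) with hP
    have hPmem : ∀ j ∈ P, j < i := fun j hj =>
      Finset.mem_range.mp (Finset.mem_filter.mp hj).1
    have hPn : ∀ j ∈ P, j < n := fun j hj => lt_trans (hPmem j hj) hi
    apply hβ (g i) (rc (g i)) (hSc (g i) (hgV i hi)).2.1 P g (fun k => rc (g k))
      (fun k => Sc (g k))
    · intro j hj
      have h := hSc (g j) (hgV j (hPn j hj))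
      exact ⟨h.2.1, h.2.2.2.1, h.2.2.2.2.1, h.2.2.2.2.2.1⟩
    · intro j hj
      have := (hpair j i (hPmem j hj) hi).2
      linarith
    · intro j hj
      exact (hpair j i (hPmem j hj) hi).1
    · intro j hj k hk hjk
      exact hpair j k hjk (hPn k hk)
    · intro j hj
      obtain ⟨x, hx1, hx2⟩ := (Finset.mem_filter.mp hj).2
      refine ⟨x, hx1, ?_⟩
      have := (hSc (g i) (hgV i hi)).2.2.2.2.1 hx2
      rw [mem_closedBall, dist_eq_norm] at this
      exact this
  -- color properties
  have hcolle : ∀ i, i < n → col i ≤ β := fun i hi => morseCol_le rel i β (hdeg i hi)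
  have hdisj : ∀ i j, i < n → j < n → i ≠ j → col i = col j →
      Disjoint (Sc (g i)) (Sc (g j)) := by
    intro i j hi hj hij hc
    rw [Set.disjoint_iff_inter_eq_empty]
    by_contra hne
    rw [← Ne, ← Set.nonempty_iff_ne_empty] at hne
    rcases lt_or_gt_of_ne hij with h | h
    · exact morseCol_ne rel j i h hne hc
    · refine morseCol_ne rel i j h ?_ hc.symm
      rwa [Set.inter_comm] at hne
  -- the union over `m` equals the indexed union
  have hU : (⋃ b ∈ {x | x ∈ m}, Sc b) = ⋃ i ∈ Finset.range n, Sc (g i) := by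
    ext x
    simp only [mem_iUnion, mem_setOf_eq, Finset.mem_range, exists_prop]
    constructor
    · rintro ⟨b, hb, hx⟩
      obtain ⟨k, hk, rfl⟩ := List.getElem_of_mem hb
      refine ⟨k, hk, ?_⟩
      have : g k = m[k] := by simp only [hg]; rw [dif_pos hk]
      rwa [this]
    · rintro ⟨i, hi, hx⟩
      refine ⟨g i, ?_, hx⟩
      have : g i = m[i] := by simp only [hg]; rw [dif_pos hi]
      rw [this]
      exact List.getElem_mem hi
  set U : Set X := ⋃ i ∈ Finset.range n, Sc (g i) with hUdef
  have hKle : μ K / 2 ≤ μ U := by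
    have h1 : μ K ≤ μ (K \ U) + μ U := by
      calc μ K = μ ((K \ U) ∪ (K ∩ U)) := by rw [Set.diff_union_inter]
        _ ≤ μ (K \ U) + μ (K ∩ U) := measure_union_le _ _
        _ ≤ μ (K \ U) + μ U := add_le_add_right (measure_mono inter_subset_right) _
    have h2 : μ (K \ U) ≤ μ K / 2 := by rw [← hU]; exact hmcov
    have h3 : μ K ≤ μ K / 2 + μ U := le_trans h1 (add_le_add_left h2 _)
    calc μ K / 2 = μ K - μ K / 2 := (ENNReal.sub_half hμK).symm
      _ ≤ μ U := tsub_le_iff_left.mpr h3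
  -- pigeonhole over colors
  set Uc : ℕ → Set X := fun c =>
    ⋃ i ∈ (Finset.range n).filter (fun i => col i = c), Sc (g i) with hUc
  have hUsplit : U ⊆ ⋃ c ∈ Finset.range (β+1), Uc c := by
    intro x hx
    rw [hUdef] at hx
    simp only [mem_iUnion, Finset.mem_range, exists_prop] at hx
    obtain ⟨i, hi, hx⟩ := hx
    simp only [mem_iUnion, Finset.mem_range, exists_prop, hUc, Finset.mem_filter]
    exact ⟨col i, by have := hcolle i hi; omega, i, ⟨⟨hi, rfl⟩, hx⟩⟩
  obtain ⟨c, hc, hcmax⟩ := Finset.exists_max_image (Finset.range (β+1))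
    (fun c => μ (Uc c)) ⟨0, by simp⟩
  have hUcle : μ U ≤ ((β:ENNReal)+1) * μ (Uc c) := by
    calc μ U ≤ μ (⋃ c' ∈ Finset.range (β+1), Uc c') := measure_mono hUsplit
      _ ≤ ∑ c' ∈ Finset.range (β+1), μ (Uc c') := measure_biUnion_finset_le _ _
      _ ≤ ∑ _c' ∈ Finset.range (β+1), μ (Uc c) := Finset.sum_le_sum (fun x hx => hcmax x hx)
      _ = ((β:ENNReal)+1) * μ (Uc c) := by
          rw [Finset.sum_const, Finset.card_range, nsmul_eq_mul]
          norm_cast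
  -- the selected family
  set G : Finset (X × Set X) := ((Finset.range n).filter (fun i => col i = c)).image
    (fun i => (g i, Sc (g i))) with hG
  have hGU : (⋃ p ∈ G, p.2) = Uc c := by
    ext x
    simp only [hG, hUc, mem_iUnion, Finset.mem_image, exists_prop, Finset.mem_filter,
      Finset.mem_range]
    constructor
    · rintro ⟨p, ⟨i, hi, rfl⟩, hx⟩
      exact ⟨i, hi, hx⟩
    · rintro ⟨i, hi, hx⟩
      exact ⟨(g i, Sc (g i)), ⟨i, hi, rfl⟩, hx⟩
  refine ⟨G, ?_, ?_, ?_⟩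
  · intro p hp
    obtain ⟨i, hi, rfl⟩ := Finset.mem_image.mp hp
    have hiV : g i ∈ V := hgV i (Finset.mem_range.mp (Finset.mem_filter.mp hi).1)
    have h := hSc (g i) hiV
    exact ⟨h.1, h.2.2.2.2.2.2.1, h.2.2.2.2.2.2.2.1, h.2.2.2.2.2.2.2.2⟩
  · intro p hp q hq hpq
    obtain ⟨i, hi, rfl⟩ := Finset.mem_image.mp hp
    obtain ⟨j, hj, rfl⟩ := Finset.mem_image.mp hq
    have hij : i ≠ j := fun h => hpq (by rw [h])
    obtain ⟨hi1, hi2⟩ := Finset.mem_filter.mp hi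
    obtain ⟨hj1, hj2⟩ := Finset.mem_filter.mp hj
    exact hdisj i j (Finset.mem_range.mp hi1) (Finset.mem_range.mp hj1) hij
      (by rw [hi2, hj2])
  · rw [hGU]
    have e1 : μ V ≤ 2 * μ K := by
      calc μ V = 2 * (μ V / 2) := by
            rw [ENNReal.mul_div_cancel' (by norm_num) (by norm_num)]
        _ ≤ 2 * μ K := mul_le_mul_right (le_of_lt hKμ) 2
    have e2 : μ K ≤ 2 * μ U := by
      calc μ K = 2 * (μ K / 2) := by
            rw [ENNReal.mul_div_cancel' (by norm_num) (by norm_num)]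
        _ ≤ 2 * μ U := mul_le_mul_right hKle 2
    calc μ V ≤ 2 * μ K := e1
      _ ≤ 2 * (2 * μ U) := mul_le_mul_right e2 2
      _ ≤ 2 * (2 * (((β:ENNReal)+1) * μ (Uc c))) := by
          exact mul_le_mul_right (mul_le_mul_right hUcle 2) 2
      _ = (4 * ((β:ENNReal) + 1)) * μ (Uc c) := by ring
      _ = (4 * (β + 1) : ENNReal) * μ (Uc c) := by norm_cast

end

end MorseAux

/-- A fine, measurable, `λ`-Morse cover `𝒮` of an open set `Ω` is a `μ`-a.e. `λ`-Morse
cover of `Ω` if it consists of closed sets, or if for each `S ∈ 𝒮` one has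
`μ(Ω ∩ (cl S \ S)) = 0`. -/
theorem isAEMorseCover_of_closed_or_null_boundary
    {X : Type*} [NormedAddCommGroup X] [NormedSpace ℝ X] [FiniteDimensional ℝ X]
    [MeasurableSpace X] [OpensMeasurableSpace X]
    (μ : Measure X) [μ.Regular] [μ.IsComplete]
    (lam : ℝ) (hlam : 1 ≤ lam) (Ω : Set X) (hΩ : IsOpen Ω)
    (𝒮 : Set (X × Set X)) (h𝒮 : IsFineMorseCover lam Ω 𝒮)
    (hcl : (∀ p ∈ 𝒮, IsClosed p.2) ∨ (∀ p ∈ 𝒮, μ (Ω ∩ (closure p.2 \ p.2)) = 0)) :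
    IsAEMorseCover μ lam Ω 𝒮 := by
  classical
  refine ⟨h𝒮, ?_⟩
  intro U hUopen hUne hUΩ δ hδ
  -- boundary null in U for each member of 𝒮
  have hbd : ∀ p ∈ 𝒮, μ (U ∩ (closure p.2 \ p.2)) = 0 := by
    intro p hp
    rcases hcl with h | h
    · have : closure p.2 = p.2 := (h p hp).closure_eq
      rw [this]
      simp
    · exact measure_mono_null (inter_subset_inter_left _ hUΩ) (h p hp)
  rcases subsingleton_or_nontrivial X with hsub | hnt
  · -- trivial case: `X` is a subsingleton
    obtain ⟨a, ha⟩ := hUne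
    obtain ⟨S, hS𝒮, _⟩ := h𝒮.2 a (hUΩ ha) 1 one_pos
    obtain ⟨r, hr0, hrin, _, _⟩ := (h𝒮.1 (a, S) hS𝒮).1
    have haS : a ∈ S := hrin (mem_closedBall_self (le_of_lt hr0))
    refine ⟨{0}, fun _ => (a, S), ⟨?_, ?_, ?_⟩, ?_⟩
    · intro i _; exact hS𝒮
    · intro i hi j hj hij
      simp only [Set.mem_singleton_iff] at hi hj
      omega
    · have : U \ ⋃ i ∈ ({0} : Set ℕ), S = ∅ := by
        ext x
        simp only [Set.mem_diff, Set.mem_iUnion, Set.mem_singleton_iff, Set.mem_empty_iff_false,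
          iff_false, not_and, not_not, exists_prop]
        intro hx
        exact ⟨0, rfl, by rwa [Subsingleton.elim x a]⟩
      rw [this]
      simp
    · intro i _
      constructor
      · intro x hx
        rwa [Subsingleton.elim x a]
      · intro x hx
        rw [mem_closedBall]
        rw [Subsingleton.elim x a, dist_self]
        exact le_of_lt (hδ a ha).1
  -- main case
  obtain ⟨β, hβ⟩ := morse_backward (X := X) lam hlam
  set c : ENNReal := (4 * (β + 1) : ENNReal) with hc
  have hc0 : c ≠ 0 := by
    rw [hc]
    intro h
    rw [mul_eq_zero] at h
    rcases h with h | h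
    · norm_num at h
    · have : ((β:ENNReal) + 1) ≠ 0 := by
        simp
      exact this h
  have hctop : c ≠ ⊤ := by
    rw [hc]
    exact ENNReal.mul_ne_top (by norm_num) (by simp)
  have hδ' : ∀ x ∈ U, 0 < δ x ∧ δ x ≤ 1 := fun x hx => ⟨(hδ x hx).1, (hδ x hx).2⟩
  -- the selection step, for any open subset of U and any shell
  have hex : ∀ W : Set X, IsOpen W → W ⊆ U → ∀ k : ℕ,
      ∃ G : Finset (X × Set X),
      (∀ p ∈ G, p ∈ 𝒮 ∧ p.2 ⊆ W ∩ ball (0:X) k ∧ p.2 ⊆ closedBall p.1 (δ p.1) ∧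
        MeasurableSet p.2) ∧
      (∀ p ∈ G, ∀ q ∈ G, p ≠ q → Disjoint p.2 q.2) ∧
      μ (W ∩ ball (0:X) k) ≤ c * μ (⋃ p ∈ G, p.2) := by
    intro W hWo hWU k
    have hVo : IsOpen (W ∩ ball (0:X) k) := hWo.inter isOpen_ball
    have hVΩ : W ∩ ball (0:X) k ⊆ Ω := fun x hx => hUΩ (hWU hx.1)
    have hμV : μ (W ∩ ball (0:X) k) ≠ ⊤ := by
      apply ne_top_of_le_ne_top _ (measure_mono (inter_subset_right.trans ball_subset_closedBall))
      exact (isCompact_closedBall (0:X) k).measure_lt_top.ne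
    have hδV : ∀ x ∈ W ∩ ball (0:X) k, 0 < δ x ∧ δ x ≤ 1 :=
      fun x hx => hδ' x (hWU hx.1)
    exact morse_selection μ hlam h𝒮 β hβ hVo hVΩ hμV δ hδV
  choose Gch hGch1 hGch2 hGch3 using hex
  -- the decreasing sequence of open sets
  set Step : ℕ → Set X → Set X := fun k W =>
    if h : IsOpen W ∧ W ⊆ U then
      W \ ⋃ p ∈ Gch W h.1 h.2 (Nat.unpair k).1, closure p.2
    else W with hStep
  set R : ℕ → Set X := fun n => Nat.rec (motive := fun _ => Set X) U
    (fun k W => Step k W) n with hR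
  have hR0 : R 0 = U := rfl
  have hRsucc0 : ∀ n, R (n + 1) = Step n (R n) := fun n => rfl
  have hInv : ∀ n, IsOpen (R n) ∧ R n ⊆ U := by
    intro n
    induction n with
    | zero => exact ⟨hUopen, subset_rfl⟩
    | succ n ih =>
      rw [hRsucc0 n]
      simp only [hStep]
      rw [dif_pos ih]
      constructor
      · apply ih.1.sdiff
        apply Set.Finite.isClosed_biUnion (Finset.finite_toSet _)
        intro p _
        exact isClosed_closure
      · exact diff_subset.trans ih.2
  set G : ℕ → Finset (X × Set X) := fun n =>
    Gch (R n) (hInv n).1 (hInv n).2 (Nat.unpair n).1 with hG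
  have hRsucc : ∀ n, R (n + 1) = R n \ ⋃ p ∈ G n, closure p.2 := by
    intro n
    rw [hRsucc0 n]
    simp only [hStep, hG]
    rw [dif_pos (hInv n)]
  have hspec1 : ∀ n, ∀ p ∈ G n, p ∈ 𝒮 ∧
      p.2 ⊆ R n ∩ ball (0:X) ((Nat.unpair n).1 : ℕ) ∧
      p.2 ⊆ closedBall p.1 (δ p.1) ∧ MeasurableSet p.2 :=
    fun n => hGch1 (R n) (hInv n).1 (hInv n).2 (Nat.unpair n).1
  have hspec2 : ∀ n, ∀ p ∈ G n, ∀ q ∈ G n, p ≠ q → Disjoint p.2 q.2 :=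
    fun n => hGch2 (R n) (hInv n).1 (hInv n).2 (Nat.unpair n).1
  have hspec3 : ∀ n, μ (R n ∩ ball (0:X) ((Nat.unpair n).1 : ℕ)) ≤
      c * μ (⋃ p ∈ G n, p.2) :=
    fun n => hGch3 (R n) (hInv n).1 (hInv n).2 (Nat.unpair n).1
  -- monotonicity
  have hRmono : ∀ m n, m ≤ n → R n ⊆ R m := by
    intro m n hmn
    induction n, hmn using Nat.le_induction with
    | base => exact subset_rfl
    | succ n hmn ih =>
      rw [hRsucc n]
      exact diff_subset.trans ih
  -- cross-stage disjointness
  have hcross : ∀ m n, m < n → ∀ p ∈ G m, ∀ q ∈ G n, Disjoint p.2 q.2 := by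
    intro m n hmn p hp q hq
    rw [Set.disjoint_left]
    intro x hxp hxq
    have h1 : x ∈ R n := ((hspec1 n q hq).2.1 hxq).1
    have h2 : x ∈ R (m + 1) := hRmono (m+1) n hmn h1
    rw [hRsucc m] at h2
    apply h2.2
    exact mem_biUnion hp (subset_closure hxp)
  -- decay on each shell
  have hθdef : ∀ (M : ℕ), μ ((⋂ n, R n) ∩ ball (0:X) M) = 0 := by
    intro M
    set θ : ENNReal := 1 - c⁻¹ with hθ
    have hcinv0 : c⁻¹ ≠ 0 := ENNReal.inv_ne_zero.mpr hctop
    have hθ1 : θ < 1 := ENNReal.sub_lt_self (by norm_num) (by norm_num) hcinv0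
    have hcinv1 : c⁻¹ ≤ 1 := by
      rw [ENNReal.inv_le_one]
      rw [hc]
      calc (1:ENNReal) = 1 * 1 := (one_mul 1).symm
        _ ≤ 4 * ((β:ENNReal) + 1) := by
            apply mul_le_mul' (by norm_num) (by simp)
    have hfinM : μ (U ∩ ball (0:X) M) ≠ ⊤ := by
      apply ne_top_of_le_ne_top _
        (measure_mono (inter_subset_right.trans ball_subset_closedBall))
      exact (isCompact_closedBall (0:X) (M:ℝ)).measure_lt_top.ne
    have hdecay : ∀ n, (Nat.unpair n).1 = M →
        μ (R (n+1) ∩ ball (0:X) M) ≤ θ * μ (R n ∩ ball (0:X) M) := by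
      intro n hM
      have hsub : (⋃ p ∈ G n, p.2) ⊆ R n ∩ ball (0:X) M := by
        intro x hx
        rw [mem_iUnion₂] at hx
        obtain ⟨p, hp, hxp⟩ := hx
        have := (hspec1 n p hp).2.1 hxp
        rwa [hM] at this
      have hmeas : MeasurableSet (⋃ p ∈ G n, p.2) :=
        (G n).measurableSet_biUnion (fun p hp => (hspec1 n p hp).2.2.2)
      have hμfin : μ (⋃ p ∈ G n, p.2) ≠ ⊤ :=
        ne_top_of_le_ne_top hfinM (le_trans (measure_mono hsub)
          (measure_mono (inter_subset_inter_left _ (hInv n).2)))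
      have h1 : R (n+1) ∩ ball (0:X) M ⊆ (R n ∩ ball (0:X) M) \ ⋃ p ∈ G n, p.2 := by
        intro x hx
        rw [hRsucc n] at hx
        refine ⟨⟨hx.1.1, hx.2⟩, fun hmem => hx.1.2 ?_⟩
        rw [mem_iUnion₂] at hmem ⊢
        obtain ⟨p, hp, hxp⟩ := hmem
        exact ⟨p, hp, subset_closure hxp⟩
      have h2 : c⁻¹ * μ (R n ∩ ball (0:X) M) ≤ μ (⋃ p ∈ G n, p.2) := by
        have h3 := hspec3 n
        rw [hM] at h3
        calc c⁻¹ * μ (R n ∩ ball (0:X) M) ≤ c⁻¹ * (c * μ (⋃ p ∈ G n, p.2)) :=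
              mul_le_mul_right h3 _
          _ = (c⁻¹ * c) * μ (⋃ p ∈ G n, p.2) := (mul_assoc _ _ _).symm
          _ = μ (⋃ p ∈ G n, p.2) := by rw [ENNReal.inv_mul_cancel hc0 hctop, one_mul]
      calc μ (R (n+1) ∩ ball (0:X) M) ≤ μ ((R n ∩ ball (0:X) M) \ ⋃ p ∈ G n, p.2) :=
            measure_mono h1
        _ = μ (R n ∩ ball (0:X) M) - μ (⋃ p ∈ G n, p.2) :=
            measure_diff hsub hmeas.nullMeasurableSet hμfin
        _ ≤ θ * μ (R n ∩ ball (0:X) M) := by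
            rw [tsub_le_iff_right]
            calc μ (R n ∩ ball (0:X) M)
                = 1 * μ (R n ∩ ball (0:X) M) := (one_mul _).symm
              _ = (θ + c⁻¹) * μ (R n ∩ ball (0:X) M) := by
                  rw [hθ, tsub_add_cancel_of_le hcinv1]
              _ = θ * μ (R n ∩ ball (0:X) M) + c⁻¹ * μ (R n ∩ ball (0:X) M) := by
                  rw [add_mul]
              _ ≤ θ * μ (R n ∩ ball (0:X) M) + μ (⋃ p ∈ G n, p.2) :=
                  add_le_add_right h2 _
    have hiter : ∀ j, μ (R (Nat.pair M j) ∩ ball (0:X) M) ≤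
        θ ^ j * μ (U ∩ ball (0:X) M) := by
      intro j
      induction j with
      | zero =>
        rw [pow_zero, one_mul]
        exact measure_mono (inter_subset_inter_left _ ((hRmono 0 _ (Nat.zero_le _)).trans
          (by rw [hR0])))
      | succ j ih =>
        have hlt : Nat.pair M j + 1 ≤ Nat.pair M (j+1) :=
          Nat.pair_lt_pair_right M (Nat.lt_succ_self j)
        calc μ (R (Nat.pair M (j+1)) ∩ ball (0:X) M)
            ≤ μ (R (Nat.pair M j + 1) ∩ ball (0:X) M) :=
              measure_mono (inter_subset_inter_left _ (hRmono _ _ hlt))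
          _ ≤ θ * μ (R (Nat.pair M j) ∩ ball (0:X) M) :=
              hdecay (Nat.pair M j) (by rw [Nat.unpair_pair])
          _ ≤ θ * (θ ^ j * μ (U ∩ ball (0:X) M)) := mul_le_mul_right ih _
          _ = θ ^ (j+1) * μ (U ∩ ball (0:X) M) := by ring
    have htend : Tendsto (fun j => θ ^ j * μ (U ∩ ball (0:X) M)) atTop (nhds 0) := by
      have h0 : Tendsto (fun j => θ ^ j) atTop (nhds 0) :=
        ENNReal.tendsto_pow_atTop_nhds_zero_of_lt_one hθ1
      have := ENNReal.Tendsto.mul_const h0 (Or.inr hfinM)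
      rwa [zero_mul] at this
    have hbound : ∀ j, μ ((⋂ n, R n) ∩ ball (0:X) M) ≤
        θ ^ j * μ (U ∩ ball (0:X) M) := by
      intro j
      exact le_trans (measure_mono (inter_subset_inter_left _ (iInter_subset _ _)))
        (hiter j)
    have := ge_of_tendsto' htend hbound
    exact le_antisymm this zero_le
  -- the total union and the leftover
  set Total : Set X := ⋃ n, ⋃ p ∈ G n, p.2 with hTotal
  have hleft : U \ Total ⊆ (⋃ M : ℕ, (⋂ n, R n) ∩ ball (0:X) M) ∪
      (⋃ n, ⋃ p ∈ G n, U ∩ (closure p.2 \ p.2)) := by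
    rintro x ⟨hxU, hxT⟩
    by_cases hclx : ∃ n, ∃ p ∈ G n, x ∈ closure p.2
    · right
      obtain ⟨n, p, hp, hxcl⟩ := hclx
      rw [mem_iUnion]
      refine ⟨n, ?_⟩
      rw [mem_iUnion₂]
      refine ⟨p, hp, hxU, hxcl, fun hxp => hxT ?_⟩
      rw [hTotal, mem_iUnion]
      exact ⟨n, mem_biUnion hp hxp⟩
    · left
      push_neg at hclx
      have hxR : ∀ n, x ∈ R n := by
        intro n
        induction n with
        | zero => rwa [hR0]
        | succ n ih =>
          rw [hRsucc n]
          refine ⟨ih, fun hmem => ?_⟩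
          rw [mem_iUnion₂] at hmem
          obtain ⟨p, hp, hxp⟩ := hmem
          exact hclx n p hp hxp
      obtain ⟨M, hM⟩ := exists_nat_gt ‖x‖
      rw [mem_iUnion]
      refine ⟨M, mem_iInter.mpr hxR, ?_⟩
      rw [mem_ball, dist_zero_right]
      exact hM
  have hleft0 : μ (U \ Total) = 0 := by
    apply measure_mono_null hleft
    apply measure_union_null
    · exact measure_iUnion_null (fun M => hθdef M)
    · apply measure_iUnion_null
      intro n
      apply le_antisymm _ zero_le
      calc μ (⋃ p ∈ G n, U ∩ (closure p.2 \ p.2))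
          ≤ ∑ p ∈ G n, μ (U ∩ (closure p.2 \ p.2)) := measure_biUnion_finset_le _ _
        _ = 0 := Finset.sum_eq_zero (fun p hp => hbd p (hspec1 n p hp).1)
  -- assembling the sequence
  set T : ℕ → X × Set X := fun k =>
    (G (Nat.unpair k).1).toList.getD (Nat.unpair k).2 ((0:X), (∅ : Set X)) with hT
  set I : Set ℕ := {k | (Nat.unpair k).2 < (G (Nat.unpair k).1).toList.length} with hI
  have hTmem : ∀ k ∈ I, T k ∈ G (Nat.unpair k).1 := by
    intro k hk
    rw [hI, mem_setOf_eq] at hk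
    rw [hT]
    simp only []
    rw [List.getD_eq_getElem _ _ hk]
    exact Finset.mem_toList.mp (List.getElem_mem hk)
  have hcover : (⋃ k ∈ I, (T k).2) = Total := by
    apply Set.Subset.antisymm
    · intro x hx
      rw [mem_iUnion₂] at hx
      obtain ⟨k, hk, hxk⟩ := hx
      rw [hTotal, mem_iUnion]
      exact ⟨(Nat.unpair k).1, mem_biUnion (hTmem k hk) hxk⟩
    · intro x hx
      rw [hTotal, mem_iUnion] at hx
      obtain ⟨n, hx⟩ := hx
      rw [mem_iUnion₂] at hx
      obtain ⟨p, hp, hxp⟩ := hx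
      obtain ⟨i, hi, hieq⟩ := List.mem_iff_getElem.mp (Finset.mem_toList.mpr hp)
      rw [mem_iUnion₂]
      refine ⟨Nat.pair n i, ?_, ?_⟩
      · rw [hI, mem_setOf_eq, Nat.unpair_pair]
        exact hi
      · have hTp : T (Nat.pair n i) = p := by
          simp only [hT, Nat.unpair_pair]
          rw [List.getD_eq_getElem _ _ hi]
          exact hieq
        rw [hTp]
        exact hxp
  refine ⟨I, T, ⟨?_, ?_, ?_⟩, ?_⟩
  · intro k hk
    exact (hspec1 _ _ (hTmem k hk)).1
  · intro k hk k' hk' hne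
    rcases hu : Nat.unpair k with ⟨n, i⟩
    rcases hu' : Nat.unpair k' with ⟨n', i'⟩
    have hk2 : i < (G n).toList.length := by
      have h := hk; rw [hI, mem_setOf_eq, hu] at h; exact h
    have hk2' : i' < (G n').toList.length := by
      have h := hk'; rw [hI, mem_setOf_eq, hu'] at h; exact h
    have eT : T k = (G n).toList[i] := by
      simp only [hT, hu]
      exact List.getD_eq_getElem _ _ hk2
    have eT' : T k' = (G n').toList[i'] := by
      simp only [hT, hu']
      exact List.getD_eq_getElem _ _ hk2'
    have hTml : T k ∈ G n := by
      rw [eT]; exact Finset.mem_toList.mp (List.getElem_mem hk2)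
    have hTml' : T k' ∈ G n' := by
      rw [eT']; exact Finset.mem_toList.mp (List.getElem_mem hk2')
    rcases eq_or_ne n n' with rfl | hnn
    · have hii : i ≠ i' := by
        intro h
        apply hne
        have h1 : Nat.pair n i = k := by rw [← Nat.pair_unpair k, hu]
        have h2 : Nat.pair n i' = k' := by rw [← Nat.pair_unpair k', hu']
        rw [← h1, ← h2, h]
      have hTne : T k ≠ T k' := by
        rw [eT, eT']
        intro h
        exact hii (((G n).nodup_toList.getElem_inj_iff).mp h)
      exact hspec2 n (T k) hTml (T k') hTml' hTne
    · rcases lt_or_gt_of_ne hnn with h | h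
      · exact hcross n n' h (T k) hTml (T k') hTml'
      · exact (hcross n' n h (T k') hTml' (T k) hTml).symm
  · rw [hcover]
    exact hleft0
  · intro k hk
    have h1 := (hspec1 _ _ (hTmem k hk)).2.1
    have h2 := (hspec1 _ _ (hTmem k hk)).2.2.1
    exact ⟨h1.trans (inter_subset_left.trans (hInv _).2), h2⟩
end

section
/- Let 𝒮 be a fine, measurable, λ-Morse cover of an open set Ω ⊆ X that is scaled, i.e., for each S(a) ∈ 𝒮 and each p ∈ (0,1] the set S^(p)(a) = {a + p·x : a + x ∈ S(a)} also belongs to 𝒮. Then 𝒮 is a μ-a.e. λ-Morse cover of Ω. -/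
open MeasureTheory Set Metric Filter

open scoped ENNReal NNReal

section AuxGeo

variable {X : Type*} [NormedAddCommGroup X] [NormedSpace ℝ X]

/-- scaled copy of S about a -/
def MSC (a : X) (q : ℝ) (S : Set X) : Set X := {y : X | ∃ x : X, a + x ∈ S ∧ y = a + q • x}

lemma mem_MSC {a y : X} {q : ℝ} {S : Set X} :
    y ∈ MSC a q S ↔ ∃ v : X, a + v ∈ S ∧ y = a + q • v := Iff.rfl

lemma MSC_subset {a : X} {q r0 : ℝ} {S : Set X} (hr0 : 0 < r0)
    (hball : closedBall a r0 ⊆ S)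
    (hstar : ∀ y ∈ closedBall a r0, ∀ x ∈ S, segment ℝ y x ⊆ S)
    (hq0 : 0 ≤ q) (hq1 : q ≤ 1) : MSC a q S ⊆ S := by
  rintro y ⟨v, hv, rfl⟩
  have ha : a ∈ closedBall a r0 := mem_closedBall_self hr0.le
  have : a + q • v = (1 - q) • a + q • (a + v) := by
    rw [smul_add]; module
  rw [this]
  exact hstar a ha _ hv ⟨1 - q, q, by linarith, hq0, by ring, rfl⟩

lemma ball_subset_MSC {a : X} {q r0 : ℝ} {S : Set X} (hq : 0 < q)
    (hball : closedBall a r0 ⊆ S) : closedBall a (q * r0) ⊆ MSC a q S := by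
  intro y hy
  refine ⟨q⁻¹ • (y - a), hball ?_, by rw [smul_smul, mul_inv_cancel₀ hq.ne', one_smul]; abel⟩
  rw [mem_closedBall, dist_eq_norm]
  have : a + q⁻¹ • (y - a) - a = q⁻¹ • (y - a) := by abel
  rw [this, norm_smul, norm_inv, Real.norm_of_nonneg hq.le]
  rw [mem_closedBall, dist_eq_norm] at hy
  rw [inv_mul_le_iff₀ hq]
  linarith [hy]

lemma MSC_subset_ball {a : X} {q R : ℝ} {S : Set X} (hq : 0 ≤ q)
    (h : S ⊆ closedBall a R) : MSC a q S ⊆ closedBall a (q * R) := by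
  rintro y ⟨v, hv, rfl⟩
  have hv' := h hv
  rw [mem_closedBall, dist_eq_norm] at hv' ⊢
  have h1 : a + v - a = v := by abel
  have h2 : a + q • v - a = q • v := by abel
  rw [h1] at hv'; rw [h2, norm_smul, Real.norm_of_nonneg hq]
  exact mul_le_mul_of_nonneg_left hv' hq

lemma MSC_MSC {a : X} {q q' : ℝ} {S : Set X} (hq' : q' ≠ 0) :
    MSC a (q / q') (MSC a q' S) = MSC a q S := by
  ext y
  constructor
  · rintro ⟨v', ⟨v, hv, hv'⟩, rfl⟩
    have : v' = q' • v := by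
      have := hv'; exact add_left_cancel this
    refine ⟨v, hv, ?_⟩
    rw [this, smul_smul, div_mul_cancel₀ _ hq']
  · rintro ⟨v, hv, rfl⟩
    refine ⟨q' • v, ⟨v, hv, rfl⟩, ?_⟩
    rw [smul_smul, div_mul_cancel₀ _ hq']

lemma starlike_MSC {a : X} {q r0 : ℝ} {S : Set X} (hq : 0 < q)
    (hstar : ∀ y ∈ closedBall a r0, ∀ x ∈ S, segment ℝ y x ⊆ S) :
    ∀ y ∈ closedBall a (q * r0), ∀ x ∈ MSC a q S, segment ℝ y x ⊆ MSC a q S := by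
  rintro y hy x ⟨v, hv, rfl⟩ z ⟨α, β, hα, hβ, hαβ, rfl⟩
  set u := q⁻¹ • (y - a) with hu
  have hyu : y = a + q • u := by
    rw [hu, smul_smul, mul_inv_cancel₀ hq.ne', one_smul]; abel
  have hu' : a + u ∈ closedBall a r0 := by
    rw [mem_closedBall, dist_eq_norm]
    have : a + u - a = u := by abel
    rw [this, hu, norm_smul, norm_inv, Real.norm_of_nonneg hq.le, inv_mul_le_iff₀ hq]
    rw [mem_closedBall, dist_eq_norm] at hy
    linarith [hy]
  have hmem : α • (a + u) + β • (a + v) ∈ S :=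
    hstar _ hu' _ hv ⟨α, β, hα, hβ, hαβ, rfl⟩
  have hβ' : β = 1 - α := by linarith
  refine ⟨α • u + β • v, ?_, ?_⟩
  · convert hmem using 1
    rw [hβ']; module
  · rw [hyu, hβ']; module

lemma closure_MSC_subset {a : X} {p r0 : ℝ} {S : Set X} (hr0 : 0 < r0)
    (hball : closedBall a r0 ⊆ S)
    (hstar : ∀ y ∈ closedBall a r0, ∀ x ∈ S, segment ℝ y x ⊆ S)
    (hp0 : 0 < p) (hp1 : p < 1) : closure (MSC a p S) ⊆ S := by
  intro y hy
  have hε : (0:ℝ) < (1 - p) * r0 := mul_pos (by linarith) hr0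
  obtain ⟨z, hz, hdist⟩ := Metric.mem_closure_iff.1 hy _ hε
  obtain ⟨v, hv, rfl⟩ := hz
  set w := y - (a + p • v) with hw
  have hwn : ‖w‖ < (1 - p) * r0 := by
    rw [hw, ← dist_eq_norm]; exact hdist
  set y' := a + (1 - p)⁻¹ • w with hy'
  have h1p : (0:ℝ) < 1 - p := by linarith
  have hy'mem : y' ∈ closedBall a r0 := by
    rw [mem_closedBall, dist_eq_norm, hy']
    have : a + (1 - p)⁻¹ • w - a = (1 - p)⁻¹ • w := by abel
    rw [this, norm_smul, norm_inv, Real.norm_of_nonneg h1p.le, inv_mul_le_iff₀ h1p]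
    nlinarith [hwn]
  have : y = (1 - p) • y' + p • (a + v) := by
    rw [hy', hw, smul_add, smul_smul, mul_inv_cancel₀ h1p.ne']
    module
  rw [this]
  exact hstar y' hy'mem _ hv ⟨1 - p, p, h1p.le, hp0.le, by ring, rfl⟩

lemma closure_MSC_subset_MSC {a : X} {q q' r0 : ℝ} {S : Set X} (hr0 : 0 < r0)
    (hball : closedBall a r0 ⊆ S)
    (hstar : ∀ y ∈ closedBall a r0, ∀ x ∈ S, segment ℝ y x ⊆ S)
    (hq0 : 0 < q) (hqq' : q < q') (hq'1 : q' ≤ 1) :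
    closure (MSC a q S) ⊆ MSC a q' S := by
  have hq'0 : 0 < q' := lt_trans hq0 hqq'
  have h1 : MSC a q S = MSC a (q / q') (MSC a q' S) := (MSC_MSC hq'0.ne').symm
  rw [h1]
  exact closure_MSC_subset (mul_pos hq'0 hr0)
    (ball_subset_MSC hq'0 hball)
    (starlike_MSC hq'0 hstar)
    (div_pos hq0 hq'0) ((div_lt_one hq'0).2 hqq')

end AuxGeo


lemma nullpoints_null {X : Type*} [PseudoMetricSpace X] [SecondCountableTopology X]
    [MeasurableSpace X] (μ : Measure X) :
    μ {x : X | ∃ t > (0:ℝ), μ (closedBall x t) = 0} = 0 := by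
  set Z := {x : X | ∃ t > (0:ℝ), μ (closedBall x t) = 0} with hZ
  have hch : ∀ z : Z, ∃ t > (0:ℝ), μ (closedBall (z:X) t) = 0 := fun z => z.2
  choose t ht hμt using hch
  obtain ⟨T, hTc, hTeq⟩ := TopologicalSpace.isOpen_iUnion_countable
    (fun z : Z => ball (z : X) (t z)) (fun z => isOpen_ball)
  have hZsub : Z ⊆ ⋃ z ∈ T, ball (z:X) (t z) := by
    rw [hTeq]
    intro x hx
    exact mem_iUnion.2 ⟨⟨x, hx⟩, mem_ball_self (ht _)⟩
  refine measure_mono_null hZsub ?_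
  rw [measure_biUnion_null_iff hTc]
  intro z _
  exact measure_mono_null ball_subset_closedBall (hμt z)

lemma exists_eq_of_gaps {g h : ℝ → ℝ≥0∞} {q₁ q₂ : ℝ} (hq : q₁ < q₂)
    (hgh : ∀ q ∈ Ioo q₁ q₂, g q ≤ h q)
    (hmono : ∀ q ∈ Ioo q₁ q₂, ∀ q' ∈ Ioo q₁ q₂, q < q' → h q ≤ g q') :
    ∃ q ∈ Ioo q₁ q₂, g q = h q := by
  by_contra hcon
  push_neg at hcon
  have hlt : ∀ q ∈ Ioo q₁ q₂, g q < h q := fun q hq' =>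
    lt_of_le_of_ne (hgh q hq') (hcon q hq')
  have hginj : InjOn g (Ioo q₁ q₂) := by
    intro a ha b hb hab
    by_contra hne
    rcases lt_or_gt_of_ne hne with h1 | h1
    · exact absurd hab (ne_of_lt (lt_of_lt_of_le (hlt a ha) (hmono a ha b hb h1)))
    · exact absurd hab.symm (ne_of_lt (lt_of_lt_of_le (hlt b hb) (hmono b hb a ha h1)))
  set s : Set ℝ≥0∞ := g '' Ioo q₁ q₂ with hs
  set y : ℝ≥0∞ → ℝ≥0∞ := fun v => h (Function.invFunOn g (Ioo q₁ q₂) v) with hy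
  have hdd : ∀ {u v w z : ℝ≥0∞}, v ≤ w → Disjoint (Ioo u v) (Ioo w z) := by
    intro u v w z hvw
    rw [Set.disjoint_left]
    rintro p ⟨_, hp2⟩ ⟨hp3, _⟩
    exact absurd (hp2.trans_le hvw) (not_lt.2 hp3.le)
  have hsc : s.Countable := by
    refine Set.PairwiseDisjoint.countable_of_Ioo (y := y) ?_ ?_
    · rintro v hv w hw hvw
      obtain ⟨a, ha, rfl⟩ := hv
      obtain ⟨b, hb, rfl⟩ := hw
      have hfa : Function.invFunOn g (Ioo q₁ q₂) (g a) = a :=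
        hginj (Function.invFunOn_mem ⟨a, ha, rfl⟩) ha (Function.invFunOn_eq ⟨a, ha, rfl⟩)
      have hfb : Function.invFunOn g (Ioo q₁ q₂) (g b) = b :=
        hginj (Function.invFunOn_mem ⟨b, hb, rfl⟩) hb (Function.invFunOn_eq ⟨b, hb, rfl⟩)
      have hab : a ≠ b := fun hab => hvw (hab ▸ rfl)
      simp only [Function.onFun, hy, hfa, hfb]
      rcases lt_or_gt_of_ne hab with h1 | h1
      · exact hdd (hmono a ha b hb h1)
      · exact (hdd (hmono b hb a ha h1)).symm
    · rintro v ⟨a, ha, rfl⟩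
      have hfa : Function.invFunOn g (Ioo q₁ q₂) (g a) = a :=
        hginj (Function.invFunOn_mem ⟨a, ha, rfl⟩) ha (Function.invFunOn_eq ⟨a, ha, rfl⟩)
      rw [hy]; simp only [hfa]
      exact hlt a ha
  have : (Ioo q₁ q₂).Countable := Set.countable_of_injective_of_countable_image hginj hsc
  have hvol := this.measure_zero (volume : Measure ℝ)
  rw [Real.volume_Ioo] at hvol
  simp only [ENNReal.ofReal_eq_zero, not_le] at hvol
  linarith

lemma exists_doubling_interval {X : Type*} [PseudoMetricSpace X] [MeasurableSpace X]
    [OpensMeasurableSpace X] [ProperSpace X]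
    (μ : Measure X) [IsFiniteMeasureOnCompacts μ]
    {x : X} {K : ℝ} (hK : 1 ≤ K) {C₀ : ℝ≥0∞} (hC₀0 : C₀ ≠ 0) (hC₀top : C₀ ≠ ∞)
    (hx0 : ∀ t > (0:ℝ), μ (closedBall x t) ≠ 0)
    (hgood : ∀ r' > (0:ℝ), ∃ t, t ∈ Ioc (0:ℝ) r' ∧
      μ (closedBall x (K * t)) ≤ C₀ * μ (closedBall x t))
    {r' : ℝ} (hr' : 0 < r') :
    ∃ t₀ t₁ : ℝ, 0 < t₀ ∧ t₀ < t₁ ∧ t₁ ≤ r' ∧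
      ∀ t ∈ Ioo t₀ t₁, μ (closedBall x (K * t)) ≤ 2 * C₀ * μ (closedBall x t) := by
  have hK0 : (0:ℝ) < K := lt_of_lt_of_le one_pos hK
  obtain ⟨t₀, ht₀, hdbl⟩ := hgood (r'/2) (by positivity)
  have ht₀0 : 0 < t₀ := ht₀.1
  have hcont : Tendsto (fun s => μ (closedBall x (K * s))) (nhdsWithin t₀ (Ioi t₀))
      (nhds (μ (⋂ s ∈ Ioi t₀, closedBall x (K * s)))) := by
    refine tendsto_measure_biInter_gt (fun s _ => measurableSet_closedBall.nullMeasurableSet)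
      (fun i j hi hij => closedBall_subset_closedBall (by nlinarith)) ⟨t₀ + 1, by linarith, ?_⟩
    exact (isCompact_closedBall _ _).measure_lt_top.ne
  have hiInter : (⋂ s ∈ Ioi t₀, closedBall x (K * s)) = closedBall x (K * t₀) := by
    apply Subset.antisymm
    · intro y hy
      simp only [mem_iInter, mem_closedBall, mem_Ioi] at hy
      rw [mem_closedBall]
      refine le_of_forall_gt_imp_ge_of_dense fun b hb => ?_
      have : t₀ < b / K := by rw [lt_div_iff₀ hK0]; linarith [hb]
      have h2 := hy (b / K) this
      rw [mul_div_cancel₀ _ hK0.ne'] at h2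
      exact h2
    · intro y hy
      simp only [mem_iInter, mem_closedBall, mem_Ioi]
      intro s hs
      rw [mem_closedBall] at hy
      nlinarith
  rw [hiInter] at hcont
  have hfingt : μ (closedBall x t₀) ≠ 0 := hx0 t₀ ht₀0
  have hfin : μ (closedBall x t₀) ≠ ∞ := (isCompact_closedBall _ _).measure_lt_top.ne
  have hb0 : C₀ * μ (closedBall x t₀) ≠ 0 := mul_ne_zero hC₀0 hfingt
  have hbtop : C₀ * μ (closedBall x t₀) ≠ ∞ := ENNReal.mul_ne_top hC₀top hfin
  have hlt : μ (closedBall x (K * t₀)) < 2 * C₀ * μ (closedBall x t₀) := by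
    calc μ (closedBall x (K * t₀)) ≤ C₀ * μ (closedBall x t₀) := hdbl
    _ < C₀ * μ (closedBall x t₀) + C₀ * μ (closedBall x t₀) :=
        ENNReal.lt_add_right hbtop hb0
    _ = 2 * C₀ * μ (closedBall x t₀) := by ring
  have hev1 : ∀ᶠ s in nhdsWithin t₀ (Ioi t₀),
      μ (closedBall x (K * s)) < 2 * C₀ * μ (closedBall x t₀) :=
    hcont.eventually_lt_const hlt
  have hev2 : ∀ᶠ s in nhdsWithin t₀ (Ioi t₀), s < r' :=
    eventually_nhdsWithin_of_eventually_nhds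
      (eventually_of_mem (Iio_mem_nhds (by linarith [ht₀.2] : t₀ < r')) (fun s hs => hs))
  have hev3 : ∀ᶠ s in nhdsWithin t₀ (Ioi t₀), s ∈ Ioi t₀ := eventually_mem_nhdsWithin
  obtain ⟨t₁, ht₁a, ht₁b, ht₁c⟩ := (hev1.and (hev2.and hev3)).exists
  refine ⟨t₀, t₁, ht₀0, ht₁c, ht₁b.le, fun t ht => ?_⟩
  calc μ (closedBall x (K * t))
      ≤ μ (closedBall x (K * t₁)) :=
        measure_mono (closedBall_subset_closedBall (by nlinarith [ht.2]))
    _ ≤ 2 * C₀ * μ (closedBall x t₀) := ht₁a.le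
    _ ≤ 2 * C₀ * μ (closedBall x t) :=
        mul_le_mul_right (measure_mono (closedBall_subset_closedBall ht.1.le)) _


set_option maxHeartbeats 2000000 in
lemma bad_doubling_null {X : Type*} [NormedAddCommGroup X] [NormedSpace ℝ X]
    [FiniteDimensional ℝ X] [MeasurableSpace X] [OpensMeasurableSpace X]
    (μ : Measure X) [IsFiniteMeasureOnCompacts μ] {K : ℝ} (hK : 1 < K) :
    μ {x : X | ¬ ∀ r' > (0:ℝ), ∃ t, t ∈ Ioc (0:ℝ) r' ∧
        μ (closedBall x (K * t)) ≤
          ENNReal.ofReal (K ^ (Module.finrank ℝ X + 1)) * μ (closedBall x t)} = 0 := by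
  set n := Module.finrank ℝ X with hn
  have hK0 : (0:ℝ) < K := lt_trans one_pos hK
  set C₀ : ℝ≥0∞ := ENNReal.ofReal (K ^ (n + 1)) with hC₀
  have hC₀0 : C₀ ≠ 0 := by
    simp only [hC₀, ne_eq, ENNReal.ofReal_eq_zero, not_le]
    positivity
  have hC₀top : C₀ ≠ ∞ := ENNReal.ofReal_ne_top
  set Bad : ℕ → Set X := fun m =>
    {x | ∀ t ∈ Ioc (0:ℝ) (1/((m:ℝ)+1)), C₀ * μ (closedBall x t) < μ (closedBall x (K * t))}
    with hBad
  have hsub : {x : X | ¬ ∀ r' > (0:ℝ), ∃ t, t ∈ Ioc (0:ℝ) r' ∧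
      μ (closedBall x (K * t)) ≤ C₀ * μ (closedBall x t)} ⊆ ⋃ m, Bad m := by
    intro x hx
    simp only [mem_setOf_eq] at hx
    push_neg at hx
    obtain ⟨r', hr', hx⟩ := hx
    obtain ⟨m, hm⟩ := exists_nat_one_div_lt hr'
    refine mem_iUnion.2 ⟨m, fun t ht => ?_⟩
    exact hx t ⟨ht.1, ht.2.trans hm.le⟩
  refine measure_mono_null hsub ?_
  rw [measure_iUnion_null_iff]
  intro m
  have hsub2 : Bad m ⊆ ⋃ j : ℕ, Bad m ∩ closedBall 0 j := by
    intro x hx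
    obtain ⟨j, hj⟩ := exists_nat_ge ‖x‖
    exact mem_iUnion.2 ⟨j, hx, by simpa [mem_closedBall, dist_zero_right] using hj⟩
  refine measure_mono_null hsub2 ?_
  rw [measure_iUnion_null_iff]
  intro j
  -- fixed m, j
  set ρ : ℝ := 1/((m:ℝ)+1) with hρdef
  have hρ : 0 < ρ := by positivity
  have hρ1 : ρ ≤ 1 := by
    rw [hρdef, div_le_one (by positivity)]
    simp
  set F : Set X := Bad m ∩ closedBall 0 j with hF
  set M : ℝ≥0∞ := μ (closedBall (0:X) (j+1)) with hM
  have hMtop : M ≠ ∞ := (isCompact_closedBall _ _).measure_lt_top.ne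
  -- Step A : decay estimate
  have key : ∀ a ∈ F, ∀ t, t ∈ Ioc (0:ℝ) ρ →
      μ (closedBall a t) ≤ ENNReal.ofReal ((K * t / ρ) ^ (n+1)) * M := by
    rintro a ⟨haB, haj⟩
    have hmono : ∀ t, t ∈ Ioc (0:ℝ) ρ → μ (closedBall a t) ≤ M := by
      intro t ht
      refine measure_mono (closedBall_subset_closedBall' ?_)
      have hanorm : ‖a‖ ≤ (j:ℝ) := by simpa [mem_closedBall, dist_zero_right] using haj
      rw [dist_zero_right]
      linarith [ht.2, hρ1]
    have main : ∀ k : ℕ, ∀ t, ρ / K ^ (k+1) < t → t ∈ Ioc (0:ℝ) ρ →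
        μ (closedBall a t) ≤ ENNReal.ofReal ((K * t / ρ) ^ (n+1)) * M := by
      intro k
      induction k with
      | zero =>
        intro t hkt ht
        have h1 : (1:ℝ) ≤ K * t / ρ := by
          rw [pow_one] at hkt
          rw [le_div_iff₀ hρ, one_mul]
          rw [div_lt_iff₀ hK0] at hkt
          linarith
        calc μ (closedBall a t) ≤ M := hmono t ht
        _ = 1 * M := (one_mul M).symm
        _ ≤ ENNReal.ofReal ((K * t / ρ) ^ (n+1)) * M := by
            refine mul_le_mul_left ?_ M
            rw [show (1:ℝ≥0∞) = ENNReal.ofReal 1 by simp]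
            exact ENNReal.ofReal_le_ofReal (one_le_pow₀ h1)
      | succ k ih =>
        intro t hkt ht
        by_cases hcase : ρ / K ^ (k+1) < t
        · exact ih t hcase ht
        push_neg at hcase
        have hKt : K * t ∈ Ioc (0:ℝ) ρ := by
          constructor
          · exact mul_pos hK0 ht.1
          · have h3 : K * (ρ / K ^ (k+1)) = ρ / K ^ k := by
              rw [pow_succ]
              field_simp
            have h4 : ρ / K ^ k ≤ ρ := by
              rw [div_le_iff₀ (by positivity)]
              nlinarith [one_le_pow₀ hK.le (n := k), hρ]
            have h5 : K * t ≤ K * (ρ / K ^ (k+1)) :=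
              mul_le_mul_of_nonneg_left hcase hK0.le
            linarith [h3 ▸ h5]
        have h2 : ρ / K ^ (k+1) < K * t := by
          rw [div_lt_iff₀ (by positivity)] at hkt ⊢
          rw [pow_succ] at hkt
          nlinarith
        have hIH := ih (K*t) h2 hKt
        have hbad := haB t ⟨ht.1, by rw [← hρdef]; exact ht.2⟩
        have hstep : μ (closedBall a t) ≤ C₀⁻¹ * μ (closedBall a (K*t)) := by
          rw [← one_mul (μ (closedBall a t)), ← ENNReal.inv_mul_cancel hC₀0 hC₀top, mul_assoc]
          exact mul_le_mul_right hbad.le _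
        calc μ (closedBall a t)
            ≤ C₀⁻¹ * (ENNReal.ofReal ((K * (K*t) / ρ) ^ (n+1)) * M) :=
              hstep.trans (mul_le_mul_right hIH _)
          _ = ENNReal.ofReal ((K * t / ρ) ^ (n+1)) * M := by
              rw [← mul_assoc]
              congr 1
              have e1 : (K * (K*t) / ρ) ^ (n+1) = K ^ (n+1) * ((K * t / ρ) ^ (n+1)) := by
                rw [← mul_pow]
                congr 1
                field_simp
              rw [e1, ENNReal.ofReal_mul (by positivity), ← mul_assoc, ← hC₀,
                ENNReal.inv_mul_cancel hC₀0 hC₀top, one_mul]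
    intro t ht
    obtain ⟨k, hk⟩ : ∃ k : ℕ, ρ / K ^ (k+1) < t := by
      obtain ⟨k, hk⟩ := pow_unbounded_of_one_lt (ρ / t) hK
      refine ⟨k, ?_⟩
      rw [div_lt_iff₀ ht.1] at hk
      rw [div_lt_iff₀ (by positivity)]
      have h5 : K ^ k ≤ K ^ (k+1) := pow_le_pow_right₀ hK.le (Nat.le_succ k)
      nlinarith [ht.1, pow_pos hK0 k]
    exact main k t hk ht
  -- Step B : Besicovitch + Euclidean volume comparison
  set E' := EuclideanSpace ℝ (Fin n) with hE
  set e : X ≃L[ℝ] E' := toEuclidean with he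
  set c : ℝ := max ‖(e.symm : E' →L[ℝ] X)‖ 1 with hc
  have hc1 : (1:ℝ) ≤ c := le_max_right _ _
  have hc0 : (0:ℝ) < c := lt_of_lt_of_le one_pos hc1
  set V : ℝ≥0∞ := volume (closedBall (0:E') 1) with hV
  have hV0 : V ≠ 0 := (measure_closedBall_pos _ _ one_pos).ne'
  have hVtop : V ≠ ∞ := (isCompact_closedBall _ _).measure_lt_top.ne
  set R : ℝ := ‖(e : X →L[ℝ] E')‖ * j + 1 with hR
  set W : ℝ≥0∞ := volume (closedBall (0:E') R) with hW
  have hWtop : W ≠ ∞ := (isCompact_closedBall _ _).measure_lt_top.ne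
  have hvol : ∀ (x : X) (t : ℝ), 0 ≤ t →
      volume (closedBall (e x) (t / c)) = ENNReal.ofReal ((t/c) ^ n) * V := by
    intro x t ht
    rw [Measure.addHaar_closedBall' _ _ (by positivity)]
    have hfr : Module.finrank ℝ E' = n := finrank_euclideanSpace_fin
    rw [hfr]
  have hsmall : ∀ (x : X) (t : ℝ), closedBall (e x) (t / c) ⊆ e '' closedBall x t := by
    intro x t y hy
    refine ⟨e.symm y, ?_, by simp⟩
    rw [mem_closedBall, dist_eq_norm]
    have h0 : e.symm y - x = e.symm (y - e x) := by simp [map_sub]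
    rw [h0]
    calc ‖e.symm (y - e x)‖ ≤ ‖(e.symm : E' →L[ℝ] X)‖ * ‖y - e x‖ :=
          (e.symm : E' →L[ℝ] X).le_opNorm _
    _ ≤ c * (t / c) := by
        refine mul_le_mul (le_max_left _ _) ?_ (norm_nonneg _) hc0.le
        rw [← dist_eq_norm]; exact hy
    _ = t := by field_simp
  set L : ℝ≥0∞ := ENNReal.ofReal ((K / ρ) ^ (n+1)) * ENNReal.ofReal (c ^ n) * V⁻¹ * M * W
    with hL
  have hLtop : L ≠ ∞ := by
    rw [hL]
    exact ENNReal.mul_ne_top (ENNReal.mul_ne_top (ENNReal.mul_ne_top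
      (ENNReal.mul_ne_top ENNReal.ofReal_ne_top ENNReal.ofReal_ne_top)
      (ENNReal.inv_ne_top.2 hV0)) hMtop) hWtop
  have est : ∀ d : ℝ, 0 < d → d ≤ ρ → μ F ≤ ENNReal.ofReal d * L := by
    intro d hd0 hdρ
    obtain ⟨t, htc, htF, htr, htnull, htdisj⟩ :=
      Besicovitch.exists_disjoint_closedBall_covering_ae_aux μ (fun _ => Ioo 0 d) F
        (fun x _ δ hδ => ⟨min d δ / 2,
          ⟨⟨by positivity, by nlinarith [min_le_left d δ]⟩,
           ⟨by positivity, by nlinarith [min_le_right d δ]⟩⟩⟩)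
    have h1 : μ F ≤ μ (F \ (⋃ p ∈ t, closedBall p.1 p.2)) + μ (⋃ p ∈ t, closedBall p.1 p.2) := by
      refine le_trans (measure_mono (fun x hx => ?_)) (measure_union_le _ _)
      by_cases h : x ∈ ⋃ p ∈ t, closedBall p.1 p.2
      · exact Or.inr h
      · exact Or.inl ⟨hx, h⟩
    rw [htnull, zero_add] at h1
    have h2 : μ (⋃ p ∈ t, closedBall p.1 p.2) ≤
        ∑' p : ↥t, μ (closedBall (p : X × ℝ).1 (p : X × ℝ).2) :=
      measure_biUnion_le μ htc _
    set A : ℝ≥0∞ := ENNReal.ofReal ((K/ρ)^(n+1)) * ENNReal.ofReal d * ENNReal.ofReal (c^n) * V⁻¹ * M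
      with hAdef
    have h3 : ∀ p ∈ t, μ (closedBall (p : X × ℝ).1 (p : X × ℝ).2) ≤
        A * volume (closedBall (e (p : X × ℝ).1) ((p : X × ℝ).2 / c)) := by
      intro p hp
      have hpF : p.1 ∈ F := htF p hp
      have hp2 : p.2 ∈ Ioo (0:ℝ) d := htr p hp
      have hp2pos : 0 < p.2 := hp2.1
      have hp2d : p.2 ≤ d := hp2.2.le
      have hreal : (K * p.2 / ρ) ^ (n+1) ≤ (K/ρ)^(n+1) * d * (c^n * (p.2/c)^n) := by
        have e1 : K * p.2 / ρ = (K/ρ) * p.2 := by ring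
        have e2 : c^n * (p.2/c)^n = p.2^n := by
          rw [← mul_pow]
          congr 1
          field_simp
        rw [e1, mul_pow, e2, pow_succ p.2 n]
        have hP : (0:ℝ) ≤ (K/ρ)^(n+1) := by positivity
        have hpn : (0:ℝ) ≤ p.2 ^ n := by positivity
        nlinarith [mul_nonneg hP hpn]
      have h4 : ENNReal.ofReal ((p.2/c)^n) =
          volume (closedBall (e p.1) (p.2/c)) * V⁻¹ := by
        rw [hvol p.1 p.2 hp2pos.le, mul_assoc, ENNReal.mul_inv_cancel hV0 hVtop, mul_one]
      calc μ (closedBall p.1 p.2)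
          ≤ ENNReal.ofReal ((K * p.2 / ρ) ^ (n+1)) * M :=
            key p.1 hpF p.2 ⟨hp2pos, hp2d.trans hdρ⟩
        _ ≤ ENNReal.ofReal ((K/ρ)^(n+1) * d * (c^n * (p.2/c)^n)) * M :=
            mul_le_mul_left (ENNReal.ofReal_le_ofReal hreal) M
        _ = ENNReal.ofReal ((K/ρ)^(n+1)) * ENNReal.ofReal d *
              (ENNReal.ofReal (c^n) * ENNReal.ofReal ((p.2/c)^n)) * M := by
            rw [ENNReal.ofReal_mul (by positivity), ENNReal.ofReal_mul (by positivity),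
              ENNReal.ofReal_mul (by positivity)]
        _ = A * volume (closedBall (e p.1) (p.2/c)) := by
            rw [h4, hAdef]
            ring
    have hdisj2 : t.PairwiseDisjoint
        (fun p : X × ℝ => closedBall (e p.1) (p.2 / c)) := by
      intro p hp q hq hpq
      refine Disjoint.mono (hsmall p.1 p.2) (hsmall q.1 q.2) ?_
      exact Set.disjoint_image_of_injective e.injective (htdisj hp hq hpq)
    have h6 : ∑' p : ↥t, volume (closedBall (e (p : X × ℝ).1) ((p : X × ℝ).2 / c)) =
        volume (⋃ p ∈ t, closedBall (e p.1) (p.2 / c)) :=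
      (measure_biUnion htc hdisj2 (fun p _ => measurableSet_closedBall)).symm
    have h7 : volume (⋃ p ∈ t, closedBall (e p.1) (p.2 / c)) ≤ W := by
      refine measure_mono (iUnion₂_subset fun p hp => fun y hy => ?_)
      have hp1 : p.1 ∈ F := htF p hp
      have hp2 : p.2 ∈ Ioo (0:ℝ) d := htr p hp
      have hnorm : ‖p.1‖ ≤ (j:ℝ) := by
        simpa [mem_closedBall, dist_zero_right] using hp1.2
      have hen : ‖e p.1‖ ≤ ‖(e : X →L[ℝ] E')‖ * j := by
        calc ‖e p.1‖ = ‖(e : X →L[ℝ] E') p.1‖ := rfl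
        _ ≤ ‖(e : X →L[ℝ] E')‖ * ‖p.1‖ := (e : X →L[ℝ] E').le_opNorm _
        _ ≤ ‖(e : X →L[ℝ] E')‖ * j := by
            nlinarith [norm_nonneg (e : X →L[ℝ] E')]
      have hyd : dist y (e p.1) ≤ p.2 / c := hy
      have hpc : p.2 / c ≤ 1 := by
        rw [div_le_one hc0]
        nlinarith [hp2.2, hdρ, hρ1, hc1]
      rw [mem_closedBall]
      calc dist y 0 ≤ dist y (e p.1) + dist (e p.1) 0 := dist_triangle _ _ _
      _ ≤ p.2 / c + ‖e p.1‖ := by rw [dist_zero_right]; exact add_le_add hyd le_rfl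
      _ ≤ 1 + ‖(e : X →L[ℝ] E')‖ * j := add_le_add hpc hen
      _ = R := by rw [hR]; ring
    calc μ F ≤ ∑' p : ↥t, μ (closedBall (p : X × ℝ).1 (p : X × ℝ).2) := h1.trans h2
    _ ≤ ∑' p : ↥t, A * volume (closedBall (e (p : X × ℝ).1) ((p : X × ℝ).2 / c)) :=
        ENNReal.tsum_le_tsum fun p => h3 p p.2
    _ = A * ∑' p : ↥t, volume (closedBall (e (p : X × ℝ).1) ((p : X × ℝ).2 / c)) :=
        ENNReal.tsum_mul_left
    _ ≤ A * W := by rw [h6]; exact mul_le_mul_right h7 A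
    _ = ENNReal.ofReal d * L := by rw [hAdef, hL]; ring
  have hlim : Tendsto (fun k : ℕ => ENNReal.ofReal (ρ/((k:ℝ)+1)) * L) atTop (nhds 0) := by
    have h0 : Tendsto (fun k : ℕ => ρ/((k:ℝ)+1)) atTop (nhds 0) := by
      have h := tendsto_one_div_add_atTop_nhds_zero_nat.const_mul ρ
      simpa [mul_one_div, div_eq_mul_inv] using h
    have h1 : Tendsto (fun k : ℕ => ENNReal.ofReal (ρ/((k:ℝ)+1))) atTop (nhds 0) := by
      rw [show (0:ℝ≥0∞) = ENNReal.ofReal 0 by simp]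
      exact (ENNReal.continuous_ofReal.tendsto 0).comp h0
    simpa using ENNReal.Tendsto.mul_const h1 (Or.inr hLtop)
  have hle : ∀ k : ℕ, μ F ≤ ENNReal.ofReal (ρ/((k:ℝ)+1)) * L := by
    intro k
    refine est (ρ/((k:ℝ)+1)) (by positivity) ?_
    rw [div_le_iff₀ (by positivity)]
    nlinarith [hρ]
  have : μ F ≤ 0 := ge_of_tendsto' hlim hle
  exact le_antisymm this zero_le



set_option maxHeartbeats 2000000 in
/-- A fine, measurable, `λ`-Morse cover `𝒮` of an open set `Ω` that is *scaled*
(for each `S(a) ∈ 𝒮` and `p ∈ (0,1]`, the set `S^(p)(a) = {a + p·x : a + x ∈ S(a)}`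
is also in `𝒮`, with tag `a`) is a `μ`-a.e. `λ`-Morse cover of `Ω`. -/
theorem isAEMorseCover_of_scaled
    {X : Type*} [NormedAddCommGroup X] [NormedSpace ℝ X] [FiniteDimensional ℝ X]
    [MeasurableSpace X] [OpensMeasurableSpace X]
    (μ : Measure X) [μ.Regular] [μ.IsComplete]
    (lam : ℝ) (hlam : 1 ≤ lam) (Ω : Set X) (hΩ : IsOpen Ω)
    (𝒮 : Set (X × Set X)) (h𝒮 : IsFineMorseCover lam Ω 𝒮)
    (hscaled : ∀ p ∈ 𝒮, ∀ q ∈ Set.Ioc (0:ℝ) 1,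
      (p.1, {y : X | ∃ x : X, p.1 + x ∈ p.2 ∧ y = p.1 + q • x}) ∈ 𝒮) :
    IsAEMorseCover μ lam Ω 𝒮 := by
  classical
  refine ⟨h𝒮, ?_⟩
  intro U hUopen hUne hUΩ δ hδ
  have hlam0 : (0:ℝ) < lam := lt_of_lt_of_le one_pos hlam
  set K : ℝ := 6 * lam with hKdef
  have hK1 : (1:ℝ) < K := by rw [hKdef]; linarith
  have hK0 : (0:ℝ) < K := by linarith
  set C₀ : ℝ≥0∞ := ENNReal.ofReal (K ^ (Module.finrank ℝ X + 1)) with hC₀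
  have hC₀0 : C₀ ≠ 0 := by
    simp only [hC₀, ne_eq, ENNReal.ofReal_eq_zero, not_le]
    positivity
  have hC₀top : C₀ ≠ ∞ := ENNReal.ofReal_ne_top
  set C : ℝ≥0 := (2 * K ^ (Module.finrank ℝ X + 1)).toNNReal with hCdef
  have hCeq : (C : ℝ≥0∞) = 2 * C₀ := by
    have h1 : (C : ℝ≥0∞) = ENNReal.ofReal (2 * K ^ (Module.finrank ℝ X + 1)) := rfl
    rw [h1, ENNReal.ofReal_mul (by norm_num), hC₀, ENNReal.ofReal_ofNat]
  set G1 : Set X := {x : X | ∀ r' > (0:ℝ), ∃ t, t ∈ Ioc (0:ℝ) r' ∧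
      μ (closedBall x (K * t)) ≤ C₀ * μ (closedBall x t)} with hG1
  set G2 : Set X := {x : X | ∀ t > (0:ℝ), μ (closedBall x t) ≠ 0} with hG2
  have hbad1 : μ G1ᶜ = 0 := by
    have h := bad_doubling_null μ hK1
    refine measure_mono_null ?_ h
    intro z hz
    simpa [hG1, hC₀] using hz
  have hbad2 : μ G2ᶜ = 0 := by
    refine measure_mono_null ?_ (nullpoints_null μ)
    intro z hz
    simp only [hG2, mem_compl_iff, mem_setOf_eq] at hz
    push_neg at hz
    simpa using hz
  set s : Set X := U ∩ (G1 ∩ G2) with hs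
  set 𝒯 : Set (X × Set X × ℝ) := {p | (p.1, p.2.1) ∈ 𝒮 ∧ p.2.1 ⊆ U ∧
      p.2.1 ⊆ closedBall p.1 (δ p.1) ∧
      closure p.2.1 ⊆ closedBall p.1 p.2.2 ∧
      μ (closedBall p.1 (3 * p.2.2)) ≤ (C : ℝ≥0∞) * μ (closure p.2.1) ∧
      (interior (closure p.2.1)).Nonempty ∧
      μ (closure p.2.1 \ p.2.1) = 0} with h𝒯
  have hfine : ∀ x ∈ s, ∀ ε > (0:ℝ), ∃ p ∈ 𝒯, p.2.2 ≤ ε ∧ p.1 = x := by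
    rintro x ⟨hxU, hxG1, hxG2⟩ ε hε
    obtain ⟨η, hη0, hηU⟩ := Metric.isOpen_iff.1 hUopen x hxU
    have hδx := hδ x hxU
    set ε' : ℝ := min η (min (δ x) ε) with hε'
    have hε'0 : 0 < ε' := lt_min hη0 (lt_min hδx.1 hε)
    obtain ⟨S, hS𝒮, hSdiam⟩ := h𝒮.2 x (hUΩ hxU) ε' hε'0
    obtain ⟨r0, hr0, hball, hsubball, hstar⟩ := (h𝒮.1 _ hS𝒮).1
    have hxS : x ∈ S := hball (mem_closedBall_self hr0.le)
    have hbddS : Bornology.IsBounded S := Metric.isBounded_closedBall.subset hsubball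
    set d : ℝ := diam S with hd
    have hSsub : S ⊆ closedBall x d := fun y hy =>
      mem_closedBall.2 (dist_le_diam_of_mem hbddS hy hxS)
    have hdnn : 0 ≤ d := diam_nonneg
    have hdlam : d ≤ 2 * (lam * r0) := by
      calc d ≤ diam (closedBall x (lam * r0)) := diam_mono hsubball Metric.isBounded_closedBall
      _ ≤ 2 * (lam * r0) := diam_closedBall (by positivity)
    have hSU : S ⊆ U := by
      intro y hy
      refine hηU (mem_ball.2 ?_)
      calc dist y x ≤ d := mem_closedBall.1 (hSsub hy)
      _ < ε' := hSdiam
      _ ≤ η := min_le_left _ _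
    have hSδ : S ⊆ closedBall x (δ x) := by
      intro y hy
      rw [mem_closedBall]
      calc dist y x ≤ d := mem_closedBall.1 (hSsub hy)
      _ ≤ δ x := le_trans hSdiam.le (le_trans (min_le_right _ _) (min_le_left _ _))
    obtain ⟨t₀, t₁, ht₀0, ht₀₁, ht₁r, hdbl⟩ :=
      exists_doubling_interval μ hK1.le hC₀0 hC₀top hxG2 hxG1 hr0
    have hII : t₀ / r0 < t₁ / r0 := div_lt_div_of_pos_right ht₀₁ hr0
    obtain ⟨q, hqI, hqeq⟩ := exists_eq_of_gaps (g := fun q => μ (MSC x q S))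
      (h := fun q => μ (closure (MSC x q S))) hII
      (fun q _ => measure_mono subset_closure)
      (fun q hq q' hq' hqq' => by
        refine measure_mono (closure_MSC_subset_MSC hr0 hball hstar ?_ hqq' ?_)
        · exact lt_trans (div_pos ht₀0 hr0) hq.1
        · exact le_of_lt (lt_of_lt_of_le hq'.2 ((div_le_one hr0).2 ht₁r)))
    have hq0 : 0 < q := lt_trans (div_pos ht₀0 hr0) hqI.1
    have hq1 : q < 1 := lt_of_lt_of_le hqI.2 ((div_le_one hr0).2 ht₁r)
    have hqr0 : q * r0 ∈ Ioo t₀ t₁ :=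
      ⟨(div_lt_iff₀ hr0).1 hqI.1, (lt_div_iff₀ hr0).1 hqI.2⟩
    set Z : Set X := MSC x q S with hZ
    have hZ𝒮 : (x, Z) ∈ 𝒮 := hscaled (x, S) hS𝒮 q ⟨hq0, hq1.le⟩
    have hZmeas : MeasurableSet Z := (h𝒮.1 _ hZ𝒮).2.1
    have hZS : Z ⊆ S := MSC_subset hr0 hball hstar hq0.le hq1.le
    have hZball : Z ⊆ closedBall x (q * d) := MSC_subset_ball hq0.le hSsub
    have hclosZ : closure Z ⊆ closedBall x (q * d) :=
      closure_minimal hZball isClosed_closedBall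
    have hfinZ : μ Z ≠ ∞ := by
      refine ne_top_of_le_ne_top (isCompact_closedBall x (lam * r0)).measure_lt_top.ne
        (measure_mono ?_)
      exact hZS.trans hsubball
    refine ⟨(x, Z, q * d), ⟨hZ𝒮, hZS.trans hSU, hZS.trans hSδ, hclosZ, ?_, ?_, ?_⟩, ?_, rfl⟩
    · -- doubling
      have hstep1 : closedBall x (3 * (q * d)) ⊆ closedBall x (K * (q * r0)) := by
        refine closedBall_subset_closedBall ?_
        rw [hKdef]
        nlinarith [hq0.le, hdlam, hdnn]
      have hstep2 := hdbl (q * r0) hqr0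
      have hstep3 : μ (closedBall x (q * r0)) ≤ μ Z :=
        measure_mono (ball_subset_MSC hq0 hball)
      calc μ (closedBall x (3 * (q * d))) ≤ μ (closedBall x (K * (q * r0))) :=
            measure_mono hstep1
      _ ≤ 2 * C₀ * μ (closedBall x (q * r0)) := hstep2
      _ ≤ 2 * C₀ * μ Z := mul_le_mul_right hstep3 _
      _ ≤ 2 * C₀ * μ (closure Z) := mul_le_mul_right (measure_mono subset_closure) _
      _ = (C : ℝ≥0∞) * μ (closure Z) := by rw [hCeq]
    · -- interior nonempty
      refine ⟨x, mem_interior.2 ⟨ball x (q * r0), ?_, isOpen_ball, mem_ball_self (by positivity)⟩⟩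
      exact (ball_subset_closedBall.trans (ball_subset_MSC hq0 hball)).trans subset_closure
    · -- null boundary
      have hdiff := measure_diff (subset_closure (s := Z)) hZmeas.nullMeasurableSet hfinZ
      rw [hdiff, ← hqeq]
      exact tsub_self _
    · -- radius small
      have : q * d ≤ d := by nlinarith [hdnn]
      refine le_trans this (le_trans hSdiam.le ?_)
      exact le_trans (min_le_right _ _) (min_le_right _ _)
  obtain ⟨u, hu𝒯, huc, hudisj, hucov⟩ :=
    Vitali.exists_disjoint_covering_ae μ s 𝒯 C (fun p => p.2.2) (fun p => p.1)
      (fun p => closure p.2.1)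
      (fun p hp => hp.2.2.2.1)
      (fun p hp => hp.2.2.2.2.1)
      (fun p hp => hp.2.2.2.2.2.1)
      (fun p _ => isClosed_closure)
      hfine
  obtain ⟨f, hfinj⟩ := Set.countable_iff_exists_injective.1 huc
  set T : ℕ → X × Set X := fun i =>
    if hex : ∃ p : ↥u, f p = i then
      ((hex.choose : X × Set X × ℝ).1, (hex.choose : X × Set X × ℝ).2.1)
    else (0, ∅) with hT
  set I : Set ℕ := range f with hI
  have hTspec : ∀ p : ↥u, T (f p) = ((p : X × Set X × ℝ).1, (p : X × Set X × ℝ).2.1) := by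
    intro p
    have hex : ∃ q : ↥u, f q = f p := ⟨p, rfl⟩
    simp only [hT]
    rw [dif_pos hex]
    have he : hex.choose = p := hfinj hex.choose_spec
    rw [he]
  refine ⟨I, T, ⟨?_, ?_, ?_⟩, ?_⟩
  · rintro i ⟨p, rfl⟩
    rw [hTspec p]
    exact (hu𝒯 p.2).1
  · rintro i ⟨p, rfl⟩ j ⟨p', rfl⟩ hij
    have hpp' : p ≠ p' := fun h => hij (by rw [h])
    rw [hTspec p, hTspec p']
    have hd := hudisj p.2 p'.2 (Subtype.coe_injective.ne hpp')
    exact hd.mono subset_closure subset_closure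
  · have hUnion : (⋃ i ∈ I, (T i).2) = ⋃ p ∈ u, p.2.1 := by
      apply Subset.antisymm
      · refine iUnion₂_subset fun i hi => ?_
        obtain ⟨p, rfl⟩ := hi
        rw [hTspec p]
        exact subset_biUnion_of_mem (u := fun p : X × Set X × ℝ => p.2.1) p.2
      · refine iUnion₂_subset fun p hp => ?_
        intro y hy
        have hmem : f ⟨p, hp⟩ ∈ I := ⟨⟨p, hp⟩, rfl⟩
        refine mem_biUnion hmem ?_
        rw [hTspec ⟨p, hp⟩]
        exact hy
    rw [hUnion]
    have hsplit : U \ ⋃ p ∈ u, p.2.1 ⊆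
        (G1 ∩ G2)ᶜ ∪ ((s \ ⋃ p ∈ u, closure p.2.1) ∪ ⋃ p ∈ u, (closure p.2.1 \ p.2.1)) := by
      intro z hz
      by_cases h1 : z ∈ G1 ∩ G2
      · by_cases h2 : z ∈ ⋃ p ∈ u, closure p.2.1
        · obtain ⟨p, hp, hzp⟩ := mem_iUnion₂.1 h2
          exact Or.inr (Or.inr (mem_biUnion hp ⟨hzp, fun hc => hz.2 (mem_biUnion hp hc)⟩))
        · exact Or.inr (Or.inl ⟨⟨hz.1, h1⟩, h2⟩)
      · exact Or.inl h1
    refine measure_mono_null hsplit ?_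
    refine measure_union_null ?_ (measure_union_null hucov ?_)
    · rw [compl_inter]
      exact measure_union_null hbad1 hbad2
    · rw [measure_biUnion_null_iff huc]
      intro p hp
      exact (hu𝒯 hp).2.2.2.2.2.2
  · rintro i ⟨p, rfl⟩
    rw [hTspec p]
    exact ⟨(hu𝒯 p.2).2.1, (hu𝒯 p.2).2.2.1⟩
end

section
/- Let 𝒮 be a μ-a.e. λ-Morse cover of an open set Ω ⊆ X, Y a Banach space, and f : Ω → Y μ-measurable. Then μ-almost every point of Ω is a point of approximate continuity of f. -/
open MeasureTheory Set Metric Filter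
open scoped ENNReal NNReal

/-- Packing lemma: in a finite-dimensional normed space, any finite `c`-separated
subset of the ball of radius `R` has uniformly bounded cardinality. -/
lemma morse_pack {X : Type*} [NormedAddCommGroup X] [NormedSpace ℝ X]
    [FiniteDimensional ℝ X] (c R : ℝ) (hc : 0 < c) :
    ∃ N : ℕ, 1 ≤ N ∧ ∀ G : Finset X, (∀ y ∈ G, ‖y‖ ≤ R) →
      (∀ y ∈ G, ∀ z ∈ G, y ≠ z → c < dist y z) → G.card ≤ N := by
  classical
  have hcomp : IsCompact (closedBall (0:X) R) := isCompact_closedBall 0 R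
  obtain ⟨t, htfin, hcov⟩ :=
    Metric.totallyBounded_iff.mp hcomp.totallyBounded (c/2) (half_pos hc)
  refine ⟨htfin.toFinset.card + 1, by omega, ?_⟩
  intro G hGR hGsep
  have hmap : ∀ y ∈ G, ∃ z, z ∈ htfin.toFinset ∧ y ∈ ball z (c/2) := by
    intro y hy
    have : y ∈ ⋃ z ∈ t, ball z (c/2) := hcov (by simpa [mem_closedBall, dist_zero_right] using hGR y hy)
    simp only [mem_iUnion, exists_prop] at this
    obtain ⟨z, hz, hyz⟩ := this
    exact ⟨z, htfin.mem_toFinset.mpr hz, hyz⟩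
  choose! φ hφt hφb using hmap
  have : G.card ≤ htfin.toFinset.card := by
    refine Finset.card_le_card_of_injOn φ (fun y hy => hφt y hy) ?_
    intro y hy z hz hyz
    by_contra hne
    have h1 := hφb y hy
    have h2 := hφb z hz
    rw [mem_ball] at h1 h2
    rw [hyz] at h1
    have h2' : dist (φ z) z < c/2 := by rwa [dist_comm]
    have htri : dist y z ≤ dist y (φ z) + dist (φ z) z := dist_triangle y (φ z) z
    have : dist y z < c := by linarith
    exact absurd (hGsep y hy z hz hne) (by linarith)
  omega

/-- Cone lemma for Morse sets. -/
lemma morse_cone_s4 {X : Type*} [NormedAddCommGroup X] [NormedSpace ℝ X]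
    {S : Set X} {a x b : X} {r : ℝ} (hr : 0 < r)
    (hB : closedBall a r ⊆ S)
    (hstar : ∀ y ∈ closedBall a r, ∀ z ∈ S, segment ℝ y z ⊆ S)
    (hx : x ∈ S) (hb : b ∉ S) (hle : dist b x ≤ dist a x) (hax : a ≠ x) :
    r / dist a x < ‖‖b - x‖⁻¹ • (b - x) - ‖a - x‖⁻¹ • (a - x)‖ := by
  have hbx : b ≠ x := fun h => hb (h ▸ hx)
  have hda : (0:ℝ) < ‖a - x‖ := by
    simpa [norm_pos_iff, sub_ne_zero] using hax
  have hdb : (0:ℝ) < ‖b - x‖ := by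
    simpa [norm_pos_iff, sub_ne_zero] using hbx
  set t : ℝ := ‖b - x‖ / ‖a - x‖ with ht
  have ht0 : 0 < t := div_pos hdb hda
  have ht1 : t ≤ 1 := by
    rw [div_le_one hda]
    simpa [dist_eq_norm] using hle
  set q : X := x + t • (a - x) with hq
  have hkey : t * r < ‖b - q‖ := by
    by_contra hcon
    push_neg at hcon
    -- y := a + t⁻¹ • (b - q) lies in the closed ball
    set y : X := a + t⁻¹ • (b - q) with hy
    have hymem : y ∈ closedBall a r := by
      rw [mem_closedBall, dist_eq_norm]
      have : y - a = t⁻¹ • (b - q) := by rw [hy]; abel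
      rw [this, norm_smul, Real.norm_eq_abs, abs_of_pos (inv_pos.mpr ht0)]
      rw [inv_mul_le_iff₀ ht0]
      linarith [hcon]
    have hbseg : b ∈ segment ℝ y x := by
      refine ⟨t, 1 - t, le_of_lt ht0, by linarith, by ring, ?_⟩
      rw [hy, hq]
      have hne : t ≠ 0 := ne_of_gt ht0
      rw [smul_add, smul_smul, mul_inv_cancel₀ hne, one_smul]
      module
    exact hb (hstar y hymem x hx hbseg)
  -- conclude
  have hmul : ‖b - x‖⁻¹ * t = ‖a - x‖⁻¹ := by
    rw [ht]; field_simp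
  have hcalc : ‖b - x‖⁻¹ • (b - x) - ‖a - x‖⁻¹ • (a - x)
      = ‖b - x‖⁻¹ • (b - q) := by
    have hbq : b - q = (b - x) - t • (a - x) := by rw [hq]; abel
    rw [hbq, ← hmul]
    module
  rw [hcalc, norm_smul, Real.norm_eq_abs, abs_of_pos (inv_pos.mpr hdb)]
  rw [dist_eq_norm]
  rw [div_lt_iff₀ hda]
  have : r * ‖a - x‖⁻¹ * ‖b - x‖ < ‖b - q‖ := by
    have : r * ‖a - x‖⁻¹ * ‖b - x‖ = t * r := by rw [ht]; field_simp
    rw [this]; exact hkey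
  calc r = (r * ‖a - x‖⁻¹ * ‖b - x‖) * (‖b - x‖⁻¹ * ‖a - x‖) := by field_simp
    _ < ‖b - q‖ * (‖b - x‖⁻¹ * ‖a - x‖) := by
        apply mul_lt_mul_of_pos_right this
        positivity
    _ = ‖b - x‖⁻¹ * ‖b - q‖ * ‖a - x‖ := by ring

/-- Erdős–Szekeres-type counting: if all "non-increasing chains" have size `≤ p` and all
"strictly increasing chains" have size `≤ q`, the whole finite index set has size `≤ p*q`. -/
lemma es_count (F : Finset ℕ) (d : ℕ → ℝ) (p q : ℕ)
    (hp : ∀ G : Finset ℕ, G ⊆ F → (∀ k ∈ G, ∀ l ∈ G, k < l → d l ≤ d k) → G.card ≤ p)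
    (hq : ∀ G : Finset ℕ, G ⊆ F → (∀ k ∈ G, ∀ l ∈ G, k < l → d k < d l) → G.card ≤ q) :
    F.card ≤ p * q := by
  classical
  set PA : ℕ → Finset ℕ → Prop := fun k G =>
    k ∈ G ∧ (∀ j ∈ G, j ≤ k) ∧ ∀ i ∈ G, ∀ j ∈ G, i < j → d j ≤ d i with hPA
  set PB : ℕ → Finset ℕ → Prop := fun k G =>
    k ∈ G ∧ (∀ j ∈ G, j ≤ k) ∧ ∀ i ∈ G, ∀ j ∈ G, i < j → d i < d j with hPB
  set FA : ℕ → Finset (Finset ℕ) := fun k => F.powerset.filter (PA k) with hFA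
  set FB : ℕ → Finset (Finset ℕ) := fun k => F.powerset.filter (PB k) with hFB
  set A : ℕ → ℕ := fun k => (FA k).sup Finset.card with hA
  set B : ℕ → ℕ := fun k => (FB k).sup Finset.card with hB
  have hAeq : ∀ k, A k = (FA k).sup Finset.card := fun k => by rw [hA]
  have hBeq : ∀ k, B k = (FB k).sup Finset.card := fun k => by rw [hB]
  have hFAmem : ∀ k G, G ∈ FA k ↔ (G ⊆ F ∧ PA k G) := by
    intro k G; rw [hFA]; simp [Finset.mem_filter, Finset.mem_powerset]
  have hFBmem : ∀ k G, G ∈ FB k ↔ (G ⊆ F ∧ PB k G) := by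
    intro k G; rw [hFB]; simp [Finset.mem_filter, Finset.mem_powerset]
  have hsA : ∀ k ∈ F, {k} ∈ FA k := by
    intro k hk
    rw [hFAmem]
    refine ⟨by simpa using hk, Finset.mem_singleton_self k,
      fun j hj => le_of_eq (Finset.mem_singleton.mp hj), ?_⟩
    intro i hi j hj hij
    rw [Finset.mem_singleton.mp hi, Finset.mem_singleton.mp hj] at hij
    omega
  have hsB : ∀ k ∈ F, {k} ∈ FB k := by
    intro k hk
    rw [hFBmem]
    refine ⟨by simpa using hk, Finset.mem_singleton_self k,
      fun j hj => le_of_eq (Finset.mem_singleton.mp hj), ?_⟩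
    intro i hi j hj hij
    rw [Finset.mem_singleton.mp hi, Finset.mem_singleton.mp hj] at hij
    omega
  have hA1 : ∀ k ∈ F, 1 ≤ A k := by
    intro k hk
    have h1 : ({k} : Finset ℕ).card ≤ (FA k).sup Finset.card :=
      Finset.le_sup (hsA k hk)
    rw [← hAeq k] at h1
    simpa using h1
  have hB1 : ∀ k ∈ F, 1 ≤ B k := by
    intro k hk
    have h1 : ({k} : Finset ℕ).card ≤ (FB k).sup Finset.card :=
      Finset.le_sup (hsB k hk)
    rw [← hBeq k] at h1
    simpa using h1
  have hAp : ∀ k, A k ≤ p := by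
    intro k
    rw [hAeq]
    refine Finset.sup_le fun G hG => ?_
    rw [hFAmem] at hG
    exact hp G hG.1 hG.2.2.2
  have hBq : ∀ k, B k ≤ q := by
    intro k
    rw [hBeq]
    refine Finset.sup_le fun G hG => ?_
    rw [hFBmem] at hG
    exact hq G hG.1 hG.2.2.2
  have hstepA : ∀ k ∈ F, ∀ l ∈ F, k < l → d l ≤ d k → A k < A l := by
    intro k hk l hl hkl hd
    have hne : (FA k).Nonempty := ⟨{k}, hsA k hk⟩
    obtain ⟨G, hG, hGcard⟩ := Finset.exists_mem_eq_sup _ hne Finset.card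
    rw [hFAmem] at hG
    obtain ⟨hGF, hkG, hGle, hGchain⟩ := hG
    have hAk : A k = G.card := (hAeq k).trans hGcard
    have hlG : l ∉ G := fun h => absurd (hGle l h) (by omega)
    have hmem : insert l G ∈ FA l := by
      rw [hFAmem]
      refine ⟨Finset.insert_subset hl hGF, Finset.mem_insert_self _ _, ?_, ?_⟩
      · intro j hj
        rcases Finset.mem_insert.mp hj with h | h
        · omega
        · exact le_trans (hGle j h) (le_of_lt hkl)
      · intro i hi j hj hij
        rcases Finset.mem_insert.mp hi with hi' | hi' <;>
          rcases Finset.mem_insert.mp hj with hj' | hj'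
        · omega
        · subst hi'; exact absurd (hGle j hj') (by omega)
        · subst hj'
          have : d k ≤ d i := by
            rcases eq_or_lt_of_le (hGle i hi') with h | h
            · rw [h]
            · exact hGchain i hi' k hkG h
          linarith
        · exact hGchain i hi' j hj' hij
    have h3 : (insert l G).card ≤ (FA l).sup Finset.card := Finset.le_sup hmem
    rw [← hAeq l, Finset.card_insert_of_notMem hlG] at h3
    omega
  have hstepB : ∀ k ∈ F, ∀ l ∈ F, k < l → d k < d l → B k < B l := by
    intro k hk l hl hkl hd
    have hne : (FB k).Nonempty := ⟨{k}, hsB k hk⟩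
    obtain ⟨G, hG, hGcard⟩ := Finset.exists_mem_eq_sup _ hne Finset.card
    rw [hFBmem] at hG
    obtain ⟨hGF, hkG, hGle, hGchain⟩ := hG
    have hBk : B k = G.card := (hBeq k).trans hGcard
    have hlG : l ∉ G := fun h => absurd (hGle l h) (by omega)
    have hmem : insert l G ∈ FB l := by
      rw [hFBmem]
      refine ⟨Finset.insert_subset hl hGF, Finset.mem_insert_self _ _, ?_, ?_⟩
      · intro j hj
        rcases Finset.mem_insert.mp hj with h | h
        · omega
        · exact le_trans (hGle j h) (le_of_lt hkl)
      · intro i hi j hj hij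
        rcases Finset.mem_insert.mp hi with hi' | hi' <;>
          rcases Finset.mem_insert.mp hj with hj' | hj'
        · omega
        · subst hi'; exact absurd (hGle j hj') (by omega)
        · subst hj'
          have : d i ≤ d k := by
            rcases eq_or_lt_of_le (hGle i hi') with h | h
            · rw [h]
            · exact le_of_lt (hGchain i hi' k hkG h)
          linarith
        · exact hGchain i hi' j hj' hij
    have h3 : (insert l G).card ≤ (FB l).sup Finset.card := Finset.le_sup hmem
    rw [← hBeq l, Finset.card_insert_of_notMem hlG] at h3
    omega
  have hinj : Set.InjOn (fun k => (A k, B k)) F := by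
    intro k hk l hl h
    simp only [Prod.mk.injEq] at h
    by_contra hne
    rcases Nat.lt_or_ge k l with hkl | hkl
    · rcases le_or_gt (d l) (d k) with hd | hd
      · exact absurd h.1 (Nat.ne_of_lt (hstepA k hk l hl hkl hd))
      · exact absurd h.2 (Nat.ne_of_lt (hstepB k hk l hl hkl hd))
    · have hlk : l < k := by omega
      rcases le_or_gt (d k) (d l) with hd | hd
      · exact absurd h.1.symm (Nat.ne_of_lt (hstepA l hl k hk hlk hd))
      · exact absurd h.2.symm (Nat.ne_of_lt (hstepB l hl k hk hlk hd))
  have hmapsto : ∀ k ∈ F, (A k, B k) ∈ Finset.Icc 1 p ×ˢ Finset.Icc 1 q := by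
    intro k hk
    rw [Finset.mem_product, Finset.mem_Icc, Finset.mem_Icc]
    exact ⟨⟨hA1 k hk, hAp k⟩, ⟨hB1 k hk, hBq k⟩⟩
  have hcard := Finset.card_le_card_of_injOn (fun k => (A k, B k)) hmapsto hinj
  rwa [Finset.card_product, Nat.card_Icc, Nat.card_Icc,
    Nat.add_sub_cancel, Nat.add_sub_cancel] at hcard

/-- Density theorem for Morse covers. -/
lemma morse_density {X : Type*} [NormedAddCommGroup X] [NormedSpace ℝ X]
    [FiniteDimensional ℝ X] [MeasurableSpace X] [OpensMeasurableSpace X]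
    (μ : Measure X) [μ.Regular]
    (lam : ℝ) (hlam : 1 ≤ lam) (Ω : Set X)
    (𝒮 : Set (X × Set X))
    (h1 : ∀ p ∈ 𝒮, IsMorseSet lam p.1 p.2 ∧ MeasurableSet p.2 ∧ p.2 ⊆ Ω)
    (C : Set X) (hC : MeasurableSet C) (ε : ℝ) (hε : 0 < ε) :
    μ {a ∈ C | ∀ R > (0:ℝ), ∃ S : Set X, (a, S) ∈ 𝒮 ∧ S ⊆ closedBall a R ∧
        ¬ (μ (S \ C) ≤ ENNReal.ofReal ε * μ S)} = 0 := by
  classical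
  set E : Set X := {a ∈ C | ∀ R > (0:ℝ), ∃ S : Set X, (a, S) ∈ 𝒮 ∧ S ⊆ closedBall a R ∧
        ¬ (μ (S \ C) ≤ ENNReal.ofReal ε * μ S)} with hE
  rcases subsingleton_or_nontrivial X with hX | hX
  · -- trivial space
    have : E = ∅ := by
      ext a
      simp only [Set.mem_empty_iff_false, iff_false]
      intro ha
      obtain ⟨haC, hbad⟩ := ha
      obtain ⟨S, _, _, hb⟩ := hbad 1 one_pos
      refine hb ?_
      have : S \ C = ∅ := by
        ext x
        simp only [Set.mem_diff, Set.mem_empty_iff_false, iff_false]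
        rintro ⟨hxS, hxC⟩
        exact hxC (Subsingleton.elim x a ▸ haC)
      rw [this]
      simp
    rw [this]; exact measure_empty
  -- main case
  have hlam0 : (0:ℝ) < lam := lt_of_lt_of_le one_pos hlam
  obtain ⟨N₁, hN₁pos, hN₁⟩ := morse_pack (X := X) (1/lam) 1 (by positivity)
  obtain ⟨N₂, hN₂pos, hN₂⟩ := morse_pack (X := X) 1 (2*lam) one_pos
  set N : ℕ := N₁ * N₂ with hN
  -- reduce to bounded pieces
  have hcover : E ⊆ ⋃ n : ℕ, E ∩ ball 0 (n:ℝ) := by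
    intro a ha
    obtain ⟨n, hn⟩ := exists_nat_gt ‖a‖
    exact Set.mem_iUnion.mpr ⟨n, ha, by simpa [mem_ball_zero_iff] using hn⟩
  refine measure_mono_null hcover (measure_iUnion_null fun n => ?_)
  set E' : Set X := E ∩ ball 0 (n:ℝ) with hE'
  -- it suffices to bound by arbitrarily small quantities
  have hC' : MeasurableSet (C ∩ ball 0 ((n:ℝ)+3)) := hC.inter measurableSet_ball
  set C' : Set X := C ∩ ball 0 ((n:ℝ)+3) with hC'def
  have hC'fin : μ C' < ⊤ := by
    refine lt_of_le_of_lt (measure_mono ?_) (isCompact_closedBall (0:X) ((n:ℝ)+3)).measure_lt_top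
    exact Set.inter_subset_right.trans ball_subset_closedBall
  have key : ∀ τ : ℝ≥0∞, 0 < τ →
      μ E' ≤ (ENNReal.ofReal ε)⁻¹ * ((N:ℝ≥0∞) * τ) := by
    intro τ hτ
    -- outer regularity
    obtain ⟨U, hC'U, hUopen, hUlt⟩ := Set.exists_isOpen_lt_of_lt C' (μ C' + τ)
      (ENNReal.lt_add_right hC'fin.ne (ne_of_gt hτ))
    have hUC' : μ (U \ C') < τ :=
      measure_diff_lt_of_lt_add hC'.nullMeasurableSet hC'U hC'fin.ne hUlt
    set U₀ : Set X := U ∩ ball 0 ((n:ℝ)+3) with hU₀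
    have hU₀open : IsOpen U₀ := hUopen.inter isOpen_ball
    -- each point of E' lies in U₀
    have hE'U₀ : ∀ a ∈ E', a ∈ U₀ := by
      intro a ha
      obtain ⟨haE, haball⟩ := ha
      have haC : a ∈ C := haE.1
      have : a ∈ C' := ⟨haC, by
        rw [mem_ball_zero_iff] at haball ⊢
        linarith⟩
      exact ⟨hC'U this, this.2⟩
    -- selection of bad Morse sets
    have hsel : ∀ a ∈ E', ∃ (S : Set X) (r : ℝ), 0 < r ∧ r ≤ 1 ∧
        closedBall a r ⊆ S ∧ S ⊆ closedBall a (lam * r) ∧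
        (∀ y ∈ closedBall a r, ∀ z ∈ S, segment ℝ y z ⊆ S) ∧
        MeasurableSet S ∧ S ⊆ U₀ ∧ ENNReal.ofReal ε * μ S < μ (S \ C) := by
      intro a ha
      obtain ⟨ρ, hρ0, hρsub⟩ := Metric.isOpen_iff.mp hU₀open a (hE'U₀ a ha)
      set R : ℝ := min 1 (ρ/2) with hR
      have hR0 : 0 < R := lt_min one_pos (half_pos hρ0)
      have hR1 : R ≤ 1 := min_le_left _ _
      have hRsub : closedBall a R ⊆ U₀ := by
        refine Subset.trans (closedBall_subset_ball ?_) hρsub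
        calc R ≤ ρ/2 := min_le_right _ _
          _ < ρ := half_lt_self hρ0
      obtain ⟨S, hSmem, hSsub, hSbad⟩ := ha.1.2 R hR0
      obtain ⟨⟨r, hr0, hball, hlball, hstar⟩, hSmeas, _⟩ := h1 _ hSmem
      have hrR : r ≤ R := by
        obtain ⟨u, hu⟩ := exists_norm_eq X (le_of_lt hr0)
        have h1' : a + u ∈ closedBall a r := by
          rw [mem_closedBall, dist_eq_norm]
          simp [hu]
        have h2' := hSsub (hball h1')
        rw [mem_closedBall, dist_eq_norm] at h2'
        simpa [hu] using h2'
      exact ⟨S, r, hr0, le_trans hrR hR1, hball, hlball, hstar, hSmeas,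
        hSsub.trans hRsub, lt_of_not_ge hSbad⟩
    choose! S r hr0 hr1 hball hlball hstar hmeas hsubU hbad using hsel
    -- greedy selection
    have hpick : ∀ A : Set X, A ⊆ E' → A.Nonempty →
        ∃ a, a ∈ A ∧ sSup (r '' A) / 2 < r a := by
      intro A hAE hAne
      have hbdd : BddAbove (r '' A) := ⟨1, by
        rintro _ ⟨a, ha, rfl⟩; exact hr1 a (hAE ha)⟩
      obtain ⟨a₀, ha₀⟩ := id hAne
      have h0 : 0 < sSup (r '' A) :=
        lt_of_lt_of_le (hr0 a₀ (hAE ha₀)) (le_csSup hbdd ⟨a₀, ha₀, rfl⟩)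
      obtain ⟨_, ⟨a, ha, rfl⟩, hgt⟩ :=
        exists_lt_of_lt_csSup (hAne.image r) (half_lt_self h0)
      exact ⟨a, ha, hgt⟩
    have hpick' : ∀ A : Set X, ∃ a : X, A ⊆ E' → A.Nonempty →
        (a ∈ A ∧ sSup (r '' A) / 2 < r a) := by
      intro A
      by_cases h : A ⊆ E' ∧ A.Nonempty
      · obtain ⟨a, ha, hra⟩ := hpick A h.1 h.2
        exact ⟨a, fun _ _ => ⟨ha, hra⟩⟩
      · exact ⟨0, fun h1' h2' => absurd ⟨h1', h2'⟩ h⟩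
    choose Φ hΦ using hpick'
    let rem : ℕ → Set X := fun k => Nat.rec E' (fun _ prev => prev \ S (Φ prev)) k
    let c : ℕ → X := fun k => Φ (rem k)
    have hrem0 : rem 0 = E' := rfl
    have hremS : ∀ k, rem (k+1) = rem k \ S (c k) := fun k => rfl
    have hremE' : ∀ k, rem k ⊆ E' := by
      intro k
      induction k with
      | zero => rw [hrem0]
      | succ k ih => rw [hremS k]; exact Set.diff_subset.trans ih
    have hmono1 : ∀ k, rem (k+1) ⊆ rem k := fun k => by
      rw [hremS k]; exact Set.diff_subset
    have hmono : ∀ k l, k ≤ l → rem l ⊆ rem k := by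
      intro k l hkl
      induction l with
      | zero => rw [Nat.le_zero.mp hkl]
      | succ l ih =>
        rcases Nat.lt_or_ge k (l+1) with h | h
        · exact (hmono1 l).trans (ih (Nat.lt_succ_iff.mp h))
        · rw [Nat.le_antisymm hkl h]
    have hspec : ∀ k, (rem k).Nonempty →
        c k ∈ rem k ∧ sSup (r '' rem k) / 2 < r (c k) := by
      intro k hk
      exact hΦ (rem k) (hremE' k) hk
    have hck_not : ∀ k l, k < l → (rem l).Nonempty →
        c l ∈ rem k ∧ c l ∉ S (c k) := by
      intro k l hkl hl
      have h1' : c l ∈ rem l := (hspec l hl).1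
      have h2' : rem l ⊆ rem (k+1) := hmono _ _ hkl
      have h3' := h2' h1'
      rw [hremS k] at h3'
      exact ⟨Set.diff_subset h3', h3'.2⟩
    have hrembdd : ∀ k, BddAbove (r '' rem k) := by
      intro k
      exact ⟨1, by rintro _ ⟨a, ha, rfl⟩; exact hr1 a (hremE' k ha)⟩
    have hrlt : ∀ k l, k < l → (rem l).Nonempty → r (c l) < 2 * r (c k) := by
      intro k l hkl hl
      have hmem : c l ∈ rem k := (hck_not k l hkl hl).1
      have h1' : r (c l) ≤ sSup (r '' rem k) := le_csSup (hrembdd k) ⟨c l, hmem, rfl⟩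
      have h2' := (hspec k ⟨c l, hmem⟩).2
      linarith
    -- the greedy sets cover E'
    have hcov : ∀ a ∈ E', ∃ k, (rem k).Nonempty ∧ a ∈ S (c k) := by
      intro a ha
      by_contra hcon
      push_neg at hcon
      have hain : ∀ k, a ∈ rem k := by
        intro k
        induction k with
        | zero => rw [hrem0]; exact ha
        | succ k ih =>
          rw [hremS k]
          exact ⟨ih, hcon k ⟨a, ih⟩⟩
      obtain ⟨Np, _, hNp⟩ := morse_pack (X := X) (r a / 2) n (half_pos (hr0 a ha))
      have hsep : ∀ k l, k < l → r a / 2 < dist (c l) (c k) := by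
        intro k l hkl
        have hl : (rem l).Nonempty := ⟨a, hain l⟩
        have hnot := (hck_not k l hkl hl).2
        have h1' : ¬ (c l ∈ closedBall (c k) (r (c k))) := fun h =>
          hnot (hball (c k) (hremE' k (hspec k ⟨a, hain k⟩).1) h)
        rw [mem_closedBall, not_le] at h1'
        have h2' : r a ≤ sSup (r '' rem k) := le_csSup (hrembdd k) ⟨a, hain k, rfl⟩
        have h3' := (hspec k ⟨a, hain k⟩).2
        linarith
      have hinj : Set.InjOn c (Finset.range (Np+1)) := by
        intro k hk l hl hkl
        by_contra hne
        rcases Nat.lt_or_ge k l with h | h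
        · have := hsep k l h
          rw [hkl] at this
          simp at this
          linarith [hr0 a ha]
        · have hlk : l < k := by omega
          have := hsep l k hlk
          rw [hkl] at this
          simp at this
          linarith [hr0 a ha]
      have hcard : ((Finset.range (Np+1)).image c).card = Np + 1 := by
        rw [Finset.card_image_of_injOn hinj, Finset.card_range]
      have hle := hNp ((Finset.range (Np+1)).image c)
        (by
          intro y hy
          obtain ⟨k, _, rfl⟩ := Finset.mem_image.mp hy
          have : c k ∈ E' := hremE' k (hspec k ⟨a, hain k⟩).1
          have := this.2
          rw [mem_ball_zero_iff] at this
          exact le_of_lt this)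
        (by
          intro y hy z hz hyz
          obtain ⟨k, _, rfl⟩ := Finset.mem_image.mp hy
          obtain ⟨l, _, rfl⟩ := Finset.mem_image.mp hz
          rcases lt_trichotomy k l with h | h | h
          · rw [dist_comm]; exact hsep k l h
          · exact absurd (congrArg c h) hyz
          · exact hsep l k h)
      omega
    -- bounded overlap
    have hoverlap : ∀ x : X, ∀ Fs : Finset ℕ,
        (∀ k ∈ Fs, (rem k).Nonempty ∧ x ∈ S (c k)) → Fs.card ≤ N := by
      intro x Fs hFs
      refine es_count Fs (fun k => dist (c k) x) N₁ N₂ ?_ ?_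
      · -- nonincreasing chains: direction separation
        intro G hGF hchain
        rcases Nat.lt_or_ge G.card 2 with h2 | h2
        · omega
        have hdpos : ∀ k ∈ G, 0 < dist (c k) x := by
          intro k hk
          obtain ⟨l, hl, hlk⟩ := Finset.exists_mem_ne (s := G) (by omega) k
          have hxk : x ∈ S (c k) := (hFs k (hGF hk)).2
          rcases Nat.lt_or_ge k l with h | h
          · -- k < l; if dist (c k) x = 0 then c k = x, chain gives c l = x ∈ S (c k), contra
            rcases eq_or_lt_of_le (dist_nonneg (x := c k) (y := x)) with heq | hlt
            · exfalso
              have hck : c k = x := by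
                rw [← dist_eq_zero]; exact heq.symm
              have hdl : dist (c l) x ≤ dist (c k) x := hchain k hk l hl h
              rw [hck, dist_self] at hdl
              have hcl : c l = x := by
                rw [← dist_eq_zero]
                exact le_antisymm hdl dist_nonneg
              have := (hck_not k l h (hFs l (hGF hl)).1).2
              rw [hcl] at this
              exact this hxk
            · exact hlt
          · have hlk' : l < k := by omega
            have hnot := (hck_not l k hlk' (hFs k (hGF hk)).1).2
            have hxl : x ∈ S (c l) := (hFs l (hGF hl)).2
            have : c k ≠ x := fun h' => hnot (h' ▸ hxl)
            rw [dist_pos]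
            exact this
        let u : ℕ → X := fun k => ‖c k - x‖⁻¹ • (c k - x)
        have husep : ∀ k ∈ G, ∀ l ∈ G, k < l → 1/lam < dist (u l) (u k) := by
          intro k hk l hl hkl
          have hl' : (rem l).Nonempty := (hFs l (hGF hl)).1
          have hkE : c k ∈ E' := hremE' k (hspec k ⟨c l, (hck_not k l hkl hl').1⟩).1
          have hnot := (hck_not k l hkl hl').2
          have hxk : x ∈ S (c k) := (hFs k (hGF hk)).2
          have hdk : 0 < dist (c k) x := hdpos k hk
          have hax : c k ≠ x := by
            rw [← dist_pos]; exact hdk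
          have hchain' : dist (c l) x ≤ dist (c k) x := hchain k hk l hl hkl
          have hcone := morse_cone_s4 (hr0 (c k) hkE) (hball (c k) hkE)
            (hstar (c k) hkE) hxk hnot hchain' hax
          have hdlam : dist (c k) x ≤ lam * r (c k) := by
            have := hlball (c k) hkE hxk
            rw [mem_closedBall] at this
            rwa [dist_comm]
          have h1lam : 1/lam ≤ r (c k) / dist (c k) x := by
            rw [div_le_div_iff₀ hlam0 hdk]
            calc 1 * dist (c k) x = dist (c k) x := one_mul _
              _ ≤ lam * r (c k) := hdlam
              _ = r (c k) * lam := mul_comm _ _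
          calc 1/lam ≤ r (c k) / dist (c k) x := h1lam
            _ < ‖u l - u k‖ := hcone
            _ = dist (u l) (u k) := (dist_eq_norm _ _).symm
        have huinj : Set.InjOn u G := by
          intro k hk l hl hkl
          by_contra hne
          rcases lt_trichotomy k l with h | h | h
          · have := husep k hk l hl h
            rw [hkl] at this
            simp at this
            linarith [one_div_pos.mpr hlam0]
          · exact hne h
          · have := husep l hl k hk h
            rw [hkl] at this
            simp at this
            linarith [one_div_pos.mpr hlam0]
        have hcard : (G.image u).card = G.card := Finset.card_image_of_injOn huinj
        rw [← hcard]
        refine hN₁ (G.image u) ?_ ?_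
        · intro y hy
          obtain ⟨k, hk, rfl⟩ := Finset.mem_image.mp hy
          show ‖‖c k - x‖⁻¹ • (c k - x)‖ ≤ 1
          have hnpos : (0:ℝ) < ‖c k - x‖ := by
            rw [← dist_eq_norm]; exact hdpos k hk
          rw [norm_smul, Real.norm_eq_abs, abs_of_pos (inv_pos.mpr hnpos),
            inv_mul_le_iff₀ hnpos]
          simp
        · intro y hy z hz hyz
          obtain ⟨k, hk, rfl⟩ := Finset.mem_image.mp hy
          obtain ⟨l, hl, rfl⟩ := Finset.mem_image.mp hz
          rcases lt_trichotomy k l with h | h | h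
          · rw [dist_comm]; exact husep k hk l hl h
          · exact absurd (congrArg u h) hyz
          · exact husep l hl k hk h
      · -- strictly increasing chains: metric separation
        intro G hGF hchain
        rcases Nat.lt_or_ge G.card 2 with h2 | h2
        · omega
        have hGne : G.Nonempty := Finset.card_pos.mp (by omega)
        let m : ℕ := G.max' hGne
        have hmG : m ∈ G := G.max'_mem hGne
        let D : ℝ := dist (c m) x
        have hD0 : 0 < D := by
          obtain ⟨k, hk, hkm⟩ := Finset.exists_mem_ne (s := G) (by omega) m
          have hkm' : k < m := lt_of_le_of_ne (G.le_max' k hk) hkm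
          have h1' : dist (c k) x < dist (c m) x := hchain k hk m hmG hkm'
          have h2' := dist_nonneg (x := c k) (y := x)
          show (0:ℝ) < dist (c m) x
          linarith
        let ρ : ℝ := D / (2*lam)
        have hρ0 : 0 < ρ := div_pos hD0 (by linarith)
        have hrk : ∀ k ∈ G, k ≠ m → ρ < r (c k) := by
          intro k hk hkm
          have hkm' : k < m := lt_of_le_of_ne (G.le_max' k hk) hkm
          have hrm := hrlt k m hkm' (hFs m (hGF hmG)).1
          have hDlam : D ≤ lam * r (c m) := by
            have := hlball (c m) (hremE' m (hspec m (hFs m (hGF hmG)).1).1) (hFs m (hGF hmG)).2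
            rw [mem_closedBall] at this
            show dist (c m) x ≤ lam * r (c m)
            rwa [dist_comm]
          show D / (2*lam) < r (c k)
          rw [div_lt_iff₀ (by linarith : (0:ℝ) < 2*lam)]
          calc D ≤ lam * r (c m) := hDlam
            _ < lam * (2 * r (c k)) := by
                apply mul_lt_mul_of_pos_left hrm hlam0
            _ = r (c k) * (2 * lam) := by ring
        have hsep : ∀ k ∈ G, ∀ l ∈ G, k < l → ρ < dist (c l) (c k) := by
          intro k hk l hl hkl
          have hkm : k ≠ m := by
            intro h
            have := G.le_max' l hl
            omega
          have hl' : (rem l).Nonempty := (hFs l (hGF hl)).1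
          have hnot := (hck_not k l hkl hl').2
          have h1' : ¬ (c l ∈ closedBall (c k) (r (c k))) := fun h =>
            hnot (hball (c k) (hremE' k (hspec k ⟨c l, (hck_not k l hkl hl').1⟩).1) h)
          rw [mem_closedBall, not_le] at h1'
          calc ρ < r (c k) := hrk k hk hkm
            _ < dist (c l) (c k) := h1'
        have hdbound : ∀ k ∈ G, dist (c k) x ≤ D := by
          intro k hk
          rcases eq_or_lt_of_le (G.le_max' k hk) with h | h
          · show dist (c k) x ≤ dist (c m) x
            have : k = m := h
            rw [this]
          · exact le_of_lt (hchain k hk m hmG h)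
        let v : ℕ → X := fun k => ρ⁻¹ • (c k - x)
        have hvsep : ∀ k ∈ G, ∀ l ∈ G, k ≠ l → 1 < dist (v k) (v l) := by
          intro k hk l hl hkl
          have hdist : ∀ k l : ℕ, dist (v k) (v l) = ρ⁻¹ * dist (c k) (c l) := by
            intro k l
            show dist (ρ⁻¹ • (c k - x)) (ρ⁻¹ • (c l - x)) = ρ⁻¹ * dist (c k) (c l)
            rw [dist_eq_norm, ← smul_sub, norm_smul, Real.norm_eq_abs,
              abs_of_pos (inv_pos.mpr hρ0)]
            congr 1
            rw [dist_eq_norm]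
            congr 1
            abel
          have hgen : ∀ k' ∈ G, ∀ l' ∈ G, k' < l' → 1 < ρ⁻¹ * dist (c l') (c k') := by
            intro k' hk' l' hl' h
            have h1' : ρ⁻¹ * ρ < ρ⁻¹ * dist (c l') (c k') :=
              mul_lt_mul_of_pos_left (hsep k' hk' l' hl' h) (inv_pos.mpr hρ0)
            have h2' : ρ⁻¹ * ρ = 1 := inv_mul_cancel₀ (ne_of_gt hρ0)
            linarith
          rcases lt_trichotomy k l with h | h | h
          · rw [dist_comm, hdist l k]
            exact hgen k hk l hl h
          · exact absurd h hkl
          · rw [hdist k l]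
            exact hgen l hl k hk h
        have hvinj : Set.InjOn v G := by
          intro k hk l hl hkl
          by_contra hne
          have := hvsep k hk l hl hne
          rw [hkl, dist_self] at this
          linarith
        have hcard : (G.image v).card = G.card := Finset.card_image_of_injOn hvinj
        rw [← hcard]
        refine hN₂ (G.image v) ?_ ?_
        · intro y hy
          obtain ⟨k, hk, rfl⟩ := Finset.mem_image.mp hy
          show ‖ρ⁻¹ • (c k - x)‖ ≤ 2 * lam
          rw [norm_smul, Real.norm_eq_abs, abs_of_pos (inv_pos.mpr hρ0),
            inv_mul_le_iff₀ hρ0]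
          calc ‖c k - x‖ = dist (c k) x := (dist_eq_norm _ _).symm
            _ ≤ D := hdbound k hk
            _ ≤ ρ * (2 * lam) := by
                show D ≤ D / (2*lam) * (2 * lam)
                rw [div_mul_cancel₀]
                positivity
        · intro y hy z hz hyz
          obtain ⟨k, hk, rfl⟩ := Finset.mem_image.mp hy
          obtain ⟨l, hl, rfl⟩ := Finset.mem_image.mp hz
          have hkl : k ≠ l := fun h => hyz (congrArg v h)
          exact hvsep k hk l hl hkl
    -- measure estimate
    obtain ⟨A, hA⟩ : ∃ A : ℕ → Set X, ∀ k,
        ((rem k).Nonempty → A k = S (c k) \ C) ∧ (¬(rem k).Nonempty → A k = ∅) :=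
      ⟨fun k => if h : (rem k).Nonempty then S (c k) \ C else ∅, by
        intro k
        constructor <;> intro h <;> simp [h]⟩
    obtain ⟨SS, hSS⟩ : ∃ SS : ℕ → Set X, ∀ k,
        ((rem k).Nonempty → SS k = S (c k)) ∧ (¬(rem k).Nonempty → SS k = ∅) :=
      ⟨fun k => if h : (rem k).Nonempty then S (c k) else ∅, by
        intro k
        constructor <;> intro h <;> simp [h]⟩
    have hAmeas : ∀ k, MeasurableSet (A k) := by
      intro k
      by_cases h : (rem k).Nonempty
      · rw [(hA k).1 h]
        exact (hmeas (c k) (hremE' k (hspec k h).1)).diff hC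
      · rw [(hA k).2 h]
        exact MeasurableSet.empty
    have hAsub : ∀ k, A k ⊆ U \ C' := by
      intro k
      by_cases h : (rem k).Nonempty
      · rw [(hA k).1 h]
        intro z hz
        have hzU₀ : z ∈ U₀ := hsubU (c k) (hremE' k (hspec k h).1) hz.1
        rw [hU₀] at hzU₀
        refine ⟨hzU₀.1, fun hzC' => ?_⟩
        rw [hC'def] at hzC'
        exact hz.2 hzC'.1
      · rw [(hA k).2 h]
        exact empty_subset _
    have hUC'meas : MeasurableSet (U \ C') := hUopen.measurableSet.diff hC'
    have hptwise : ∀ z, ∑' k, (A k).indicator (fun _ => (1:ℝ≥0∞)) z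
        ≤ (N:ℝ≥0∞) * (U \ C').indicator (fun _ => (1:ℝ≥0∞)) z := by
      intro z
      by_cases hz : z ∈ U \ C'
      · rw [Set.indicator_of_mem hz, mul_one]
        rw [ENNReal.tsum_eq_iSup_sum]
        refine iSup_le fun Fs => ?_
        have hsum : ∑ k ∈ Fs, (A k).indicator (fun _ => (1:ℝ≥0∞)) z
            = ((Fs.filter fun k => z ∈ A k).card : ℝ≥0∞) := by
          rw [Finset.card_eq_sum_ones, Nat.cast_sum]
          rw [Finset.sum_filter]
          refine Finset.sum_congr rfl fun k hk => ?_
          by_cases h : z ∈ A k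
          · rw [Set.indicator_of_mem h, if_pos h, Nat.cast_one]
          · rw [Set.indicator_of_notMem h, if_neg h]
        rw [hsum]
        have hprem : ∀ k ∈ (Fs.filter fun k => z ∈ A k),
            (rem k).Nonempty ∧ z ∈ S (c k) := by
          intro k hk
          rw [Finset.mem_filter] at hk
          by_cases h : (rem k).Nonempty
          · have h2 : z ∈ S (c k) \ C := by rw [← (hA k).1 h]; exact hk.2
            exact ⟨h, h2.1⟩
          · exfalso
            have := hk.2
            rw [(hA k).2 h] at this
            exact this
        have hcard := hoverlap z _ hprem
        exact_mod_cast hcard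
      · have hzero : ∀ k, (A k).indicator (fun _ => (1:ℝ≥0∞)) z = 0 := by
          intro k
          exact Set.indicator_of_notMem (fun hmem => hz (hAsub k hmem)) _
        rw [Set.indicator_of_notMem hz, mul_zero]
        rw [tsum_congr hzero]
        simp
    have hsumA : ∑' k, μ (A k) ≤ (N:ℝ≥0∞) * μ (U \ C') := by
      have h1' : ∀ k, μ (A k) = ∫⁻ z, (A k).indicator (fun _ => (1:ℝ≥0∞)) z ∂μ :=
        fun k => by rw [lintegral_indicator_const (hAmeas k) 1, one_mul]
      calc ∑' k, μ (A k) = ∑' k, ∫⁻ z, (A k).indicator (fun _ => (1:ℝ≥0∞)) z ∂μ := by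
            exact tsum_congr h1'
        _ = ∫⁻ z, ∑' k, (A k).indicator (fun _ => (1:ℝ≥0∞)) z ∂μ :=
            (lintegral_tsum fun k =>
              (measurable_const.indicator (hAmeas k)).aemeasurable).symm
        _ ≤ ∫⁻ z, (N:ℝ≥0∞) * (U \ C').indicator (fun _ => (1:ℝ≥0∞)) z ∂μ :=
            lintegral_mono hptwise
        _ = (N:ℝ≥0∞) * ∫⁻ z, (U \ C').indicator (fun _ => (1:ℝ≥0∞)) z ∂μ :=
            lintegral_const_mul _ (measurable_const.indicator hUC'meas)
        _ = (N:ℝ≥0∞) * μ (U \ C') := by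
            rw [lintegral_indicator_const hUC'meas 1, one_mul]
    have hE'cov : E' ⊆ ⋃ k, SS k := by
      intro a ha
      obtain ⟨k, hk, haS⟩ := hcov a ha
      exact Set.mem_iUnion.mpr ⟨k, by rw [(hSS k).1 hk]; exact haS⟩
    have hSSA : ∀ k, μ (SS k) ≤ (ENNReal.ofReal ε)⁻¹ * μ (A k) := by
      intro k
      by_cases h : (rem k).Nonempty
      · rw [(hSS k).1 h, (hA k).1 h]
        have hb := hbad (c k) (hremE' k (hspec k h).1)
        have hε0 : ENNReal.ofReal ε ≠ 0 := (ENNReal.ofReal_pos.mpr hε).ne'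
        have hεt : ENNReal.ofReal ε ≠ ⊤ := ENNReal.ofReal_ne_top
        calc μ (S (c k)) = (ENNReal.ofReal ε)⁻¹ * (ENNReal.ofReal ε * μ (S (c k))) := by
              rw [← mul_assoc, ENNReal.inv_mul_cancel hε0 hεt, one_mul]
          _ ≤ (ENNReal.ofReal ε)⁻¹ * μ (S (c k) \ C) :=
              mul_le_mul_right (le_of_lt hb) _
      · rw [(hSS k).2 h]
        simp
    calc μ E' ≤ μ (⋃ k, SS k) := measure_mono hE'cov
      _ ≤ ∑' k, μ (SS k) := measure_iUnion_le _
      _ ≤ ∑' k, (ENNReal.ofReal ε)⁻¹ * μ (A k) := ENNReal.tsum_le_tsum hSSA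
      _ = (ENNReal.ofReal ε)⁻¹ * ∑' k, μ (A k) := ENNReal.tsum_mul_left
      _ ≤ (ENNReal.ofReal ε)⁻¹ * ((N:ℝ≥0∞) * μ (U \ C')) :=
          mul_le_mul_right hsumA _
      _ ≤ (ENNReal.ofReal ε)⁻¹ * ((N:ℝ≥0∞) * τ) :=
          mul_le_mul_right (mul_le_mul_right (le_of_lt hUC') _) _
  -- conclude from key
  set K : ℝ≥0∞ := (ENNReal.ofReal ε)⁻¹ * (N:ℝ≥0∞) with hK
  have hK0 : K ≠ 0 := by
    rw [hK]
    apply mul_ne_zero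
    · simp [ENNReal.inv_ne_zero, ENNReal.ofReal_ne_top]
    · have hNpos : 0 < N := hN ▸ Nat.mul_pos hN₁pos hN₂pos
      exact Nat.cast_ne_zero.mpr hNpos.ne'
  have hKt : K ≠ ⊤ := by
    rw [hK]
    apply ENNReal.mul_ne_top
    · simp [ENNReal.inv_ne_top, (ENNReal.ofReal_pos.mpr hε).ne']
    · exact ENNReal.natCast_ne_top N
  refine le_antisymm ?_ zero_le
  refine ENNReal.le_of_forall_pos_le_add fun δ hδ _ => ?_
  rw [zero_add]
  have hτpos : (0:ℝ≥0∞) < (δ:ℝ≥0∞) / K :=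
    ENNReal.div_pos (by exact_mod_cast hδ.ne') hKt
  calc μ E' ≤ (ENNReal.ofReal ε)⁻¹ * ((N:ℝ≥0∞) * ((δ:ℝ≥0∞) / K)) := key _ hτpos
    _ = K * ((δ:ℝ≥0∞) / K) := by rw [hK, mul_assoc]
    _ = δ := ENNReal.mul_div_cancel hK0 hKt

/-- If `𝒮` is a `μ`-a.e. `λ`-Morse cover of an open set `Ω ⊆ X`, `Y` a Banach space,
and `f : Ω → Y` is `μ`-measurable, then `μ`-almost every point of `Ω` is a point of
approximate continuity of `f`. -/
theorem ae_isApproxContPt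
    {X Y : Type*} [NormedAddCommGroup X] [NormedSpace ℝ X] [FiniteDimensional ℝ X]
    [MeasurableSpace X] [OpensMeasurableSpace X]
    [NormedAddCommGroup Y] [NormedSpace ℝ Y] [CompleteSpace Y]
    (μ : Measure X) [μ.Regular] [μ.IsComplete]
    (lam : ℝ) (hlam : 1 ≤ lam) (Ω : Set X) (hΩ : IsOpen Ω)
    (𝒮 : Set (X × Set X)) (h𝒮 : IsAEMorseCover μ lam Ω 𝒮)
    (f : X → Y) (hf : MuMeasurable (μ.restrict Ω) f) :
    μ {a ∈ Ω | ¬ IsApproxContPt μ 𝒮 f a} = 0 := by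
  classical
  obtain ⟨F, hF⟩ := hf
  have hΩm : MeasurableSet Ω := hΩ.measurableSet
  have h𝒮1 := h𝒮.1.1
  -- a strongly measurable version of f
  have hFm : ∀ n : ℕ, AEStronglyMeasurable (fun x => F n x) (μ.restrict Ω) :=
    fun n => (F n).stronglyMeasurable.aestronglyMeasurable
  have hfae : AEStronglyMeasurable f (μ.restrict Ω) :=
    aestronglyMeasurable_of_tendsto_ae atTop hFm hF
  set g : X → Y := hfae.mk f with hgdef
  have hgm : StronglyMeasurable g := hfae.stronglyMeasurable_mk
  have hfg : f =ᵐ[μ.restrict Ω] g := hfae.ae_eq_mk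
  -- null sets
  have hNfg : μ {x | x ∈ Ω ∧ f x ≠ g x} = 0 := by
    have h1 : ∀ᵐ x ∂μ, x ∈ Ω → f x = g x := (ae_restrict_iff' hΩm).mp hfg
    have h2 := ae_iff.mp h1
    refine measure_mono_null ?_ h2
    intro x hx
    simp only [Set.mem_setOf_eq] at hx ⊢
    tauto
  have hNconv : μ {x | x ∈ Ω ∧
      ¬ Tendsto (fun n => F n x) atTop (nhds (f x))} = 0 := by
    have h1 : ∀ᵐ x ∂μ, x ∈ Ω → Tendsto (fun n => F n x) atTop (nhds (f x)) :=
      (ae_restrict_iff' hΩm).mp hF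
    have h2 := ae_iff.mp h1
    refine measure_mono_null ?_ h2
    intro x hx
    simp only [Set.mem_setOf_eq] at hx ⊢
    tauto
  -- the countable family of test sets
  set Cset : Y → ℚ → Set X := fun v t => Ω ∩ {x | ‖g x - v‖ < (t:ℝ)} with hCsetdef
  have hCmeas : ∀ v t, MeasurableSet (Cset v t) := by
    intro v t
    refine hΩm.inter ?_
    have h1 : Measurable (fun x => ‖g x - v‖) :=
      ((hgm.sub stronglyMeasurable_const).norm).measurable
    exact measurableSet_lt h1 measurable_const
  set Bad : Y → ℚ → ℚ → Set X := fun v t e =>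
    {a ∈ Cset v t | ∀ R > (0:ℝ), ∃ S : Set X, (a, S) ∈ 𝒮 ∧ S ⊆ closedBall a R ∧
      ¬ (μ (S \ Cset v t) ≤ ENNReal.ofReal (e:ℝ) * μ S)} with hBaddef
  have hBadnull : ∀ v t (e : ℚ), 0 < e → μ (Bad v t e) = 0 := by
    intro v t e he
    exact morse_density μ lam hlam Ω 𝒮 h𝒮1 (Cset v t) (hCmeas v t) (e:ℝ)
      (by exact_mod_cast he)
  set V : Set Y := ⋃ n : ℕ, Set.range (F n) with hVdef
  have hVcount : V.Countable :=
    countable_iUnion fun n => ((F n).finite_range).countable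
  set Z : Set X := {x | x ∈ Ω ∧ f x ≠ g x} ∪ ({x | x ∈ Ω ∧
      ¬ Tendsto (fun n => F n x) atTop (nhds (f x))} ∪
      ⋃ v ∈ V, ⋃ t : ℚ, ⋃ e : {q : ℚ // 0 < q}, Bad v t e.1) with hZdef
  have hZnull : μ Z = 0 := by
    rw [hZdef]
    refine measure_union_null hNfg (measure_union_null hNconv ?_)
    refine (measure_biUnion_null_iff hVcount).mpr fun v _ => ?_
    refine measure_iUnion_null fun t => ?_
    exact measure_iUnion_null fun e => hBadnull v t e.1 e.2
  -- the bad set is contained in Z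
  refine measure_mono_null ?_ hZnull
  intro a ha
  obtain ⟨haΩ, hnac⟩ := ha
  by_contra haZ
  refine hnac ?_
  -- a is a point of approximate continuity
  rw [hZdef] at haZ
  simp only [Set.mem_union, Set.mem_setOf_eq, not_or] at haZ
  obtain ⟨hfg_a, haZ2⟩ := haZ
  have hfga : f a = g a := by
    by_contra h
    exact hfg_a ⟨haΩ, h⟩
  obtain ⟨hconv_a, haZ3⟩ := haZ2
  have hconv : Tendsto (fun n => F n a) atTop (nhds (f a)) := by
    by_contra h
    exact hconv_a ⟨haΩ, h⟩
  have hnotbad : ∀ v ∈ V, ∀ t : ℚ, ∀ e : ℚ, 0 < e → a ∉ Bad v t e := by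
    intro v hv t e he hmem
    refine haZ3 ?_
    refine Set.mem_biUnion hv ?_
    refine Set.mem_iUnion.mpr ⟨t, ?_⟩
    exact Set.mem_iUnion.mpr ⟨⟨e, he⟩, hmem⟩
  intro ε hε η hη
  -- choose rational t with η/4 < t < η/2
  obtain ⟨t, ht1, ht2⟩ := exists_rat_btwn (by linarith : η/4 < η/2)
  -- choose n₀ with dist (F n₀ a) (f a) < η/4
  have h4 : (0:ℝ) < η/4 := by linarith
  obtain ⟨n₀, hn₀⟩ := (Metric.tendsto_atTop.mp hconv (η/4) h4) 
  have hdist : dist (F n₀ a) (f a) < η/4 := hn₀ n₀ le_rfl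
  set v : Y := F n₀ a with hvdef
  have hvV : v ∈ V := Set.mem_iUnion.mpr ⟨n₀, Set.mem_range_self a⟩
  -- a belongs to Cset v t
  have haC : a ∈ Cset v t := by
    rw [hCsetdef]
    refine ⟨haΩ, ?_⟩
    simp only [Set.mem_setOf_eq]
    rw [← hfga]
    calc ‖f a - v‖ = dist (f a) v := (dist_eq_norm _ _).symm
      _ = dist (F n₀ a) (f a) := by rw [hvdef, dist_comm]
      _ < η/4 := hdist
      _ < t := ht1
  -- choose rational 0 < e ≤ ε
  obtain ⟨e, he1, he2⟩ := exists_rat_btwn hε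
  have he0 : 0 < e := by exact_mod_cast he1
  -- density property at a
  have hgood := hnotbad v hvV t e he0
  rw [hBaddef] at hgood
  simp only [Set.mem_setOf_eq, not_and] at hgood
  have hgood2 := hgood haC
  push_neg at hgood2
  obtain ⟨R, hR0, hRgood⟩ := hgood2
  refine ⟨R, hR0, fun S hSmem hSsub => ?_⟩
  have hdens := hRgood S hSmem hSsub
  have hSΩ : S ⊆ Ω := (h𝒮1 _ hSmem).2.2
  have hincl : {x ∈ S | η < ‖f a - f x‖} ⊆
      (S \ Cset v t) ∪ {x | x ∈ Ω ∧ f x ≠ g x} := by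
    intro x hx
    obtain ⟨hxS, hxnorm⟩ := hx
    by_cases hfgx : f x = g x
    · left
      refine ⟨hxS, fun hxC => ?_⟩
      rw [hCsetdef] at hxC
      have h2 : ‖g x - v‖ < (t:ℝ) := hxC.2
      have h3 : ‖f a - v‖ < η/4 := by
        calc ‖f a - v‖ = dist (F n₀ a) (f a) := by
              rw [hvdef, ← dist_eq_norm, dist_comm]
          _ < η/4 := hdist
      have h5 : ‖f a - f x‖ < η := by
        have h4 : f a - f x = (f a - v) + (v - f x) := by abel
        have h6 : ‖v - f x‖ = ‖g x - v‖ := by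
          rw [hfgx, norm_sub_rev]
        calc ‖f a - f x‖ ≤ ‖f a - v‖ + ‖v - f x‖ := by
              rw [h4]; exact norm_add_le _ _
          _ < η/4 + (t:ℝ) := by rw [h6]; exact add_lt_add h3 h2
          _ < η := by linarith
      linarith
    · right
      exact ⟨hSΩ hxS, hfgx⟩
  calc μ {x ∈ S | η < ‖f a - f x‖}
      ≤ μ ((S \ Cset v t) ∪ {x | x ∈ Ω ∧ f x ≠ g x}) := measure_mono hincl
    _ ≤ μ (S \ Cset v t) + μ {x | x ∈ Ω ∧ f x ≠ g x} := measure_union_le _ _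
    _ = μ (S \ Cset v t) := by rw [hNfg, add_zero]
    _ ≤ ENNReal.ofReal (e:ℝ) * μ S := hdens
    _ ≤ ENNReal.ofReal ε * μ S :=
        mul_le_mul_left (ENNReal.ofReal_le_ofReal (le_of_lt he2)) _
end

section
/- Let 𝒮 be a μ-a.e. λ-Morse cover of an open set Ω ⊆ X, Y a Banach space, and f : Ω → Y μ-measurable. If a ∈ Ω is a point of approximate continuity of f and is also a Lebesgue point of the real-valued function x ↦ ‖f(x)‖ with respect to the value ‖f(a)‖, then a is a Lebesgue point of f with respect to f(a). -/
open MeasureTheory Set Metric Filter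

/-- If `𝒮` is a `μ`-a.e. `λ`-Morse cover of an open set `Ω ⊆ X`, `Y` a Banach space,
`f : Ω → Y` is `μ`-measurable, and `a ∈ Ω` is a point of approximate continuity of `f`
that is also a Lebesgue point of `x ↦ ‖f x‖` with respect to `‖f a‖`, then `a` is a
Lebesgue point of `f` with respect to `f a`. -/
theorem isLebesguePt_of_approxCont_and_norm_lebesguePt
    {X Y : Type*} [NormedAddCommGroup X] [NormedSpace ℝ X] [FiniteDimensional ℝ X]
    [MeasurableSpace X] [OpensMeasurableSpace X]
    [NormedAddCommGroup Y] [NormedSpace ℝ Y] [CompleteSpace Y]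
    (μ : Measure X) [μ.Regular] [μ.IsComplete]
    (lam : ℝ) (hlam : 1 ≤ lam) (Ω : Set X) (hΩ : IsOpen Ω)
    (𝒮 : Set (X × Set X)) (h𝒮 : IsAEMorseCover μ lam Ω 𝒮)
    (f : X → Y) (hf : MuMeasurable (μ.restrict Ω) f)
    (a : X) (ha : a ∈ Ω)
    (hac : IsApproxContPt μ 𝒮 f a)
    (hnorm : IsLebesguePt μ 𝒮 (fun x => ‖f x‖) a ‖f a‖) :
    IsLebesguePt μ 𝒮 f a (f a) := by
  intro eps heps
  have h3 : (0:ℝ) < eps/3 := by linarith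
  set M := 2*‖f a‖ + 1 with hMdef
  have hMpos : (0:ℝ) < M := by positivity
  have hε' : (0:ℝ) < eps/(3*M) := by positivity
  obtain ⟨R1, hR1, hac1⟩ := hac (eps/(3*M)) hε' (eps/3) h3
  obtain ⟨R2, hR2, hn1⟩ := hnorm (eps/3) h3
  refine ⟨min R1 R2, lt_min hR1 hR2, ?_⟩
  intro S hS hSball
  have hSΩ : S ⊆ Ω := (h𝒮.1.1 (a,S) hS).2.2
  have hSm : MeasurableSet S := (h𝒮.1.1 (a,S) hS).2.1
  have hball1 : S ⊆ Metric.closedBall a R1 :=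
    hSball.trans (Metric.closedBall_subset_closedBall (min_le_left _ _))
  have hball2 : S ⊆ Metric.closedBall a R2 :=
    hSball.trans (Metric.closedBall_subset_closedBall (min_le_right _ _))
  -- a.e. measurable version of f
  obtain ⟨F, hF⟩ := hf
  have hfm : AEStronglyMeasurable f (μ.restrict Ω) :=
    aestronglyMeasurable_of_tendsto_ae atTop
      (fun n => (F n).stronglyMeasurable.aestronglyMeasurable) hF
  set g := hfm.mk f with hgdef
  have hgm : StronglyMeasurable g := hfm.stronglyMeasurable_mk
  have hfg : f =ᵐ[μ.restrict Ω] g := hfm.ae_eq_mk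
  have hnull : (μ.restrict Ω) {x | f x ≠ g x} = 0 := by
    have := hfg
    rwa [Filter.EventuallyEq, ae_iff] at this
  obtain ⟨A, hAsub, hAm, hA0⟩ := exists_measurable_superset_of_null hnull
  have hAΩ : μ (A ∩ Ω) = 0 := by
    rw [Measure.restrict_apply hAm] at hA0; exact hA0
  have hSA : μ (S ∩ A) = 0 := by
    refine measure_mono_null ?_ hAΩ
    intro x hx
    exact ⟨hx.2, hSΩ hx.1⟩
  set B : Set X := S ∩ ({x | eps/3 < ‖f a - g x‖} ∪ A) with hBdef
  have hBm : MeasurableSet B := by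
    refine hSm.inter (MeasurableSet.union ?_ hAm)
    exact measurableSet_lt measurable_const
      ((stronglyMeasurable_const.sub hgm).norm.measurable)
  have hBS : B ⊆ S := inter_subset_left
  have hfgS : f =ᵐ[μ.restrict S] g :=
    hfg.filter_mono (ae_mono (Measure.restrict_mono hSΩ le_rfl))
  -- bound on μ B
  have hB_le : μ B ≤ ENNReal.ofReal (eps/(3*M)) * μ S := by
    have hsub : B ⊆ {x ∈ S | eps/3 < ‖f a - f x‖} ∪ (S ∩ A) := by
      rintro x ⟨hxS, hx⟩
      rcases hx with hx | hx
      · by_cases hxA : x ∈ A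
        · exact Or.inr ⟨hxS, hxA⟩
        · have hfx : f x = g x := by
            by_contra h; exact hxA (hAsub h)
          exact Or.inl ⟨hxS, by rwa [hfx]⟩
      · exact Or.inr ⟨hxS, hx⟩
    calc μ B ≤ μ ({x ∈ S | eps/3 < ‖f a - f x‖} ∪ (S ∩ A)) := measure_mono hsub
      _ ≤ μ {x ∈ S | eps/3 < ‖f a - f x‖} + μ (S ∩ A) := measure_union_le _ _
      _ = μ {x ∈ S | eps/3 < ‖f a - f x‖} := by rw [hSA, add_zero]
      _ ≤ ENNReal.ofReal (eps/(3*M)) * μ S := hac1 S hS hball1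
  -- good part
  have h_good : ∫⁻ x in S \ B, (‖g x - f a‖₊ : ENNReal) ∂μ ≤ ENNReal.ofReal (eps/3) * μ S := by
    have hpt : ∀ x ∈ S \ B, (‖g x - f a‖₊ : ENNReal) ≤ ENNReal.ofReal (eps/3) := by
      rintro x ⟨hxS, hxB⟩
      have hle : ‖f a - g x‖ ≤ eps/3 := by
        by_contra h
        exact hxB ⟨hxS, Or.inl (lt_of_not_ge h)⟩
      rw [← enorm_eq_nnnorm, ← ofReal_norm]
      exact ENNReal.ofReal_le_ofReal (by rwa [norm_sub_rev] at hle)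
    calc ∫⁻ x in S \ B, (‖g x - f a‖₊ : ENNReal) ∂μ
        ≤ ∫⁻ _ in S \ B, ENNReal.ofReal (eps/3) ∂μ := setLIntegral_mono' (hSm.diff hBm) hpt
      _ = ENNReal.ofReal (eps/3) * μ (S \ B) := setLIntegral_const _ _
      _ ≤ ENNReal.ofReal (eps/3) * μ S := mul_le_mul_right (measure_mono diff_subset) _
  -- bad part
  have h_bad : ∫⁻ x in B, (‖g x - f a‖₊ : ENNReal) ∂μ ≤
      ENNReal.ofReal (eps/3) * μ S + ENNReal.ofReal (eps/3) * μ S := by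
    have hpt : ∀ x ∈ B, (‖g x - f a‖₊ : ENNReal) ≤
        (‖(‖g x‖ - ‖f a‖)‖₊ : ENNReal) + ENNReal.ofReal (2*‖f a‖) := by
      intro x _
      rw [← enorm_eq_nnnorm, ← enorm_eq_nnnorm, ← ofReal_norm, ← ofReal_norm,
        ← ENNReal.ofReal_add (norm_nonneg _) (by positivity)]
      refine ENNReal.ofReal_le_ofReal ?_
      have h1 : ‖g x - f a‖ ≤ ‖g x‖ + ‖f a‖ := norm_sub_le _ _
      have h2 : ‖g x‖ - ‖f a‖ ≤ ‖(‖g x‖ - ‖f a‖)‖ := le_abs_self _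
      linarith
    have step1 : ∫⁻ x in B, (‖g x - f a‖₊ : ENNReal) ∂μ ≤
        ∫⁻ x in B, ((‖(‖g x‖ - ‖f a‖)‖₊ : ENNReal) + ENNReal.ofReal (2*‖f a‖)) ∂μ :=
      setLIntegral_mono' hBm hpt
    have step2 : ∫⁻ x in B, ((‖(‖g x‖ - ‖f a‖)‖₊ : ENNReal) + ENNReal.ofReal (2*‖f a‖)) ∂μ =
        (∫⁻ x in B, (‖(‖g x‖ - ‖f a‖)‖₊ : ENNReal) ∂μ) + ENNReal.ofReal (2*‖f a‖) * μ B := by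
      rw [lintegral_add_right _ measurable_const, setLIntegral_const]
    have term1 : ∫⁻ x in B, (‖(‖g x‖ - ‖f a‖)‖₊ : ENNReal) ∂μ ≤ ENNReal.ofReal (eps/3) * μ S := by
      calc ∫⁻ x in B, (‖(‖g x‖ - ‖f a‖)‖₊ : ENNReal) ∂μ
          ≤ ∫⁻ x in S, (‖(‖g x‖ - ‖f a‖)‖₊ : ENNReal) ∂μ :=
            lintegral_mono' (Measure.restrict_mono hBS le_rfl) le_rfl
        _ = ∫⁻ x in S, (‖(‖f x‖ - ‖f a‖)‖₊ : ENNReal) ∂μ := by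
            refine lintegral_congr_ae (hfgS.mono fun x hx => ?_)
            simp only [hx]
        _ ≤ ENNReal.ofReal (eps/3) * μ S := hn1 S hS hball2
    have term2 : ENNReal.ofReal (2*‖f a‖) * μ B ≤ ENNReal.ofReal (eps/3) * μ S := by
      calc ENNReal.ofReal (2*‖f a‖) * μ B
          ≤ ENNReal.ofReal (2*‖f a‖) * (ENNReal.ofReal (eps/(3*M)) * μ S) :=
            mul_le_mul_right hB_le _
        _ = (ENNReal.ofReal (2*‖f a‖) * ENNReal.ofReal (eps/(3*M))) * μ S := by ring
        _ ≤ ENNReal.ofReal (eps/3) * μ S := by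
            refine mul_le_mul_left ?_ _
            rw [← ENNReal.ofReal_mul (by positivity)]
            refine ENNReal.ofReal_le_ofReal ?_
            have hle : 2*‖f a‖ ≤ M := by rw [hMdef]; linarith
            have hq : 2*‖f a‖ * (eps/(3*M)) ≤ M * (eps/(3*M)) :=
              mul_le_mul_of_nonneg_right hle (le_of_lt hε')
            have hMeq : M * (eps/(3*M)) = eps/3 := by
              field_simp
            linarith
    calc ∫⁻ x in B, (‖g x - f a‖₊ : ENNReal) ∂μ
        ≤ (∫⁻ x in B, (‖(‖g x‖ - ‖f a‖)‖₊ : ENNReal) ∂μ) + ENNReal.ofReal (2*‖f a‖) * μ B := by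
          rw [← step2]; exact step1
      _ ≤ ENNReal.ofReal (eps/3) * μ S + ENNReal.ofReal (eps/3) * μ S := add_le_add term1 term2
  -- combine
  have hSeq : S = (S \ B) ∪ B := (diff_union_of_subset hBS).symm
  calc ∫⁻ x in S, (‖f x - f a‖₊ : ENNReal) ∂μ
      = ∫⁻ x in S, (‖g x - f a‖₊ : ENNReal) ∂μ := by
        refine lintegral_congr_ae (hfgS.mono fun x hx => ?_)
        simp only [hx]
    _ = ∫⁻ x in (S \ B) ∪ B, (‖g x - f a‖₊ : ENNReal) ∂μ := by rw [← hSeq]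
    _ ≤ (∫⁻ x in S \ B, (‖g x - f a‖₊ : ENNReal) ∂μ) + ∫⁻ x in B, (‖g x - f a‖₊ : ENNReal) ∂μ :=
        lintegral_union_le _ _ _
    _ ≤ ENNReal.ofReal (eps/3) * μ S +
        (ENNReal.ofReal (eps/3) * μ S + ENNReal.ofReal (eps/3) * μ S) := add_le_add h_good h_bad
    _ = (ENNReal.ofReal (eps/3) + (ENNReal.ofReal (eps/3) + ENNReal.ofReal (eps/3))) * μ S := by
        ring
    _ = ENNReal.ofReal eps * μ S := by
        rw [← ENNReal.ofReal_add h3.le h3.le, ← ENNReal.ofReal_add h3.le (by linarith),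
          show eps/3 + (eps/3 + eps/3) = eps by ring]
end

section
/- Let Y be a Banach space, f : X → Y μ-measurable with ‖f‖ μ-integrable on X, A ⊆ X a μ-null set, and ε > 0. Then there is a gauge function δ : A → (0,1] such that for every finite or countably infinite pairwise disjoint sequence of measurable sets ⟨S_i⟩ with associated points x_i ∈ A satisfying S_i ⊆ B(x_i, δ(x_i)) for each i, one has Σ_i ‖f(x_i)‖·μ(S_i) ≤ ε and ∫_{∪_i S_i} ‖f‖ dμ ≤ ε. -/
open MeasureTheory Set Metric Filter

/-- Let `Y` be a Banach space, `f : X → Y` `μ`-measurable with `‖f‖` `μ`-integrable,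
`A ⊆ X` a `μ`-null set, and `ε > 0`.  Then there is a gauge `δ : A → (0,1]` such that
for every finite or countably infinite pairwise disjoint sequence of measurable sets
`⟨S_i⟩` with associated points `x_i ∈ A` satisfying `S_i ⊆ B(x_i, δ(x_i))`, one has
`Σ_i ‖f(x_i)‖·μ(S_i) ≤ ε` and `∫_{∪_i S_i} ‖f‖ dμ ≤ ε`. -/
theorem gauge_small_on_null_set
    {X Y : Type*} [NormedAddCommGroup X] [NormedSpace ℝ X] [FiniteDimensional ℝ X]
    [MeasurableSpace X] [OpensMeasurableSpace X]
    [NormedAddCommGroup Y] [NormedSpace ℝ Y] [CompleteSpace Y]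
    (μ : Measure X) [μ.Regular] [μ.IsComplete]
    (f : X → Y) (hf : MuMeasurable μ f)
    (hint : Integrable (fun x => ‖f x‖) μ)
    (A : Set X) (hA : μ A = 0)
    (ε : ℝ) (hε : 0 < ε) :
    ∃ δ : X → ℝ, (∀ x ∈ A, δ x ∈ Set.Ioc (0:ℝ) 1) ∧
      ∀ (I : Set ℕ) (x : ℕ → X) (S : ℕ → Set X),
        (∀ i ∈ I, x i ∈ A ∧ MeasurableSet (S i) ∧
          S i ⊆ Metric.closedBall (x i) (δ (x i))) →
        (∀ i ∈ I, ∀ j ∈ I, i ≠ j → Disjoint (S i) (S j)) →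
        (∑' i : I, (‖f (x i)‖₊ : ENNReal) * μ (S i)) ≤ ENNReal.ofReal ε ∧
        ∫⁻ y in ⋃ i ∈ I, S i, ‖f y‖₊ ∂μ ≤ ENNReal.ofReal ε := by
  -- Absolute continuity of the integral of `‖f‖₊`
  have hfin : ∫⁻ y, (‖f y‖₊ : ENNReal) ∂μ ≠ ⊤ := by
    have := hint.2
    exact (by simpa [MeasureTheory.HasFiniteIntegral] using this.ne : ∫⁻ a, ‖f a‖ₑ ∂μ ≠ ⊤)
  obtain ⟨η₀, hη₀pos, hη₀⟩ :=
    exists_pos_setLIntegral_lt_of_measure_lt (μ := μ) hfin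
      (ε := ENNReal.ofReal ε) (by simpa using hε)
  set η : ENNReal := min η₀ 1 with hηdef
  have hηpos : 0 < η := lt_min hη₀pos zero_lt_one
  have hηne : η ≠ ⊤ := ne_of_lt (lt_of_le_of_lt (min_le_right _ _) (by norm_num))
  have hη : ∀ s : Set X, μ s < η → ∫⁻ y in s, (‖f y‖₊ : ENNReal) ∂μ ≤ ENNReal.ofReal ε :=
    fun s hs => (hη₀ s (hs.trans_le (min_le_left _ _))).le
  -- choice of open sets
  set r : ℕ → ENNReal := fun n =>
    min (ENNReal.ofReal ε * 2⁻¹ ^ (n + 1) / (n + 1)) (η * 2⁻¹ ^ (n + 2)) with hrdef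
  have hrpos : ∀ n, 0 < r n := by
    intro n
    refine lt_min ?_ ?_
    · refine ENNReal.div_pos ?_ (by simp)
      refine (ENNReal.mul_pos ?_ ?_).ne'
      · simpa using hε
      · exact pow_ne_zero _ (by simp)
    · exact ENNReal.mul_pos hηpos.ne' (pow_ne_zero _ (by simp))
  have hAn : ∀ n : ℕ, μ {a ∈ A | ⌊‖f a‖⌋₊ = n} < r n := by
    intro n
    have : μ {a ∈ A | ⌊‖f a‖⌋₊ = n} = 0 :=
      measure_mono_null (fun a ha => ha.1) hA
    simpa [this] using hrpos n
  choose U hAU hUopen hUmeas using fun n => (Set.exists_isOpen_lt_of_lt _ _ (hAn n))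
  -- gauge
  have hδ : ∀ a ∈ A, ∃ d : ℝ, d ∈ Set.Ioc (0:ℝ) 1 ∧
      Metric.closedBall a d ⊆ U ⌊‖f a‖⌋₊ := by
    intro a ha
    have haU : a ∈ U ⌊‖f a‖⌋₊ := hAU _ ⟨ha, rfl⟩
    obtain ⟨ρ, hρpos, hρ⟩ := Metric.isOpen_iff.1 (hUopen _) a haU
    refine ⟨min (ρ / 2) 1, ⟨lt_min (by positivity) one_pos, min_le_right _ _⟩, ?_⟩
    refine subset_trans ?_ hρ
    intro y hy
    have : dist y a ≤ min (ρ / 2) 1 := Metric.mem_closedBall.1 hy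
    exact Metric.mem_ball.2 (lt_of_le_of_lt (this.trans (min_le_left _ _)) (by linarith))
  choose! d hd1 hd2 using hδ
  refine ⟨d, hd1, ?_⟩
  intro I x S hS hdisj
  -- each S i lands in U ⌊‖f (x i)‖⌋₊
  have hSU : ∀ i ∈ I, S i ⊆ U ⌊‖f (x i)‖⌋₊ := by
    intro i hi
    exact ((hS i hi).2.2).trans (hd2 _ ((hS i hi).1))
  -- fibers
  set J : ℕ → Set ℕ := fun n => {i ∈ I | ⌊‖f (x i)‖⌋₊ = n} with hJdef
  have hJsum : ∀ n, (∑' i : (J n), μ (S i)) ≤ μ (U n) := by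
    intro n
    have hcnt : (J n).Countable := Set.to_countable _
    have hdisj' : (J n).PairwiseDisjoint S := by
      intro i hi j hj hij
      exact hdisj i hi.1 j hj.1 hij
    have hmeas : ∀ i ∈ J n, MeasurableSet (S i) := fun i hi => (hS i hi.1).2.1
    have := measure_biUnion (μ := μ) hcnt hdisj' hmeas
    rw [← this]
    refine measure_mono ?_
    refine Set.iUnion₂_subset ?_
    intro i hi
    have := hSU i hi.1
    rwa [hi.2] at this
  -- pointwise indicator bound
  have key : ∀ (g : ℕ → ENNReal), (∑' i : I, g i) ≤ ∑' n, ∑' i : (J n), g i := by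
    intro g
    rw [tsum_subtype]
    have h1 : ∀ i, I.indicator g i ≤ ∑' n, (J n).indicator g i := by
      intro i
      by_cases hi : i ∈ I
      · have hiJ : i ∈ J ⌊‖f (x i)‖⌋₊ := ⟨hi, rfl⟩
        calc I.indicator g i = g i := Set.indicator_of_mem hi g
        _ = (J ⌊‖f (x i)‖⌋₊).indicator g i := (Set.indicator_of_mem hiJ g).symm
        _ ≤ ∑' n, (J n).indicator g i := ENNReal.le_tsum _
      · simp [Set.indicator_of_notMem hi]
    calc (∑' i, I.indicator g i) ≤ ∑' i, ∑' n, (J n).indicator g i :=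
          ENNReal.tsum_le_tsum h1
      _ = ∑' n, ∑' i, (J n).indicator g i := ENNReal.tsum_comm
      _ = ∑' n, ∑' i : (J n), g i := by
          refine tsum_congr fun n => ?_
          rw [tsum_subtype]
  have hgeom : (∑' n : ℕ, (2:ENNReal)⁻¹ ^ (n + 1)) = 1 := by
    rw [ENNReal.tsum_geometric_add_one]
    rw [ENNReal.one_sub_inv_two]
    rw [inv_inv]
    exact ENNReal.inv_mul_cancel two_ne_zero ENNReal.ofNat_ne_top
  constructor
  · calc (∑' i : I, (‖f (x i)‖₊ : ENNReal) * μ (S i))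
        ≤ ∑' n, ∑' i : (J n), (‖f (x i)‖₊ : ENNReal) * μ (S i) :=
          key (fun i => (‖f (x i)‖₊ : ENNReal) * μ (S i))
    _ ≤ ∑' n : ℕ, ENNReal.ofReal ε * 2⁻¹ ^ (n + 1) := by
        refine ENNReal.tsum_le_tsum fun n => ?_
        have hbd : ∀ i : (J n), (‖f (x (i:ℕ))‖₊ : ENNReal) * μ (S i) ≤
            ((n : ENNReal) + 1) * μ (S i) := by
          rintro ⟨i, hi⟩
          refine mul_le_mul_left ?_ _
          have h1 : ‖f (x i)‖ < n + 1 := by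
            rw [← hi.2]
            exact Nat.lt_floor_add_one _
          have : (‖f (x i)‖₊ : ENNReal) ≤ ENNReal.ofReal (n + 1) := by
            rw [← enorm_eq_nnnorm, ← ofReal_norm]
            exact ENNReal.ofReal_le_ofReal h1.le
          simpa [ENNReal.ofReal_add, ENNReal.ofReal_natCast] using this
        calc (∑' i : (J n), (‖f (x (i:ℕ))‖₊ : ENNReal) * μ (S i))
            ≤ ∑' i : (J n), ((n : ENNReal) + 1) * μ (S i) := ENNReal.tsum_le_tsum hbd
          _ = ((n : ENNReal) + 1) * ∑' i : (J n), μ (S i) := ENNReal.tsum_mul_left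
          _ ≤ ((n : ENNReal) + 1) * μ (U n) := mul_le_mul_right (hJsum n) _
          _ ≤ ((n : ENNReal) + 1) * r n := mul_le_mul_right (hUmeas n).le _
          _ ≤ ((n : ENNReal) + 1) *
              (ENNReal.ofReal ε * 2⁻¹ ^ (n + 1) / ((n : ENNReal) + 1)) := by
                exact mul_le_mul_right (min_le_left _ _) _
          _ ≤ ENNReal.ofReal ε * 2⁻¹ ^ (n + 1) := by
                rw [ENNReal.mul_div_cancel' (by simp) (by simp)]
    _ = ENNReal.ofReal ε := by
        rw [ENNReal.tsum_mul_left, hgeom, mul_one]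
  · refine hη _ ?_
    have hsub : (⋃ i ∈ I, S i) ⊆ ⋃ n, U n := by
      refine Set.iUnion₂_subset fun i hi => ?_
      exact (hSU i hi).trans (Set.subset_iUnion _ _)
    calc μ (⋃ i ∈ I, S i) ≤ μ (⋃ n, U n) := measure_mono hsub
      _ ≤ ∑' n, μ (U n) := measure_iUnion_le _
      _ ≤ ∑' n : ℕ, η * 2⁻¹ ^ (n + 2) := by
          refine ENNReal.tsum_le_tsum fun n => ?_
          exact (hUmeas n).le.trans (min_le_right _ _)
      _ = η * 2⁻¹ := by
          have : ∀ n : ℕ, η * 2⁻¹ ^ (n + 2) = (η * 2⁻¹) * 2⁻¹ ^ (n + 1) := by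
            intro n; ring
          rw [tsum_congr this, ENNReal.tsum_mul_left, hgeom, mul_one]
      _ = η / 2 := by rw [div_eq_mul_inv]
      _ < η := ENNReal.half_lt_self hηpos.ne' hηne
end
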